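/- arXiv:2601.13822 — 8 statements merged into one kernel-verified Lean document; each statement's English description precedes it below -/
import Mathlib

section
/- Let G be a finite simple graph, φ a partial proper edge-coloring of G, and let e = (v, u_1) and e* = (v*, u*_1) be two distinct uncolored edges with dist_G(e, e*) ≥ 3. Then any fan whose uncolored edge is e and any fan whose uncolored edge is e* are disjoint: if ⟨u_1, …, u_k⟩ is a fan of v with first vertex u_1 and ⟨u*_1, …, u*_l⟩ is a fan of v* with first vertex u*_1, then {v, u_1, …, u_k} ∩ {v*, u*_1, …, u*_l} = ∅ (and the same holds for any choice of centers among the endpoints of e and e*). -/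
/-- A partial proper edge-coloring of `G` with colors `Fin K`. -/
def IsPartialProperEdgeColoring {V : Type*} (G : SimpleGraph V) {K : ℕ}
    (φ : Sym2 V → Option (Fin K)) : Prop :=
  (∀ e : Sym2 V, (φ e).isSome → e ∈ G.edgeSet) ∧
  ∀ e₁ e₂ : Sym2 V, e₁ ≠ e₂ → (∃ x, x ∈ e₁ ∧ x ∈ e₂) →
    ∀ c : Fin K, φ e₁ = some c → φ e₂ ≠ some c

/-- The color `c` is missing at the vertex `w`. -/
def MissingAt {V : Type*} {K : ℕ} (φ : Sym2 V → Option (Fin K)) (w : V) (c : Fin K) : Prop :=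
  ∀ e : Sym2 V, w ∈ e → φ e ≠ some c

/-- `⟨u 0, …, u k⟩` is a fan of the vertex `v` with designated missing colors `mv` and `m`. -/
structure IsFan {V : Type*} (G : SimpleGraph V) {K : ℕ}
    (φ : Sym2 V → Option (Fin K)) (v : V) {k : ℕ}
    (u : Fin (k + 1) → V) (mv : Fin K) (m : Fin (k + 1) → Fin K) : Prop where
  inj : Function.Injective u
  adj : ∀ i, G.Adj v (u i)
  missing_center : MissingAt φ v mv
  missing : ∀ i, MissingAt φ (u i) (m i)
  uncolored : φ s(v, u 0) = none
  colored : ∀ i : Fin k, φ s(v, u i.succ) = some (m i.castSucc)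

/-- If `e = (v, u)` and `e* = (v', u')` are distinct uncolored edges at
edge-distance at least `3` (every endpoint of `e` is at graph distance at least `3` from
every endpoint of `e*`, distance being `∞` for unreachable pairs), then any fan with
uncolored edge `e` and any fan with uncolored edge `e*` are vertex-disjoint; this holds
for any choice of centers among the endpoints of `e` and `e*`. -/
theorem stmt_3 {V : Type*} (G : SimpleGraph V) (K : ℕ)
    (φ : Sym2 V → Option (Fin K)) (hφ : IsPartialProperEdgeColoring G φ)
    (v u v' u' : V) (h1 : G.Adj v u) (h2 : G.Adj v' u')
    (hne : s(v, u) ≠ s(v', u'))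
    (hunc : φ s(v, u) = none) (hunc' : φ s(v', u') = none)
    (hdist : ∀ x y : V, x ∈ s(v, u) → y ∈ s(v', u') → 3 ≤ G.edist x y)
    {k k' : ℕ} (us : Fin (k + 1) → V) (mv : Fin K) (m : Fin (k + 1) → Fin K)
    (us' : Fin (k' + 1) → V) (mv' : Fin K) (m' : Fin (k' + 1) → Fin K)
    (hf : IsFan G φ v us mv m) (hstart : us 0 = u)
    (hf' : IsFan G φ v' us' mv' m') (hstart' : us' 0 = u') :
    v ≠ v' ∧ (∀ j, v ≠ us' j) ∧ (∀ i, us i ≠ v') ∧ ∀ i j, us i ≠ us' j := by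
  have key : ∀ (a b : V), G.Adj v a ∨ v = a → G.Adj v' b ∨ v' = b → a ≠ b := by
    intro a b ha hb hab
    have hva : G.edist v a ≤ 1 := by
      rcases ha with h | h
      · simpa using SimpleGraph.edist_le (h.toWalk)
      · simp [h, SimpleGraph.edist_self]
    have hvb : G.edist v' b ≤ 1 := by
      rcases hb with h | h
      · simpa using SimpleGraph.edist_le (h.toWalk)
      · simp [h, SimpleGraph.edist_self]
    have h3 : (3 : ℕ∞) ≤ G.edist v v' := hdist v v' (by simp) (by simp)
    have : G.edist v v' ≤ G.edist v a + G.edist b v' := by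
      subst hab
      exact SimpleGraph.edist_triangle
    have : G.edist v v' ≤ 2 := by
      calc G.edist v v' ≤ G.edist v a + G.edist b v' := this
        _ ≤ 1 + 1 := add_le_add hva (by rwa [SimpleGraph.edist_comm])
        _ = 2 := by norm_num
    have := le_trans h3 this
    norm_num at this
  refine ⟨key v v' (Or.inr rfl) (Or.inr rfl), fun j => key v (us' j) (Or.inr rfl) (Or.inl (hf'.adj j)),
    fun i => key (us i) v' (Or.inl (hf.adj i)) (Or.inr rfl),
    fun i j => key (us i) (us' j) (Or.inl (hf.adj i)) (Or.inl (hf'.adj j))⟩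
end

section
/- Let G be a finite simple graph with maximum degree Δ ≥ 1, let φ be a partial proper edge-coloring of G, and let F be a subset of the uncolored edges that forms a matching in G. Then in the fan-graph G^(F), every vertex (i.e., every edge of F) has degree at most 2(Δ − 1)^2. -/
/-- The distance between two edges: the minimum, over endpoints `x` of `e₁` and `y` of
`e₂`, of the (extended, `∞` if unreachable) graph distance between `x` and `y`. -/
noncomputable def edgeDist {V : Type*} (G : SimpleGraph V) (e₁ e₂ : Sym2 V) : ℕ∞ :=
  ⨅ x ∈ e₁, ⨅ y ∈ e₂, G.edist x y

/-- The fan-graph `G^(F)` on a set `F` of edges of `G`: two distinct members of `F` are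
adjacent iff they lie at edge-distance at most `2` in `G` (elements of `Sym2 V` outside
`F` are isolated vertices). -/
def fanGraph {V : Type*} (G : SimpleGraph V) (F : Set (Sym2 V)) : SimpleGraph (Sym2 V) :=
  SimpleGraph.fromRel (fun e₁ e₂ => e₁ ∈ F ∧ e₂ ∈ F ∧ edgeDist G e₁ e₂ ≤ 2)

section Aux
set_option linter.unusedSectionVars false
open SimpleGraph Finset

variable {V : Type*} [Fintype V] [DecidableEq V] (G : SimpleGraph V) [DecidableRel G.Adj]

/-- half target set -/
def Yhalf (u v : V) : Finset V :=
  ((G.neighborFinset u).erase v).biUnion (fun w => (G.neighborFinset w).erase u)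

lemma Yhalf_card (Δ : ℕ) (hΔ : G.maxDegree = Δ) {u v : V} (huv : G.Adj u v) :
    (Yhalf G u v).card ≤ (Δ - 1) * (Δ - 1) := by
  apply Finset.card_biUnion_le_card_mul _ _ _ ?_ |>.trans
  · gcongr
    rw [Finset.card_erase_of_mem (by simpa using huv), G.card_neighborFinset_eq_degree]
    exact Nat.sub_le_sub_right (hΔ ▸ G.degree_le_maxDegree u) 1
  · intro w hw
    simp only [Yhalf, Finset.mem_erase, SimpleGraph.mem_neighborFinset] at hw
    rw [Finset.card_erase_of_mem (by simpa using hw.2.symm), G.card_neighborFinset_eq_degree]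
    exact Nat.sub_le_sub_right (hΔ ▸ G.degree_le_maxDegree w) 1

lemma key {u v a b : V} (huv : G.Adj u v) (hab : G.Adj a b)
    (hau : a ≠ u) (hav : a ≠ v) (hbu : b ≠ u) (hbv : b ≠ v)
    (hd : G.edist u a ≤ 2) :
    ∃ y, y ∈ Yhalf G u v ∪ Yhalf G v u ∧ (y = a ∨ y = b) := by
  have hne : G.edist u a ≠ ⊤ := fun h => by simp [h] at hd
  obtain ⟨p, hp⟩ := G.exists_walk_of_edist_ne_top hne
  have hlen : p.length ≤ 2 := by
    have := hp.le.trans hd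
    exact_mod_cast this
  cases p with
  | nil => exact absurd rfl hau.symm
  | cons h q =>
    cases q with
    | nil =>
      -- Adj u a
      refine ⟨b, ?_, Or.inr rfl⟩
      apply Finset.mem_union_left
      simp only [Yhalf, Finset.mem_biUnion, Finset.mem_erase, SimpleGraph.mem_neighborFinset]
      exact ⟨a, ⟨hav, h⟩, hbu, hab⟩
    | cons h' q' =>
      cases q' with
      | cons h'' q'' => simp [SimpleGraph.Walk.length_cons] at hlen
      | nil =>
      rename_i w
      -- Adj u w, Adj w a
      by_cases hwv : w = v
      · subst hwv
        refine ⟨b, ?_, Or.inr rfl⟩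
        apply Finset.mem_union_right
        simp only [Yhalf, Finset.mem_biUnion, Finset.mem_erase, SimpleGraph.mem_neighborFinset]
        exact ⟨a, ⟨hau, h'⟩, hbv, hab⟩
      · refine ⟨a, ?_, Or.inl rfl⟩
        apply Finset.mem_union_left
        simp only [Yhalf, Finset.mem_biUnion, Finset.mem_erase, SimpleGraph.mem_neighborFinset]
        exact ⟨w, ⟨hwv, h⟩, hau, h'⟩

lemma edgeDist_cases {u v a b : V} (hd : edgeDist G s(u,v) s(a,b) ≤ 2) :
    G.edist u a ≤ 2 ∨ G.edist u b ≤ 2 ∨ G.edist v a ≤ 2 ∨ G.edist v b ≤ 2 := by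
  have : edgeDist G s(u,v) s(a,b)
      = (G.edist u a ⊓ G.edist u b) ⊓ (G.edist v a ⊓ G.edist v b) := by
    simp only [edgeDist, Sym2.mem_iff, iInf_or, iInf_inf_eq, iInf_iInf_eq_left]
    ac_rfl
  rw [this] at hd
  simpa [inf_le_iff, or_assoc] using hd

lemma mem_F_of_adj {F : Set (Sym2 V)} {e f : Sym2 V} (h : (fanGraph G F).Adj e f) :
    f ∈ F := by
  rw [fanGraph, SimpleGraph.fromRel_adj] at h
  tauto


end Aux

/-- If `G` has maximum degree `Δ ≥ 1`, `φ` is a partial proper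
edge-coloring of `G`, and `F` is a matching consisting of uncolored edges, then every
vertex of the fan-graph `G^(F)` (i.e. every edge of `F`) has degree at most `2(Δ-1)²`. -/
theorem stmt_4 {V : Type*} [Fintype V] [DecidableEq V] (G : SimpleGraph V)
    [DecidableRel G.Adj] (Δ : ℕ) (hΔ1 : 1 ≤ Δ) (hΔ : G.maxDegree = Δ)
    (K : ℕ) (φ : Sym2 V → Option (Fin K)) (hφ : IsPartialProperEdgeColoring G φ)
    (F : Set (Sym2 V)) (hFE : ∀ e ∈ F, e ∈ G.edgeSet) (hFunc : ∀ e ∈ F, φ e = none)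
    (hM : ∀ x : V, ∀ e₁ ∈ F, ∀ e₂ ∈ F, x ∈ e₁ → x ∈ e₂ → e₁ = e₂) :
    ∀ e ∈ F, ((fanGraph G F).neighborSet e).ncard ≤ 2 * (Δ - 1) ^ 2 := by
  intro e he
  induction e using Sym2.ind with | _ u v => ?_
  have huv : G.Adj u v := (G.mem_edgeSet).mp (hFE _ he)
  set Y : Finset V := Yhalf G u v ∪ Yhalf G v u with hY
  have hsub : ∀ f ∈ (fanGraph G F).neighborSet s(u,v), ∃ y, y ∈ Y ∧ y ∈ f := by
    intro f hf
    rw [SimpleGraph.mem_neighborSet] at hf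
    have hfF : f ∈ F := mem_F_of_adj G hf
    rw [fanGraph, SimpleGraph.fromRel_adj] at hf
    obtain ⟨hne, hrel⟩ := hf
    revert hne hrel hfF
    induction f using Sym2.ind with | _ a b => ?_
    intro hfF hne hrel
    have hab : G.Adj a b := (G.mem_edgeSet).mp (hFE _ hfF)
    have hax : ∀ x, x ∈ s(a,b) → x ∈ s(u,v) → False := by
      intro x h1 h2
      exact hne (hM x _ he _ hfF h2 h1)
    have hau : a ≠ u := fun h => hax a (by simp) (by simp [h])
    have hav : a ≠ v := fun h => hax a (by simp) (by simp [h])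
    have hbu : b ≠ u := fun h => hax b (by simp) (by simp [h])
    have hbv : b ≠ v := fun h => hax b (by simp) (by simp [h])
    have hd : G.edist u a ≤ 2 ∨ G.edist u b ≤ 2 ∨ G.edist v a ≤ 2 ∨ G.edist v b ≤ 2 := by
      rcases hrel with ⟨_, _, hd⟩ | ⟨_, _, hd⟩
      · exact edgeDist_cases G hd
      · rcases edgeDist_cases G hd with h|h|h|h <;>
          rw [SimpleGraph.edist_comm] at h <;> tauto
    rcases hd with hd | hd | hd | hd
    · obtain ⟨y, hy, hyf⟩ := key G huv hab hau hav hbu hbv hd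
      exact ⟨y, hy, by simp [Sym2.mem_iff]; tauto⟩
    · obtain ⟨y, hy, hyf⟩ := key G huv hab.symm hbu hbv hau hav hd
      exact ⟨y, hy, by simp [Sym2.mem_iff]; tauto⟩
    · obtain ⟨y, hy, hyf⟩ := key G huv.symm hab hav hau hbv hbu hd
      exact ⟨y, by rwa [Finset.union_comm] at hy, by simp [Sym2.mem_iff]; tauto⟩
    · obtain ⟨y, hy, hyf⟩ := key G huv.symm hab.symm hbv hbu hav hau hd
      exact ⟨y, by rwa [Finset.union_comm] at hy, by simp [Sym2.mem_iff]; tauto⟩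
  classical
  set g : Sym2 V → V := fun f => if h : ∃ y, y ∈ Y ∧ y ∈ f then h.choose else u with hg
  have hcard : ((fanGraph G F).neighborSet s(u,v)).ncard ≤ (↑Y : Set V).ncard := by
    refine Set.ncard_le_ncard_of_injOn g ?_ ?_ ((Y : Set V).toFinite)
    · intro f hf
      have h := hsub f hf
      simp only [hg, dif_pos h]
      exact h.choose_spec.1
    · intro f hf f' hf' hgg
      have h := hsub f hf
      have h' := hsub f' hf'
      have h1 : g f ∈ f := by simp only [hg, dif_pos h]; exact h.choose_spec.2
      have h2 : g f' ∈ f' := by simp only [hg, dif_pos h']; exact h'.choose_spec.2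
      rw [SimpleGraph.mem_neighborSet] at hf hf'
      exact hM (g f) f (mem_F_of_adj G hf) f' (mem_F_of_adj G hf') h1 (hgg ▸ h2)
  rw [Set.ncard_coe_finset] at hcard
  refine hcard.trans ?_
  calc Y.card ≤ (Yhalf G u v).card + (Yhalf G v u).card := Finset.card_union_le _ _
    _ ≤ (Δ-1)*(Δ-1) + (Δ-1)*(Δ-1) :=
        Nat.add_le_add (Yhalf_card G Δ hΔ huv) (Yhalf_card G Δ hΔ huv.symm)
    _ = 2 * (Δ - 1) ^ 2 := by ring
end

section
/- Let G be a finite simple graph with maximum degree Δ whose arboricity is at most a, i.e., for every vertex set U with |U| ≥ 2 the number of edges with both endpoints in U is at most a(|U| − 1). Let φ be a partial proper edge-coloring of G and F a subset of the uncolored edges that forms a matching in G. Then the fan-graph G^(F) has arboricity at most 16Δa: for every S ⊆ F with |S| ≥ 2, the number of pairs of distinct edges {e, e'} ⊆ S with dist_G(e, e') ≤ 2 is at most 16Δa(|S| − 1). -/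
open Finset

lemma sym2_rep {V : Type*} (e : Sym2 V) : ∃ u v, e = s(u, v) := by
  induction e using Sym2.ind with
  | _ u v => exact ⟨u, v, rfl⟩

lemma edist_le_two_cases {V : Type*} {G : SimpleGraph V} {x y : V}
    (h : G.edist x y ≤ 2) :
    x = y ∨ G.Adj x y ∨ ∃ z, G.Adj x z ∧ G.Adj z y := by
  have hne : G.edist x y ≠ ⊤ := fun ht => by simp [ht] at h
  obtain ⟨p, hp⟩ := SimpleGraph.exists_walk_of_edist_ne_top hne
  have hlen : p.length ≤ 2 := by
    have h2 : (p.length : ℕ∞) ≤ 2 := by rw [hp]; exact h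
    exact_mod_cast h2
  match p, hlen with
  | .nil, _ => exact Or.inl rfl
  | .cons h .nil, _ => exact Or.inr (Or.inl h)
  | .cons h1 (.cons h2 .nil), _ => exact Or.inr (Or.inr ⟨_, h1, h2⟩)
  | .cons _ (.cons _ (.cons _ _)), hl => simp [SimpleGraph.Walk.length_cons] at hl

lemma edgeDist_witness {V : Type*} (G : SimpleGraph V) {e₁ e₂ : Sym2 V}
    (h : edgeDist G e₁ e₂ ≤ 2) : ∃ x ∈ e₁, ∃ y ∈ e₂, G.edist x y ≤ 2 := by
  by_contra hc
  push_neg at hc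
  have h3 : (3 : ℕ∞) ≤ edgeDist G e₁ e₂ := by
    refine le_iInf₂ fun x hx => le_iInf₂ fun y hy => ?_
    exact Order.add_one_le_of_lt (hc x hx y hy)
  have : (3 : ℕ∞) ≤ 2 := h3.trans h
  norm_num at this

section Lems
variable {V : Type*} [Fintype V] [DecidableEq V] (G : SimpleGraph V) [DecidableRel G.Adj]

lemma pair_card_le (W : Finset V) :
    ((W ×ˢ W).filter fun p => G.Adj p.1 p.2).card ≤
      2 * (G.edgeFinset.filter fun e => ∀ x ∈ e, x ∈ W).card := by
  set P := (W ×ˢ W).filter fun p => G.Adj p.1 p.2 with hP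
  have hmaps : ∀ p ∈ P, s(p.1, p.2) ∈ G.edgeFinset.filter fun e => ∀ x ∈ e, x ∈ W := by
    rintro ⟨x, y⟩ hp
    simp only [hP, mem_filter, mem_product] at hp
    simp only [mem_filter, SimpleGraph.mem_edgeFinset, SimpleGraph.mem_edgeSet]
    exact ⟨hp.2, fun z hz => by rcases Sym2.mem_iff.mp hz with rfl | rfl
                                · exact hp.1.1
                                · exact hp.1.2⟩
  refine Finset.card_le_mul_card_image_of_maps_to hmaps 2 ?_
  intro e he
  obtain ⟨u, v, rfl⟩ : ∃ u v, e = s(u, v) := sym2_rep e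
  have hsub : (P.filter fun x => s(x.1, x.2) = s(u, v)) ⊆ {(u, v), (v, u)} := by
    rintro ⟨x, y⟩ hx
    simp only [mem_filter] at hx
    rcases Sym2.eq_iff.mp hx.2 with ⟨rfl, rfl⟩ | ⟨rfl, rfl⟩ <;> simp
  calc (P.filter fun x => s(x.1, x.2) = s(u, v)).card
      ≤ ({(u, v), (v, u)} : Finset (V × V)).card := Finset.card_le_card hsub
    _ ≤ 2 := card_insert_le _ _ |>.trans (by simp)

lemma exists_low_deg (a : ℝ)
    (ha : ∀ U : Finset V, 2 ≤ U.card →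
      ((G.edgeFinset.filter (fun e => ∀ x ∈ e, x ∈ U)).card : ℝ) ≤ a * ((U.card : ℝ) - 1))
    (W : Finset V) (hW : W.Nonempty) :
    ∃ w ∈ W, ((W.erase w) ∩ G.neighborFinset w).card ≤ ⌊2 * a⌋₊ := by
  by_contra hc
  push_neg at hc
  have hW2 : 2 ≤ W.card := by
    by_contra h2
    push_neg at h2
    obtain ⟨w, hw⟩ := hW
    have h1 : W = {w} := by
      apply Finset.eq_singleton_iff_unique_mem.mpr
      exact ⟨hw, fun y hy => by
        by_contra hne
        have : 2 ≤ W.card := Finset.one_lt_card.mpr ⟨y, hy, w, hw, hne⟩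
        omega⟩
    have := hc w hw
    simp [h1] at this
  set P := (W ×ˢ W).filter fun p => G.Adj p.1 p.2 with hP
  have hfib : P.card = ∑ w ∈ W, ((W.erase w) ∩ G.neighborFinset w).card := by
    rw [Finset.card_eq_sum_card_fiberwise (f := Prod.fst) (t := W)
      (fun p hp => by have hp : p ∈ P := hp; simp only [hP, mem_filter, mem_product] at hp; exact hp.1.1)]
    refine Finset.sum_congr rfl fun w hw => ?_
    apply Finset.card_bij (fun p _ => p.2)
    · rintro ⟨x, y⟩ hp
      simp only [hP, mem_filter, mem_product] at hp
      obtain ⟨⟨⟨hx, hy⟩, hadj⟩, rfl⟩ := hp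
      simp only [mem_inter, mem_erase, SimpleGraph.mem_neighborFinset]
      exact ⟨⟨hadj.ne', hy⟩, hadj⟩
    · rintro ⟨x, y⟩ hp ⟨x', y'⟩ hp' h
      simp only [hP, mem_filter, mem_product] at hp hp'
      cases hp.2; cases hp'.2; cases h; rfl
    · intro y hy
      simp only [mem_inter, mem_erase, SimpleGraph.mem_neighborFinset] at hy
      exact ⟨(w, y), by simp [hP, mem_filter, mem_product, hw, hy.1.2, hy.2], rfl⟩
  have hlow : W.card * (⌊2 * a⌋₊ + 1) ≤ P.card := by
    rw [hfib]
    calc W.card * (⌊2 * a⌋₊ + 1) = ∑ _w ∈ W, (⌊2 * a⌋₊ + 1) := by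
          rw [Finset.sum_const, smul_eq_mul]
      _ ≤ ∑ w ∈ W, ((W.erase w) ∩ G.neighborFinset w).card :=
          Finset.sum_le_sum fun w hw => hc w hw
  have hhigh : (P.card : ℝ) ≤ 2 * (a * ((W.card : ℝ) - 1)) := by
    calc (P.card : ℝ) ≤ 2 * ((G.edgeFinset.filter fun e => ∀ x ∈ e, x ∈ W).card : ℝ) := by
          exact_mod_cast pair_card_le G W
      _ ≤ 2 * (a * ((W.card : ℝ) - 1)) := by
          have := ha W hW2
          linarith
  have hfloor : 2 * a < (⌊2 * a⌋₊ : ℝ) + 1 := Nat.lt_floor_add_one _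
  have hWc : (2 : ℝ) ≤ (W.card : ℝ) := by exact_mod_cast hW2
  have h1 : ((W.card * (⌊2 * a⌋₊ + 1) : ℕ) : ℝ) ≤ (P.card : ℝ) := by exact_mod_cast hlow
  push_cast at h1
  nlinarith [Nat.cast_nonneg (α := ℝ) ⌊2 * a⌋₊]

lemma exists_orientation (D : ℕ)
    (hdeg : ∀ W : Finset V, W.Nonempty →
      ∃ w ∈ W, ((W.erase w) ∩ G.neighborFinset w).card ≤ D) (W : Finset V) :
    ∃ out : V → Finset V,
      (∀ v, out v ⊆ G.neighborFinset v) ∧ (∀ v, (out v).card ≤ D) ∧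
      (∀ u v, G.Adj u v → u ∈ W → v ∈ W → v ∈ out u ∨ u ∈ out v) := by
  induction W using Finset.strongInduction with
  | _ W ih =>
    rcases W.eq_empty_or_nonempty with rfl | hW
    · exact ⟨fun _ => ∅, fun v => empty_subset _, fun v => by simp, fun u v _ h => by simp at h⟩
    · obtain ⟨w, hwW, hwd⟩ := hdeg W hW
      obtain ⟨out', h1, h2, h3⟩ := ih (W.erase w) (Finset.erase_ssubset hwW)
      refine ⟨Function.update out' w ((W.erase w) ∩ G.neighborFinset w), ?_, ?_, ?_⟩
      · intro v
        rcases eq_or_ne v w with rfl | hv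
        · rw [Function.update_self]
          exact inter_subset_right
        · rw [Function.update_of_ne hv]
          exact h1 v
      · intro v
        rcases eq_or_ne v w with rfl | hv
        · rw [Function.update_self]; exact hwd
        · rw [Function.update_of_ne hv]; exact h2 v
      · intro u v hadj huW hvW
        rcases eq_or_ne u w with rfl | hu
        · left
          rw [Function.update_self, mem_inter, mem_erase, SimpleGraph.mem_neighborFinset]
          exact ⟨⟨hadj.ne', hvW⟩, hadj⟩
        · rcases eq_or_ne v w with rfl | hv
          · right
            rw [Function.update_self, mem_inter, mem_erase, SimpleGraph.mem_neighborFinset]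
            exact ⟨⟨hadj.ne, huW⟩, hadj.symm⟩
          · rw [Function.update_of_ne hu, Function.update_of_ne hv]
            exact h3 u v hadj (mem_erase.mpr ⟨hu, huW⟩) (mem_erase.mpr ⟨hv, hvW⟩)

end Lems

/-- Let `G` have maximum degree `Δ` and arboricity at most `a` (every
vertex set `U` with `|U| ≥ 2` spans at most `a(|U|-1)` edges), let `φ` be a partial
proper edge-coloring and `F` a matching of uncolored edges. Then the fan-graph `G^(F)`
has arboricity at most `16Δa`: for every `S ⊆ F` with `|S| ≥ 2`, the number of
unordered pairs of distinct edges of `S` at edge-distance at most `2` is at most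
`16Δa(|S| - 1)`. -/
theorem stmt_6 {V : Type*} [Fintype V] [DecidableEq V] (G : SimpleGraph V)
    [DecidableRel G.Adj] (Δ : ℕ) (hΔ : G.maxDegree = Δ) (a : ℝ)
    (ha : ∀ U : Finset V, 2 ≤ U.card →
      ((G.edgeFinset.filter (fun e => ∀ x ∈ e, x ∈ U)).card : ℝ) ≤ a * ((U.card : ℝ) - 1))
    (K : ℕ) (φ : Sym2 V → Option (Fin K)) (hφ : IsPartialProperEdgeColoring G φ)
    (F : Finset (Sym2 V)) (hFE : ∀ e ∈ F, e ∈ G.edgeSet) (hFunc : ∀ e ∈ F, φ e = none)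
    (hM : ∀ x : V, ∀ e₁ ∈ F, ∀ e₂ ∈ F, x ∈ e₁ → x ∈ e₂ → e₁ = e₂) :
    ∀ S : Finset (Sym2 V), S ⊆ F → 2 ≤ S.card →
      (({p : Sym2 (Sym2 V) | ∃ e₁ e₂ : Sym2 V, p = s(e₁, e₂) ∧ e₁ ≠ e₂ ∧
          e₁ ∈ S ∧ e₂ ∈ S ∧ edgeDist G e₁ e₂ ≤ 2}).ncard : ℝ)
        ≤ 16 * Δ * a * ((S.card : ℝ) - 1) := by
  classical
  intro S hSF hS2
  -- basic setup
  obtain ⟨e₀, he₀⟩ := Finset.card_pos.mp (by omega : 0 < S.card)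
  obtain ⟨u₀, v₀, he₀uv⟩ := sym2_rep e₀
  have he₀E : e₀ ∈ G.edgeSet := hFE e₀ (hSF he₀)
  have hadj₀ : G.Adj u₀ v₀ := by rwa [he₀uv, SimpleGraph.mem_edgeSet] at he₀E
  have ha1 : 1 ≤ a := by
    have hc2 : ({u₀, v₀} : Finset V).card = 2 := by
      rw [card_insert_of_notMem (by simp [hadj₀.ne]), card_singleton]
    have hle := ha {u₀, v₀} (by omega)
    have hmem : e₀ ∈ G.edgeFinset.filter (fun e => ∀ x ∈ e, x ∈ ({u₀, v₀} : Finset V)) := by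
      rw [mem_filter, SimpleGraph.mem_edgeFinset]
      refine ⟨he₀E, fun x hx => ?_⟩
      rw [he₀uv] at hx
      rcases Sym2.mem_iff.mp hx with rfl | rfl <;> simp
    have h1 : 1 ≤ (G.edgeFinset.filter (fun e => ∀ x ∈ e, x ∈ ({u₀, v₀} : Finset V))).card :=
      card_pos.mpr ⟨e₀, hmem⟩
    rw [hc2] at hle
    have : (1 : ℝ) ≤ ((G.edgeFinset.filter
        (fun e => ∀ x ∈ e, x ∈ ({u₀, v₀} : Finset V))).card : ℝ) := by exact_mod_cast h1
    push_cast at hle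
    linarith
  have ha0 : 0 ≤ a := by linarith
  have hΔ1 : 1 ≤ Δ := by
    have hd : 0 < G.degree u₀ := by
      rw [SimpleGraph.degree_pos_iff_exists_adj]; exact ⟨v₀, hadj₀⟩
    have := G.degree_le_maxDegree u₀
    omega
  -- orientation
  obtain ⟨out, hout_sub, hout_card, hout_cov'⟩ :=
    exists_orientation G ⌊2 * a⌋₊ (fun W hW => exists_low_deg G a ha W hW) Finset.univ
  have hout_cov : ∀ u v, G.Adj u v → v ∈ out u ∨ u ∈ out v :=
    fun u v h => hout_cov' u v h (mem_univ _) (mem_univ _)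
  -- the vertex set of S
  set U : Finset V := Finset.univ.filter (fun x => ∃ e ∈ S, x ∈ e) with hU
  have hxU : ∀ {x : V} {e : Sym2 V}, e ∈ S → x ∈ e → x ∈ U := by
    intro x e he hx
    rw [hU, mem_filter]
    exact ⟨mem_univ _, e, he, hx⟩
  have hUniq : ∀ {x : V} {e e' : Sym2 V}, e ∈ S → e' ∈ S → x ∈ e → x ∈ e' → e = e' :=
    fun {x e e'} he he' hx hx' => hM x _ (hSF he) _ (hSF he') hx hx'
  have hU2 : 2 ≤ U.card := by
    have hsub : ({u₀, v₀} : Finset V) ⊆ U := by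
      intro x hx
      rcases Finset.mem_insert.mp hx with rfl | hx
      · exact hxU he₀ (by rw [he₀uv]; exact Sym2.mem_mk_left _ _)
      · rw [Finset.mem_singleton] at hx
        subst hx
        exact hxU he₀ (by rw [he₀uv]; exact Sym2.mem_mk_right _ _)
    calc 2 = ({u₀, v₀} : Finset V).card := by
          rw [card_insert_of_notMem (by simp [hadj₀.ne]), card_singleton]
      _ ≤ U.card := card_le_card hsub
  have hU2S : U.card ≤ 2 * S.card := by
    have hsub : U ⊆ S.biUnion (fun e => Finset.univ.filter (· ∈ e)) := by
      intro x hx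
      rw [hU, mem_filter] at hx
      obtain ⟨-, e, he, hxe⟩ := hx
      exact mem_biUnion.mpr ⟨e, he, mem_filter.mpr ⟨mem_univ _, hxe⟩⟩
    calc U.card ≤ (S.biUnion (fun e => Finset.univ.filter (· ∈ e))).card := card_le_card hsub
      _ ≤ ∑ e ∈ S, (Finset.univ.filter (· ∈ e)).card := card_biUnion_le
      _ ≤ ∑ _e ∈ S, 2 := Finset.sum_le_sum (fun e _ => by
          obtain ⟨p, q, rfl⟩ := sym2_rep e
          have : (Finset.univ.filter (· ∈ s(p, q))) ⊆ {p, q} := by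
            intro x hx
            rw [mem_filter] at hx
            rcases Sym2.mem_iff.mp hx.2 with rfl | rfl <;> simp
          calc (Finset.univ.filter (· ∈ s(p, q))).card ≤ ({p, q} : Finset V).card :=
                card_le_card this
            _ ≤ 2 := card_insert_le _ _ |>.trans (by simp))
      _ = 2 * S.card := by rw [sum_const, smul_eq_mul, mul_comm]
  -- the finset of pairs
  set T : Finset (Sym2 (Sym2 V)) :=
    ((S ×ˢ S).filter (fun p => p.1 ≠ p.2 ∧ edgeDist G p.1 p.2 ≤ 2)).image
      (fun p => s(p.1, p.2)) with hT
  have hset : {p : Sym2 (Sym2 V) | ∃ e₁ e₂ : Sym2 V, p = s(e₁, e₂) ∧ e₁ ≠ e₂ ∧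
      e₁ ∈ S ∧ e₂ ∈ S ∧ edgeDist G e₁ e₂ ≤ 2} = ↑T := by
    ext q
    simp only [Set.mem_setOf_eq, hT, coe_image, Set.mem_image, mem_coe, mem_filter,
      mem_product]
    constructor
    · rintro ⟨e₁, e₂, rfl, hne, h1, h2, hd⟩
      exact ⟨(e₁, e₂), ⟨⟨h1, h2⟩, hne, hd⟩, rfl⟩
    · rintro ⟨⟨e₁, e₂⟩, ⟨⟨h1, h2⟩, hne, hd⟩, rfl⟩
      exact ⟨e₁, e₂, rfl, hne, h1, h2, hd⟩
  rw [hset, Set.ncard_coe_finset]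
  -- classification predicates
  set PA : Sym2 (Sym2 V) → Prop := fun q => ∃ t : Sym2 V × Sym2 V × V × V,
    q = s(t.1, t.2.1) ∧ t.1 ∈ S ∧ t.2.1 ∈ S ∧ t.2.2.1 ∈ t.1 ∧ t.2.2.2 ∈ t.2.1 ∧
    G.Adj t.2.2.1 t.2.2.2 with hPA
  set PB1 : Sym2 (Sym2 V) → Prop := fun q => ∃ t : Sym2 V × Sym2 V × V × V × V,
    q = s(t.1, t.2.1) ∧ t.1 ∈ S ∧ t.2.1 ∈ S ∧ t.2.2.1 ∈ t.1 ∧ t.2.2.2.1 ∈ t.2.1 ∧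
    t.2.2.2.1 ≠ t.2.2.1 ∧ t.2.2.2.2 ∈ out t.2.2.1 ∧ G.Adj t.2.2.2.2 t.2.2.2.1 with hPB1
  set PB2 : Sym2 (Sym2 V) → Prop := fun q => ∃ t : Sym2 V × Sym2 V × V × V × V,
    q = s(t.1, t.2.1) ∧ t.1 ∈ S ∧ t.2.1 ∈ S ∧ t.2.2.1 ∈ t.1 ∧ t.2.2.2.1 ∈ t.2.1 ∧
    t.2.2.1 ∈ out t.2.2.2.2 ∧ t.2.2.2.1 ∈ out t.2.2.2.2 with hPB2
  have hcover : ∀ q ∈ T, PA q ∨ PB1 q ∨ PB2 q := by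
    intro q hq
    rw [hT, mem_image] at hq
    obtain ⟨⟨e₁, e₂⟩, hp, rfl⟩ := hq
    rw [mem_filter, mem_product] at hp
    obtain ⟨⟨h1, h2⟩, hne, hd⟩ := hp
    obtain ⟨x, hx, y, hy, hxy⟩ := edgeDist_witness G hd
    have hxyne : x ≠ y := fun h => hne (hUniq h1 h2 hx (h ▸ hy))
    rcases edist_le_two_cases hxy with rfl | hadj | ⟨z, hxz, hzy⟩
    · exact absurd rfl hxyne
    · exact Or.inl ⟨(e₁, e₂, x, y), rfl, h1, h2, hx, hy, hadj⟩
    · rcases hout_cov x z hxz with hzout | hxout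
      · exact Or.inr (Or.inl ⟨(e₁, e₂, x, y, z), rfl, h1, h2, hx, hy, hxyne.symm, hzout, hzy⟩)
      · rcases hout_cov y z hzy.symm with hzout' | hyout
        · exact Or.inr (Or.inl ⟨(e₂, e₁, y, x, z), Sym2.eq_swap, h2, h1, hy, hx, hxyne,
            hzout', hxz.symm⟩)
        · exact Or.inr (Or.inr ⟨(e₁, e₂, x, y, z), rfl, h1, h2, hx, hy, hxout, hyout⟩)
  have hsplit : T.card ≤ (T.filter PA).card + (T.filter PB1).card + (T.filter PB2).card := by
    have hsub : T ⊆ (T.filter PA) ∪ (T.filter PB1) ∪ (T.filter PB2) := by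
      intro q hq
      rcases hcover q hq with h | h | h
      · exact mem_union_left _ (mem_union_left _ (mem_filter.mpr ⟨hq, h⟩))
      · exact mem_union_left _ (mem_union_right _ (mem_filter.mpr ⟨hq, h⟩))
      · exact mem_union_right _ (mem_filter.mpr ⟨hq, h⟩)
    calc T.card ≤ ((T.filter PA) ∪ (T.filter PB1) ∪ (T.filter PB2)).card := card_le_card hsub
      _ ≤ ((T.filter PA) ∪ (T.filter PB1)).card + (T.filter PB2).card := card_union_le _ _
      _ ≤ (T.filter PA).card + (T.filter PB1).card + (T.filter PB2).card :=
          Nat.add_le_add_right (card_union_le _ _) _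
  -- bound for type A pairs
  set EU : Finset (Sym2 V) := G.edgeFinset.filter (fun e => ∀ x ∈ e, x ∈ U) with hEU
  have hA : (T.filter PA).card ≤ EU.card := by
    apply Finset.card_le_card_of_injOn
      (fun q => if h : PA q then s(h.choose.2.2.1, h.choose.2.2.2) else e₀)
    · intro q hq
      have hPAq : PA q := (mem_filter.mp hq).2
      simp only [mem_coe]; rw [dif_pos hPAq]
      obtain ⟨hqe, h1, h2, hx, hy, hadj⟩ := hPAq.choose_spec
      rw [hEU, mem_filter, SimpleGraph.mem_edgeFinset, SimpleGraph.mem_edgeSet]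
      refine ⟨hadj, fun w hw => ?_⟩
      rcases Sym2.mem_iff.mp hw with rfl | rfl
      · exact hxU h1 hx
      · exact hxU h2 hy
    · intro q hq q' hq' hf
      rw [mem_coe, mem_filter] at hq hq'
      have hPAq : PA q := hq.2
      have hPAq' : PA q' := hq'.2
      simp only [dif_pos hPAq, dif_pos hPAq'] at hf
      obtain ⟨hqe, h1, h2, hx, hy, _⟩ := hPAq.choose_spec
      obtain ⟨hqe', h1', h2', hx', hy', _⟩ := hPAq'.choose_spec
      rcases Sym2.eq_iff.mp hf with ⟨hxx, hyy⟩ | ⟨hxy', hyx'⟩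
      · have he1 : hPAq.choose.1 = hPAq'.choose.1 := hUniq h1 h1' hx (hxx ▸ hx')
        have he2 : hPAq.choose.2.1 = hPAq'.choose.2.1 := hUniq h2 h2' hy (hyy ▸ hy')
        rw [hqe, hqe', he1, he2]
      · have he1 : hPAq.choose.1 = hPAq'.choose.2.1 := hUniq h1 h2' hx (hxy' ▸ hy')
        have he2 : hPAq.choose.2.1 = hPAq'.choose.1 := hUniq h2 h1' hy (hyx' ▸ hx')
        rw [hqe, hqe', he1, he2, Sym2.eq_swap]
  -- bound for type B1 pairs
  set TB1 : Finset (V × V × V) := U.biUnion (fun x => (out x).biUnion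
    (fun z => ((G.neighborFinset z).erase x).image (fun y => (x, z, y)))) with hTB1
  have hB1 : (T.filter PB1).card ≤ TB1.card := by
    apply Finset.card_le_card_of_injOn
      (fun q => if h : PB1 q then (h.choose.2.2.1, h.choose.2.2.2.2, h.choose.2.2.2.1)
        else (u₀, u₀, u₀))
    · intro q hq
      have hP : PB1 q := (mem_filter.mp hq).2
      simp only [mem_coe]; rw [dif_pos hP]
      obtain ⟨hqe, h1, h2, hx, hy, hyx, hzout, hadj⟩ := hP.choose_spec
      rw [hTB1, mem_biUnion]
      refine ⟨_, hxU h1 hx, ?_⟩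
      rw [mem_biUnion]
      refine ⟨_, hzout, ?_⟩
      rw [mem_image]
      exact ⟨_, mem_erase.mpr ⟨hyx, (SimpleGraph.mem_neighborFinset _ _ _).mpr hadj⟩, rfl⟩
    · intro q hq q' hq' hf
      rw [mem_coe, mem_filter] at hq hq'
      have hP : PB1 q := hq.2
      have hP' : PB1 q' := hq'.2
      simp only [dif_pos hP, dif_pos hP'] at hf
      obtain ⟨hqe, h1, h2, hx, hy, _, _, _⟩ := hP.choose_spec
      obtain ⟨hqe', h1', h2', hx', hy', _, _, _⟩ := hP'.choose_spec
      rw [Prod.mk.injEq, Prod.mk.injEq] at hf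
      obtain ⟨hfx, -, hfy⟩ := hf
      have he1 : hP.choose.1 = hP'.choose.1 := hUniq h1 h1' hx (hfx ▸ hx')
      have he2 : hP.choose.2.1 = hP'.choose.2.1 := hUniq h2 h2' hy (hfy ▸ hy')
      rw [hqe, hqe', he1, he2]
  have hTB1card : TB1.card ≤ U.card * (⌊2 * a⌋₊ * (Δ - 1)) := by
    rw [hTB1]
    refine card_biUnion_le.trans ?_
    have hin : ∀ x ∈ U, ((out x).biUnion
        (fun z => ((G.neighborFinset z).erase x).image (fun y => (x, z, y)))).card ≤
        ⌊2 * a⌋₊ * (Δ - 1) := by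
      intro x _
      refine card_biUnion_le.trans ?_
      have hz : ∀ z ∈ out x,
          (((G.neighborFinset z).erase x).image (fun y => (x, z, y))).card ≤ Δ - 1 := by
        intro z hz
        have hxz : x ∈ G.neighborFinset z := by
          have h1 := hout_sub x hz
          rw [SimpleGraph.mem_neighborFinset] at h1 ⊢
          exact h1.symm
        calc (((G.neighborFinset z).erase x).image (fun y => (x, z, y))).card
            ≤ ((G.neighborFinset z).erase x).card := card_image_le
          _ = G.degree z - 1 := by
              rw [card_erase_of_mem hxz, SimpleGraph.card_neighborFinset_eq_degree]
          _ ≤ Δ - 1 := Nat.sub_le_sub_right (hΔ ▸ G.degree_le_maxDegree z) 1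
      calc ∑ z ∈ out x, (((G.neighborFinset z).erase x).image (fun y => (x, z, y))).card
          ≤ ∑ _z ∈ out x, (Δ - 1) := Finset.sum_le_sum hz
        _ = (out x).card * (Δ - 1) := by rw [sum_const, smul_eq_mul]
        _ ≤ ⌊2 * a⌋₊ * (Δ - 1) := Nat.mul_le_mul_right _ (hout_card x)
    calc ∑ x ∈ U, ((out x).biUnion
          (fun z => ((G.neighborFinset z).erase x).image (fun y => (x, z, y)))).card
        ≤ ∑ _x ∈ U, ⌊2 * a⌋₊ * (Δ - 1) := Finset.sum_le_sum hin
      _ = U.card * (⌊2 * a⌋₊ * (Δ - 1)) := by rw [sum_const, smul_eq_mul]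
  -- bound for type B2 pairs
  set TB2 : Finset (V × V × V) := U.biUnion (fun x =>
    (Finset.univ.filter (fun z => x ∈ out z)).biUnion
      (fun z => (out z).image (fun y => (x, z, y)))) with hTB2
  have hB2 : (T.filter PB2).card ≤ TB2.card := by
    apply Finset.card_le_card_of_injOn
      (fun q => if h : PB2 q then (h.choose.2.2.1, h.choose.2.2.2.2, h.choose.2.2.2.1)
        else (u₀, u₀, u₀))
    · intro q hq
      have hP : PB2 q := (mem_filter.mp hq).2
      simp only [mem_coe]; rw [dif_pos hP]
      obtain ⟨hqe, h1, h2, hx, hy, hxout, hyout⟩ := hP.choose_spec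
      rw [hTB2, mem_biUnion]
      refine ⟨_, hxU h1 hx, ?_⟩
      rw [mem_biUnion]
      refine ⟨_, mem_filter.mpr ⟨mem_univ _, hxout⟩, ?_⟩
      rw [mem_image]
      exact ⟨_, hyout, rfl⟩
    · intro q hq q' hq' hf
      rw [mem_coe, mem_filter] at hq hq'
      have hP : PB2 q := hq.2
      have hP' : PB2 q' := hq'.2
      simp only [dif_pos hP, dif_pos hP'] at hf
      obtain ⟨hqe, h1, h2, hx, hy, _, _⟩ := hP.choose_spec
      obtain ⟨hqe', h1', h2', hx', hy', _, _⟩ := hP'.choose_spec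
      rw [Prod.mk.injEq, Prod.mk.injEq] at hf
      obtain ⟨hfx, -, hfy⟩ := hf
      have he1 : hP.choose.1 = hP'.choose.1 := hUniq h1 h1' hx (hfx ▸ hx')
      have he2 : hP.choose.2.1 = hP'.choose.2.1 := hUniq h2 h2' hy (hfy ▸ hy')
      rw [hqe, hqe', he1, he2]
  have hTB2card : TB2.card ≤ U.card * (Δ * ⌊2 * a⌋₊) := by
    rw [hTB2]
    refine card_biUnion_le.trans ?_
    have hin : ∀ x ∈ U, ((Finset.univ.filter (fun z => x ∈ out z)).biUnion
        (fun z => (out z).image (fun y => (x, z, y)))).card ≤ Δ * ⌊2 * a⌋₊ := by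
      intro x _
      refine card_biUnion_le.trans ?_
      have hz : ∀ z ∈ Finset.univ.filter (fun z => x ∈ out z),
          ((out z).image (fun y => (x, z, y))).card ≤ ⌊2 * a⌋₊ :=
        fun z _ => card_image_le.trans (hout_card z)
      calc ∑ z ∈ Finset.univ.filter (fun z => x ∈ out z),
            ((out z).image (fun y => (x, z, y))).card
          ≤ ∑ _z ∈ Finset.univ.filter (fun z => x ∈ out z), ⌊2 * a⌋₊ := Finset.sum_le_sum hz
        _ = (Finset.univ.filter (fun z => x ∈ out z)).card * ⌊2 * a⌋₊ := by
            rw [sum_const, smul_eq_mul]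
        _ ≤ Δ * ⌊2 * a⌋₊ := by
            refine Nat.mul_le_mul_right _ ?_
            have hsub : (Finset.univ.filter (fun z => x ∈ out z)) ⊆ G.neighborFinset x := by
              intro z hzf
              rw [mem_filter] at hzf
              have := hout_sub z hzf.2
              rw [SimpleGraph.mem_neighborFinset] at this ⊢
              exact this.symm
            calc (Finset.univ.filter (fun z => x ∈ out z)).card
                ≤ (G.neighborFinset x).card := card_le_card hsub
              _ = G.degree x := SimpleGraph.card_neighborFinset_eq_degree _ _
              _ ≤ Δ := hΔ ▸ G.degree_le_maxDegree x
    calc ∑ x ∈ U, ((Finset.univ.filter (fun z => x ∈ out z)).biUnion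
          (fun z => (out z).image (fun y => (x, z, y)))).card
        ≤ ∑ _x ∈ U, Δ * ⌊2 * a⌋₊ := Finset.sum_le_sum hin
      _ = U.card * (Δ * ⌊2 * a⌋₊) := by rw [sum_const, smul_eq_mul]
  -- put everything together
  have hEUb : (EU.card : ℝ) ≤ a * ((U.card : ℝ) - 1) := ha U hU2
  have hTn : T.card ≤ EU.card + (U.card * (⌊2 * a⌋₊ * (Δ - 1)) + U.card * (Δ * ⌊2 * a⌋₊)) :=
    hsplit.trans (by
      have g1 := hA
      have g2 := hB1.trans hTB1card
      have g3 := hB2.trans hTB2card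
      omega)
  have hTr : (T.card : ℝ) ≤ (EU.card : ℝ) + ((U.card : ℝ) * ((⌊2 * a⌋₊ : ℝ) * ((Δ : ℝ) - 1))
      + (U.card : ℝ) * ((Δ : ℝ) * (⌊2 * a⌋₊ : ℝ))) := by
    have hc : ((T.card : ℕ) : ℝ) ≤ ((EU.card + (U.card * (⌊2 * a⌋₊ * (Δ - 1))
        + U.card * (Δ * ⌊2 * a⌋₊)) : ℕ) : ℝ) := by exact_mod_cast hTn
    push_cast [Nat.cast_sub hΔ1] at hc
    exact hc
  have hd2a : ((⌊2 * a⌋₊ : ℕ) : ℝ) ≤ 2 * a := Nat.floor_le (by linarith)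
  have hd0 : (0 : ℝ) ≤ ((⌊2 * a⌋₊ : ℕ) : ℝ) := Nat.cast_nonneg _
  have hcU2s : ((U.card : ℕ) : ℝ) ≤ 2 * (S.card : ℝ) := by exact_mod_cast hU2S
  have hcU0 : (0 : ℝ) ≤ ((U.card : ℕ) : ℝ) := Nat.cast_nonneg _
  have hs2 : (2 : ℝ) ≤ (S.card : ℝ) := by exact_mod_cast hS2
  have hΔr : (1 : ℝ) ≤ (Δ : ℝ) := by exact_mod_cast hΔ1
  have m0 : a * ((U.card : ℝ) - 1) ≤ a * (2 * (S.card : ℝ) - 1) := by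
    apply mul_le_mul_of_nonneg_left _ ha0
    linarith
  have m1 : (U.card : ℝ) * ((⌊2 * a⌋₊ : ℝ) * ((Δ : ℝ) - 1))
      ≤ (2 * (S.card : ℝ)) * ((2 * a) * ((Δ : ℝ) - 1)) := by
    have hin : (⌊2 * a⌋₊ : ℝ) * ((Δ : ℝ) - 1) ≤ (2 * a) * ((Δ : ℝ) - 1) :=
      mul_le_mul_of_nonneg_right hd2a (by linarith)
    exact mul_le_mul hcU2s hin (mul_nonneg hd0 (by linarith)) (by linarith)
  have m2 : (U.card : ℝ) * ((Δ : ℝ) * (⌊2 * a⌋₊ : ℝ))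
      ≤ (2 * (S.card : ℝ)) * ((Δ : ℝ) * (2 * a)) := by
    have hin : (Δ : ℝ) * (⌊2 * a⌋₊ : ℝ) ≤ (Δ : ℝ) * (2 * a) :=
      mul_le_mul_of_nonneg_left hd2a (by linarith)
    exact mul_le_mul hcU2s hin (by positivity) (by linarith)
  have hkey : (0 : ℝ) ≤ a * (Δ : ℝ) * ((S.card : ℝ) - 2) :=
    mul_nonneg (mul_nonneg ha0 (by linarith)) (by linarith)
  nlinarith [hTr, hEUb, m0, m1, m2, hkey]
end

section
/- Let G be a finite simple graph with maximum degree Δ, let φ be a partial proper edge-coloring of G with colors {1, …, Δ+1}, and let ⟨u_1, …, u_k⟩ be a fan of a vertex v with designated missing colors m(v) and ⟨m(u_1), …, m(u_k)⟩. Define φ' (the rotation of the fan) by setting φ'(v, u_i) = φ(v, u_{i+1}) for 1 ≤ i ≤ k−1, uncoloring the edge (v, u_k), and keeping every other edge as in φ. Then φ' is a partial proper edge-coloring of G with colors {1, …, Δ+1}, and its domain equals (dom(φ) ∪ {(v, u_1)}) \ {(v, u_k)}. -/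
/-- Rotating a fan: if `⟨u 0, …, u k⟩` is a fan of `v` for a partial
proper `(Δ+1)`-edge-coloring `φ` and `φ'` is obtained from `φ` by giving each edge
`(v, u i)` (`i < k`) the color of `(v, u (i+1))`, uncoloring `(v, u k)`, and keeping all
other edges unchanged, then `φ'` is again a partial proper `(Δ+1)`-edge-coloring, and
its domain equals `(dom φ ∪ {(v, u 0)}) \ {(v, u k)}`. -/
theorem stmt_8 {V : Type*} [Fintype V] [DecidableEq V] (G : SimpleGraph V)
    [DecidableRel G.Adj] (Δ : ℕ) (hΔ : G.maxDegree = Δ)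
    (φ : Sym2 V → Option (Fin (Δ + 1))) (hφ : IsPartialProperEdgeColoring G φ)
    (v : V) {k : ℕ} (u : Fin (k + 1) → V) (mv : Fin (Δ + 1)) (m : Fin (k + 1) → Fin (Δ + 1))
    (hfan : IsFan G φ v u mv m)
    (φ' : Sym2 V → Option (Fin (Δ + 1)))
    (h1 : ∀ i : Fin k, φ' s(v, u i.castSucc) = φ s(v, u i.succ))
    (h2 : φ' s(v, u (Fin.last k)) = none)
    (h3 : ∀ e : Sym2 V, (∀ i, e ≠ s(v, u i)) → φ' e = φ e) :
    IsPartialProperEdgeColoring G φ' ∧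
    ∀ e : Sym2 V,
      (φ' e).isSome ↔ (((φ e).isSome ∨ e = s(v, u 0)) ∧ e ≠ s(v, u (Fin.last k))) := by
  obtain ⟨hedge, hproper⟩ := hφ
  have hval : ∀ i : Fin k, φ' s(v, u i.castSucc) = some (m i.castSucc) := fun i => by
    rw [h1 i, hfan.colored i]
  have hEne : ∀ i j : Fin (k+1), s(v, u i) = s(v, u j) → i = j := fun i j h =>
    hfan.inj (Sym2.congr_right.mp h)
  have hminj : ∀ i j : Fin k, m i.castSucc = m j.castSucc → i = j := by
    intro i j h
    by_contra hij
    have hne2 : s(v, u i.succ) ≠ s(v, u j.succ) := fun hh =>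
      hij (Fin.succ_injective _ (hEne _ _ hh))
    exact hproper _ _ hne2 ⟨v, Sym2.mem_mk_left _ _, Sym2.mem_mk_left _ _⟩ _
      ((hfan.colored i).trans (congrArg some h)) (hfan.colored j)
  have key : ∀ (i : Fin k) (e₂ : Sym2 V), (∀ j, e₂ ≠ s(v, u j)) →
      (∃ x, x ∈ s(v, u i.castSucc) ∧ x ∈ e₂) → φ e₂ ≠ some (m i.castSucc) := by
    rintro i e₂ h2' ⟨x, hx1, hx2⟩ hc
    rcases Sym2.mem_iff.mp hx1 with rfl | rfl
    · exact hproper e₂ _ (h2' i.succ) ⟨x, hx2, Sym2.mem_mk_left _ _⟩ _ hc (hfan.colored i)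
    · exact hfan.missing i.castSucc e₂ hx2 hc
  refine ⟨⟨?_, ?_⟩, ?_⟩
  · intro e he
    by_cases hf : ∃ i, e = s(v, u i)
    · obtain ⟨i, rfl⟩ := hf
      exact (hfan.adj i)
    · push_neg at hf
      rw [h3 e hf] at he
      exact hedge e he
  · intro e₁ e₂ hne12 hsh c hc1 hc2
    obtain ⟨x, hx1, hx2⟩ := hsh
    by_cases hf1 : ∃ i, e₁ = s(v, u i)
    · obtain ⟨i, rfl⟩ := hf1
      have hil : i ≠ Fin.last k := by
        rintro rfl; rw [h2] at hc1; cases hc1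
      obtain ⟨i', rfl⟩ := Fin.exists_castSucc_eq.mpr hil
      have hc1' : c = m i'.castSucc := by
        rw [hval i'] at hc1; exact (Option.some_inj.mp hc1).symm
      subst hc1'
      by_cases hf2 : ∃ j, e₂ = s(v, u j)
      · obtain ⟨j, rfl⟩ := hf2
        have hjl : j ≠ Fin.last k := by
          rintro rfl; rw [h2] at hc2; cases hc2
        obtain ⟨j', rfl⟩ := Fin.exists_castSucc_eq.mpr hjl
        rw [hval j'] at hc2
        exact hne12 (by rw [hminj j' i' (Option.some_inj.mp hc2)])
      · push_neg at hf2
        rw [h3 e₂ hf2] at hc2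
        exact key i' e₂ hf2 ⟨x, hx1, hx2⟩ hc2
    · push_neg at hf1
      rw [h3 e₁ hf1] at hc1
      by_cases hf2 : ∃ j, e₂ = s(v, u j)
      · obtain ⟨j, rfl⟩ := hf2
        have hjl : j ≠ Fin.last k := by
          rintro rfl; rw [h2] at hc2; cases hc2
        obtain ⟨j', rfl⟩ := Fin.exists_castSucc_eq.mpr hjl
        rw [hval j'] at hc2
        rw [← Option.some_inj.mp hc2] at hc1
        exact key j' e₁ hf1 ⟨x, hx2, hx1⟩ hc1
      · push_neg at hf2
        rw [h3 e₂ hf2] at hc2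
        exact hproper e₁ e₂ hne12 ⟨x, hx1, hx2⟩ c hc1 hc2
  · intro e
    by_cases hf : ∃ i, e = s(v, u i)
    · obtain ⟨i, rfl⟩ := hf
      by_cases hil : i = Fin.last k
      · subst hil
        simp [h2]
      · obtain ⟨i', rfl⟩ := Fin.exists_castSucc_eq.mpr hil
        have hlast : s(v, u i'.castSucc) ≠ s(v, u (Fin.last k)) := fun h =>
          hil (hEne _ _ h)
        rw [hval i']
        simp only [Option.isSome_some, true_iff]
        refine ⟨?_, hlast⟩
        by_cases hi0 : i'.castSucc = (0 : Fin (k+1))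
        · exact Or.inr (by rw [hi0])
        · obtain ⟨j, hj⟩ := Fin.eq_succ_of_ne_zero hi0
          left
          rw [hj, hfan.colored j]
          rfl
    · push_neg at hf
      rw [h3 e hf]
      simp [hf 0, hf (Fin.last k)]
end

section
/- Let G be a finite simple graph with maximum degree Δ, let φ be a partial proper edge-coloring of G using colors {1, …, Δ+1}, and let e be an edge of G not in the domain of φ. Then there exists a partial proper edge-coloring φ' of G using colors {1, …, Δ+1} whose domain is exactly dom(φ) ∪ {e}. (In particular, a proper (Δ+1)-edge-coloring can be updated upon insertion of a new edge, as long as the maximum degree bound is preserved.) -/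
open Relation

set_option linter.unusedSectionVars false
set_option linter.unusedVariables false
set_option maxHeartbeats 1000000

namespace VizingSt9

variable {V : Type*} [Fintype V] [DecidableEq V] {G : SimpleGraph V} [DecidableRel G.Adj]
variable {K : ℕ}

local notation "PP" => IsPartialProperEdgeColoring G

/-- color `c` does not appear on any edge incident to `z`. -/
def Free (φ : Sym2 V → Option (Fin K)) (c : Fin K) (z : V) : Prop :=
  ∀ t, φ s(z, t) ≠ some c

lemma sym2_eq_left {z t t' : V} (h : s(z, t) = s(z, t')) : t = t' := by
  rcases Sym2.eq_iff.mp h with ⟨_, h⟩ | ⟨h1, h2⟩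
  · exact h
  · exact h2.trans h1

lemma uniqAt {φ : Sym2 V → Option (Fin K)} (hφ : IsPartialProperEdgeColoring G φ)
    {z t t' : V} {c : Fin K} (h1 : φ s(z, t) = some c) (h2 : φ s(z, t') = some c) :
    t = t' := by
  by_contra hne
  exact hφ.2 s(z, t) s(z, t') (fun he => hne (sym2_eq_left he))
    ⟨z, Sym2.mem_mk_left _ _, Sym2.mem_mk_left _ _⟩ c h1 h2

lemma adj_of_some {φ : Sym2 V → Option (Fin K)} (hφ : IsPartialProperEdgeColoring G φ)
    {z t : V} {c : Fin K} (h : φ s(z, t) = some c) : G.Adj z t :=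
  (G.mem_edgeSet).mp (hφ.1 _ (by simp [h]))

lemma freeExists {φ : Sym2 V → Option (Fin K)} (hφ : IsPartialProperEdgeColoring G φ)
    (z : V) (hdz : G.degree z < K) : ∃ c : Fin K, Free φ c z := by
  classical
  by_contra h
  push_neg at h
  simp only [Free, not_forall, not_not] at h
  choose g hg using h
  have hmem : ∀ c ∈ (Finset.univ : Finset (Fin K)), g c ∈ G.neighborFinset z := by
    intro c _
    rw [SimpleGraph.mem_neighborFinset]
    exact adj_of_some hφ (hg c)
  have hinj : Set.InjOn g ↑(Finset.univ : Finset (Fin K)) := by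
    intro c _ c' _ hcc'
    have h1 := hg c
    rw [hcc'] at h1
    have := h1.symm.trans (hg c')
    exact Option.some_injective _ this
  have := Finset.card_le_card_of_injOn g hmem hinj
  simp only [Finset.card_univ, Fintype.card_fin, SimpleGraph.card_neighborFinset_eq_degree] at this
  omega

-- representation of an edge containing z
lemma mem_rep {z : V} {e : Sym2 V} (h : z ∈ e) : ∃ t, e = s(z, t) :=
  Sym2.mem_iff_exists.mp h

/-- coloring an uncolored-or-whatever edge with a color free at both ends. -/
lemma colorEdge {φ : Sym2 V → Option (Fin K)} (hφ : PP φ) {a b : V} {c : Fin K}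
    (hab : G.Adj a b) (ha : Free φ c a) (hb : Free φ c b) :
    PP (Function.update φ s(a,b) (some c)) ∧
      ∀ f, ((Function.update φ s(a,b) (some c)) f).isSome ↔ ((φ f).isSome ∨ f = s(a,b)) := by
  classical
  constructor
  · constructor
    · intro e he
      by_cases h : e = s(a,b)
      · subst h; exact (G.mem_edgeSet).mpr hab
      · rw [Function.update_of_ne h] at he; exact hφ.1 e he
    · intro e₁ e₂ hne ⟨z, hz1, hz2⟩ d h1 h2
      by_cases he1 : e₁ = s(a,b)
      · subst he1
        rw [Function.update_self] at h1
        have hcd : c = d := Option.some_injective _ h1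
        rw [Function.update_of_ne (fun h => hne h.symm)] at h2
        obtain ⟨t, rfl⟩ := mem_rep hz2
        rcases Sym2.mem_iff.mp hz1 with rfl | rfl
        · exact ha t (hcd ▸ h2)
        · exact hb t (hcd ▸ h2)
      · rw [Function.update_of_ne he1] at h1
        by_cases he2 : e₂ = s(a,b)
        · subst he2
          rw [Function.update_self] at h2
          have hcd : c = d := Option.some_injective _ h2
          obtain ⟨t, rfl⟩ := mem_rep hz1
          rcases Sym2.mem_iff.mp hz2 with rfl | rfl
          · exact ha t (hcd ▸ h1)
          · exact hb t (hcd ▸ h1)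
        · rw [Function.update_of_ne he2] at h2
          exact hφ.2 e₁ e₂ hne ⟨z, hz1, hz2⟩ d h1 h2
  · intro f
    by_cases h : f = s(a,b)
    · subst h; simp
    · rw [Function.update_of_ne h]; simp [h]

lemma uncolorOk {φ : Sym2 V → Option (Fin K)} (hφ : PP φ) (e₀ : Sym2 V) :
    PP (Function.update φ e₀ none) := by
  classical
  constructor
  · intro e he
    by_cases h : e = e₀
    · subst h; simp at he
    · rw [Function.update_of_ne h] at he; exact hφ.1 e he
  · intro e₁ e₂ hne hsh d h1 h2
    by_cases he1 : e₁ = e₀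
    · subst he1; simp at h1
    · by_cases he2 : e₂ = e₀
      · subst he2; simp at h2
      · rw [Function.update_of_ne he1] at h1
        rw [Function.update_of_ne he2] at h2
        exact hφ.2 e₁ e₂ hne hsh d h1 h2

lemma chain'_mem {α : Type*} {R S : α → α → Prop} :
    ∀ l : List α, List.Chain' R l →
      (∀ a ∈ l, ∀ b ∈ l.tail, R a b → S a b) → List.Chain' S l
  | [], _, _ => List.isChain_nil
  | [_], _, _ => List.isChain_singleton _
  | a :: b :: t, h, hm => by
      simp only [List.Chain', List.isChain_cons_cons] at h ⊢
      refine ⟨hm a (by simp) b (by simp) h.1, chain'_mem (b :: t) h.2 ?_⟩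
      intro p hp q hq hr
      exact hm p (List.mem_cons_of_mem _ hp) q (List.mem_cons_of_mem _ hq) hr

/-- Rotate the fan `a :: r` and color its last edge with `c`. -/
lemma rotcolor (u : V) : ∀ (r : List V) (φ : Sym2 V → Option (Fin K)) (a : V) (c : Fin K),
    PP φ → (∀ z ∈ a :: r, G.Adj u z) → (a :: r).Nodup →
    φ s(u, a) = none →
    List.Chain' (fun p q => ∃ d, φ s(u, q) = some d ∧ Free φ d p) (a :: r) →
    Free φ c u → Free φ c ((a :: r).getLast (List.cons_ne_nil a r)) →
    ∃ φ' : Sym2 V → Option (Fin K), PP φ' ∧ ∀ f, (φ' f).isSome ↔ ((φ f).isSome ∨ f = s(u, a)) := by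
  intro r
  induction r with
  | nil =>
    intro φ a c hφ hadj hnd hnone hchain hfcu hflast
    rw [List.getLast_singleton] at hflast
    exact ⟨_, colorEdge hφ (hadj a (by simp)) hfcu hflast⟩
  | cons b t ih =>
    intro φ a c hφ hadj hnd hnone hchain hfcu hflast
    classical
    obtain ⟨⟨d, hdb, hda⟩, hchain'⟩ := List.isChain_cons_cons.mp hchain
    have hadjua : G.Adj u a := hadj a (by simp)
    have hadjub : G.Adj u b := hadj b (by simp)
    have hau : a ≠ u := hadjua.ne'
    have hbu : b ≠ u := hadjub.ne'
    have hanbt : a ∉ b :: t := (List.nodup_cons.mp hnd).1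
    have hab : a ≠ b := fun h => hanbt (h ▸ List.mem_cons_self (a := b) (l := t))
    have hsuab : s(u,a) ≠ s(u,b) := fun h => hab (sym2_eq_left h)
    have hfud : Free (Function.update φ s(u,b) none) d u := by
      intro s' hs'
      by_cases h1 : s(u,s') = s(u,b)
      · rw [h1, Function.update_self] at hs'; cases hs'
      · rw [Function.update_of_ne h1] at hs'
        exact h1 (by rw [uniqAt hφ hs' hdb])
    have hfad : Free (Function.update φ s(u,b) none) d a := by
      intro s' hs'
      by_cases h1 : s(a,s') = s(u,b)
      · rw [h1, Function.update_self] at hs'; cases hs'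
      · rw [Function.update_of_ne h1] at hs'; exact hda s' hs'
    obtain ⟨hφ₁, hdom₁⟩ := colorEdge (uncolorOk hφ s(u,b)) hadjua hfud hfad
    set φ₁ := Function.update (Function.update φ s(u,b) none) s(u,a) (some d) with hφ₁def
    have hφ₁b : φ₁ s(u,b) = none := by
      rw [hφ₁def, Function.update_of_ne (Ne.symm hsuab), Function.update_self]
    have hφ₁a : φ₁ s(u,a) = some d := by rw [hφ₁def, Function.update_self]
    have hφ₁eval : ∀ f, f ≠ s(u,a) → f ≠ s(u,b) → φ₁ f = φ f := by
      intro f h1 h2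
      rw [hφ₁def, Function.update_of_ne h1, Function.update_of_ne h2]
    have hfree_trans : ∀ (d' : Fin K) (z : V), z ≠ a → z ≠ u → Free φ d' z → Free φ₁ d' z := by
      intro d' z hza hzu hf s' hs'
      by_cases h1 : s(z,s') = s(u,a)
      · rcases Sym2.eq_iff.mp h1 with ⟨h,_⟩|⟨h,_⟩
        · exact hzu h
        · exact hza h
      by_cases h2 : s(z,s') = s(u,b)
      · rw [h2, hφ₁b] at hs'; cases hs'
      · rw [hφ₁eval _ h1 h2] at hs'; exact hf s' hs'
    -- hypotheses for recursive call on (b :: t) with φ₁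
    have hadj' : ∀ z ∈ b :: t, G.Adj u z := fun z hz => hadj z (List.mem_cons_of_mem _ hz)
    have hnd' : (b :: t).Nodup := (List.nodup_cons.mp hnd).2
    have hnone' : φ₁ s(u,b) = none := hφ₁b
    have hchain₁ : List.Chain' (fun p q => ∃ d', φ₁ s(u, q) = some d' ∧ Free φ₁ d' p) (b :: t) := by
      apply chain'_mem (b :: t) hchain'
      intro p hp q hq hr
      obtain ⟨d', hq', hp'⟩ := hr
      have hqa : q ≠ a := fun h => hanbt (h ▸ List.mem_cons_of_mem _ hq)
      have hqb : q ≠ b := fun h => (List.nodup_cons.mp hnd').1 (h ▸ hq)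
      refine ⟨d', ?_, ?_⟩
      · rw [hφ₁eval _ (fun h => hqa (sym2_eq_left h)) (fun h => hqb (sym2_eq_left h))]
        exact hq'
      · exact hfree_trans d' p (fun h => hanbt (h ▸ hp)) (fun h => (hadj p (List.mem_cons_of_mem _ hp)).ne' h) hp'
    have hcd : c ≠ d := by
      intro h; exact hfcu b (h ▸ hdb)
    have hfcu₁ : Free φ₁ c u := by
      intro s' hs'
      by_cases h1 : s(u,s') = s(u,a)
      · rw [h1, hφ₁a] at hs'
        exact hcd (Option.some_injective _ hs').symm
      by_cases h2 : s(u,s') = s(u,b)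
      · rw [h2, hφ₁b] at hs'; cases hs'
      · rw [hφ₁eval _ h1 h2] at hs'; exact hfcu s' hs'
    have hlast_eq : (a :: b :: t).getLast (List.cons_ne_nil _ _)
        = (b :: t).getLast (List.cons_ne_nil _ _) := List.getLast_cons _
    have hflast₁ : Free φ₁ c ((b :: t).getLast (List.cons_ne_nil b t)) := by
      have hmem := List.getLast_mem (List.cons_ne_nil b t)
      refine hfree_trans c _ (fun h => hanbt (h ▸ hmem)) (fun h => (hadj _ (List.mem_cons_of_mem _ hmem)).ne' h) ?_
      rw [← hlast_eq]; exact hflast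
    obtain ⟨φ₂, hφ₂, hdom₂⟩ := ih φ₁ b c hφ₁ hadj' hnd' hnone' hchain₁ hfcu₁ hflast₁
    refine ⟨φ₂, hφ₂, ?_⟩
    intro f
    rw [hdom₂ f]
    by_cases hfa : f = s(u,a)
    · subst hfa
      simp [hφ₁a]
    by_cases hfb : f = s(u,b)
    · subst hfb
      simp [hdb, hφ₁b]
    · rw [hφ₁eval f hfa hfb]
      simp [hfa, hfb]
/-- Extend a fan maximally. -/
lemma maxfan_aux (φ : Sym2 V → Option (Fin K)) (u v : V) :
    ∀ (n : ℕ) (r : List V), (∀ z ∈ v :: r, G.Adj u z) → (v :: r).Nodup →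
    List.Chain' (fun p q => ∃ d, φ s(u, q) = some d ∧ Free φ d p) (v :: r) →
    (G.neighborFinset u \ (v :: r).toFinset).card ≤ n →
    ∃ r' : List V, (∀ z ∈ v :: r', G.Adj u z) ∧ (v :: r').Nodup ∧
      List.Chain' (fun p q => ∃ d, φ s(u, q) = some d ∧ Free φ d p) (v :: r') ∧
      ∀ w (c : Fin K), G.Adj u w → w ∉ v :: r' → φ s(u,w) = some c →
        ¬ Free φ c ((v :: r').getLast (List.cons_ne_nil v r')) := by
  intro n
  induction n with
  | zero =>
    intro r hadj hnd hchain hcard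
    by_cases h : ∃ w : V, ∃ c : Fin K, G.Adj u w ∧ w ∉ v :: r ∧ φ s(u,w) = some c ∧
        Free φ c ((v :: r).getLast (List.cons_ne_nil v r))
    · obtain ⟨w, c, hw1, hw2, _, _⟩ := h
      exfalso
      have : w ∈ G.neighborFinset u \ (v :: r).toFinset := by
        simp only [List.mem_cons, not_or] at hw2
        simp [SimpleGraph.mem_neighborFinset, hw1, hw2.1, hw2.2]
      have := Finset.card_pos.mpr ⟨w, this⟩
      omega
    · push_neg at h
      exact ⟨r, hadj, hnd, hchain, fun w c hw1 hw2 hw3 => h w c hw1 hw2 hw3⟩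
  | succ n ih =>
    intro r hadj hnd hchain hcard
    by_cases h : ∃ w : V, ∃ c : Fin K, G.Adj u w ∧ w ∉ v :: r ∧ φ s(u,w) = some c ∧
        Free φ c ((v :: r).getLast (List.cons_ne_nil v r))
    · obtain ⟨w, c, hw1, hw2, hw3, hw4⟩ := h
      have hvr : v :: (r ++ [w]) = (v :: r) ++ [w] := by simp
      have hadj' : ∀ z ∈ v :: (r ++ [w]), G.Adj u z := by
        intro z hz
        rw [hvr, List.mem_append] at hz
        rcases hz with hz | hz
        · exact hadj z hz
        · simp at hz; subst hz; exact hw1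
      have hnd' : (v :: (r ++ [w])).Nodup := by
        rw [hvr, List.nodup_append']
        exact ⟨hnd, List.nodup_singleton w, by
          intro z hz hz'
          simp at hz'
          subst hz'
          exact hw2 hz⟩
      have hchain2 : List.Chain' (fun p q => ∃ d, φ s(u, q) = some d ∧ Free φ d p)
          (v :: (r ++ [w])) := by
        rw [hvr]; simp only [List.Chain', List.isChain_append]
        refine ⟨hchain, List.isChain_singleton w, ?_⟩
        intro x hx y hy
        rw [List.getLast?_eq_getLast (List.cons_ne_nil v r)] at hx
        simp at hx hy
        subst hx; subst hy
        exact ⟨c, hw3, hw4⟩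
      have hcard' : (G.neighborFinset u \ (v :: (r ++ [w])).toFinset).card ≤ n := by
        have hsub : G.neighborFinset u \ (v :: (r ++ [w])).toFinset ⊆
            (G.neighborFinset u \ (v :: r).toFinset).erase w := by
          intro z hz
          rw [Finset.mem_sdiff] at hz
          rw [Finset.mem_erase, Finset.mem_sdiff]
          have hz2 := hz.2
          rw [hvr, List.toFinset_append, Finset.mem_union] at hz2
          push_neg at hz2
          refine ⟨?_, hz.1, hz2.1⟩
          intro hzw
          exact hz2.2 (by simp [hzw])
        have hwmem : w ∈ G.neighborFinset u \ (v :: r).toFinset := by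
          simp only [List.mem_cons, not_or] at hw2
          simp [SimpleGraph.mem_neighborFinset, hw1, hw2.1, hw2.2]
        have := Finset.card_le_card hsub
        rw [Finset.card_erase_of_mem hwmem] at this
        omega
      exact ih (r ++ [w]) hadj' hnd' hchain2 hcard'
    · push_neg at h
      exact ⟨r, hadj, hnd, hchain, fun w c hw1 hw2 hw3 => h w c hw1 hw2 hw3⟩
/-- The α/β step relation. -/
def Rch (φ : Sym2 V → Option (Fin K)) (α β : Fin K) (z t : V) : Prop :=
  φ s(z, t) = some α ∨ φ s(z, t) = some β

lemma Rch_symm {φ : Sym2 V → Option (Fin K)} {α β : Fin K} :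
    Symmetric (Rch φ α β) := by
  intro z t h
  unfold Rch at *
  rwa [Sym2.eq_swap]

open Classical in
noncomputable def nxt (φ : Sym2 V → Option (Fin K)) (c : Fin K) (z : V) : V :=
  if h : ∃ t, φ s(z,t) = some c then h.choose else z

lemma nxt_eq {φ : Sym2 V → Option (Fin K)} (hφ : PP φ) {c : Fin K} {z t : V}
    (h : φ s(z,t) = some c) : nxt φ c z = t := by
  unfold nxt
  rw [dif_pos ⟨t, h⟩]
  exact uniqAt hφ (⟨t, h⟩ : ∃ t, φ s(z,t) = some c).choose_spec h

lemma nxt_fix {φ : Sym2 V → Option (Fin K)} {c : Fin K} {z : V}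
    (h : Free φ c z) : nxt φ c z = z := by
  unfold nxt
  rw [dif_neg]
  push_neg
  exact h

lemma nxt_invol {φ : Sym2 V → Option (Fin K)} (hφ : PP φ) (c : Fin K) :
    Function.Involutive (nxt φ c) := by
  intro z
  by_cases h : ∃ t, φ s(z,t) = some c
  · obtain ⟨t, ht⟩ := h
    rw [nxt_eq hφ ht]
    exact nxt_eq hφ (by rwa [Sym2.eq_swap])
  · push_neg at h
    rw [nxt_fix h, nxt_fix h]

lemma orbit_unique {φ : Sym2 V → Option (Fin K)} (hφ : PP φ) (α β : Fin K) {u x y : V}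
    (hu : Free φ α u) (hx : Free φ β x) (hy : Free φ β y)
    (hrx : ReflTransGen (Rch φ α β) u x) (hry : ReflTransGen (Rch φ α β) u y) :
    x = y := by
  classical
  set eα : Equiv.Perm V := Function.Involutive.toPerm _ (nxt_invol hφ α) with heα
  set eβ : Equiv.Perm V := Function.Involutive.toPerm _ (nxt_invol hφ β) with heβ
  have heα_app : ∀ z, eα z = nxt φ α z := fun z => rfl
  have heβ_app : ∀ z, eβ z = nxt φ β z := fun z => rfl
  have heα2 : eα * eα = 1 := by
    ext z; simp [Equiv.Perm.mul_apply, heα_app, nxt_invol hφ α z]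
  have heβ2 : eβ * eβ = 1 := by
    ext z; simp [Equiv.Perm.mul_apply, heβ_app, nxt_invol hφ β z]
  have heαinv : eα⁻¹ = eα := by
    rw [← mul_eq_one_iff_inv_eq]; exact heα2
  have heβinv : eβ⁻¹ = eβ := by
    rw [← mul_eq_one_iff_inv_eq]; exact heβ2
  set f : Equiv.Perm V := eβ * eα with hf
  have hfinv : f⁻¹ = eα * eβ := by
    rw [hf, mul_inv_rev, heαinv, heβinv]
  have hconjα : eα * f * eα⁻¹ = f⁻¹ := by
    rw [heαinv, hfinv, hf]
    calc eα * (eβ * eα) * eα = eα * eβ * (eα * eα) := by group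
    _ = eα * eβ := by rw [heα2, mul_one]
  have hconjβ : eβ * f * eβ⁻¹ = f⁻¹ := by
    rw [heβinv, hfinv, hf]
    calc eβ * (eβ * eα) * eβ = (eβ * eβ) * (eα * eβ) := by group
    _ = eα * eβ := by rw [heβ2, one_mul]
  have hconjαn : ∀ n : ℤ, eα * f ^ n * eα⁻¹ = f ^ (-n) := by
    intro n
    have := map_zpow (MulAut.conj eα) f n
    simp only [MulAut.conj_apply] at this
    rw [this, hconjα, inv_zpow, ← zpow_neg]
  have hconjβn : ∀ n : ℤ, eβ * f ^ n * eβ⁻¹ = f ^ (-n) := by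
    intro n
    have := map_zpow (MulAut.conj eβ) f n
    simp only [MulAut.conj_apply] at this
    rw [this, hconjβ, inv_zpow, ← zpow_neg]
  have hfixuα : nxt φ α u = u := nxt_fix hu
  -- action of the involutions on the orbit of u
  have hA : ∀ n : ℤ, nxt φ α ((f ^ n) u) = (f ^ (-n)) u := by
    intro n
    have h0 : eα * f ^ n * eα = f ^ (-n) := by
      calc eα * f ^ n * eα = eα * f ^ n * eα⁻¹ := by rw [heαinv]
      _ = f ^ (-n) := hconjαn n
    have h1 : eα * f ^ n = f ^ (-n) * eα := by
      have h2 := congrArg (· * eα) h0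
      simpa [mul_assoc, heα2] using h2
    have := congrArg (fun g : Equiv.Perm V => g u) h1
    simp only [Equiv.Perm.mul_apply] at this
    rw [heα_app, heα_app, hfixuα] at this
    exact this
  have hB : ∀ n : ℤ, nxt φ β ((f ^ n) u) = (f ^ (1 - n)) u := by
    intro n
    have h0 : eβ * f ^ n * eβ = f ^ (-n) := by
      calc eβ * f ^ n * eβ = eβ * f ^ n * eβ⁻¹ := by rw [heβinv]
      _ = f ^ (-n) := hconjβn n
    have h1 : eβ * f ^ n = f ^ (-n) * eβ := by
      have h2 := congrArg (· * eβ) h0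
      simpa [mul_assoc, heβ2] using h2
    have h2 : nxt φ β ((f ^ n) u) = (f ^ (-n)) (nxt φ β u) := by
      have h3 := congrArg (fun g : Equiv.Perm V => g u) h1
      simp only [Equiv.Perm.mul_apply] at h3
      rw [heβ_app, heβ_app] at h3
      exact h3
    have h3 : nxt φ β u = f u := by
      rw [hf, Equiv.Perm.mul_apply, heα_app, hfixuα, heβ_app]
    have h4 : (f ^ (-n)) (f u) = (f ^ (1-n)) u := by
      have h5 : f ^ (-n) * f = f ^ (1-n) := by
        calc f ^ (-n) * f = f ^ (-n) * f ^ (1:ℤ) := by rw [zpow_one]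
        _ = f ^ (-n+1) := by rw [← zpow_add]
        _ = f ^ (1-n) := by
              have he : -n + 1 = 1 - n := by ring
              rw [he]
      rw [← Equiv.Perm.mul_apply, h5]
    rw [h2, h3, h4]
  -- orbit closure
  have horb : ∀ z, ReflTransGen (Rch φ α β) u z → ∃ n : ℤ, (f ^ n) u = z := by
    intro z h
    induction h with
    | refl => exact ⟨0, rfl⟩
    | tail h1 h2 ih =>
      obtain ⟨n, hn⟩ := ih
      rcases h2 with h2 | h2
      · exact ⟨-n, by rw [← hA n, hn, nxt_eq hφ h2]⟩
      · exact ⟨1 - n, by rw [← hB n, hn, nxt_eq hφ h2]⟩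
  -- minimal period of u under f
  have hper : ∃ k : ℕ, 0 < k ∧ (f ^ (k:ℤ)) u = u := by
    refine ⟨orderOf f, orderOf_pos f, ?_⟩
    rw [zpow_natCast, pow_orderOf_eq_one]
    rfl
  set m : ℕ := Nat.find hper with hm
  obtain ⟨hmpos, hmfix⟩ := Nat.find_spec hper
  have hfix_all : ∀ (g : Equiv.Perm V), g u = u → ∀ n : ℤ, (g ^ n) u = u := by
    intro g hg n
    have hginv : g⁻¹ u = u := by
      conv_lhs => rw [← hg]
      exact Equiv.symm_apply_apply g u
    induction n using Int.induction_on with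
    | zero => rfl
    | succ k ihk =>
      rw [add_comm, zpow_add, zpow_one, Equiv.Perm.mul_apply, ihk]
      exact hg
    | pred k ihk =>
      rw [sub_eq_add_neg, add_comm, zpow_add, Equiv.Perm.mul_apply, ihk, zpow_neg, zpow_one]
      exact hginv
  have hdvd : ∀ n : ℤ, (f ^ n) u = u ↔ (m:ℤ) ∣ n := by
    intro n
    constructor
    · intro hn
      have hq := Int.mul_ediv_add_emod n m
      set q := n / (m:ℤ) with hqdef
      set r := n % (m:ℤ) with hrdef
      have hrange : 0 ≤ r ∧ r < m := by
        constructor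
        · exact Int.emod_nonneg n (by exact_mod_cast hmpos.ne')
        · exact Int.emod_lt_of_pos n (by exact_mod_cast hmpos)
      have hmq : (f ^ ((m:ℤ) * q)) u = u := by
        rw [zpow_mul]
        exact hfix_all _ hmfix q
      have hr : (f ^ r) u = u := by
        have h1 : (f ^ n) u = (f ^ ((m:ℤ)*q)) ((f ^ r) u) := by
          rw [← Equiv.Perm.mul_apply, ← zpow_add, hq]
        rw [hn] at h1
        have h2 : (f ^ ((m:ℤ)*q)) ((f ^ r) u) = (f ^ ((m:ℤ)*q)) u := by
          rw [← h1, hmq]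
        exact (Equiv.injective _) h2
      by_cases hr0 : r = 0
      · rw [hr0] at hq
        exact ⟨q, by linarith⟩
      · exfalso
        have hrpos : 0 < r := lt_of_le_of_ne hrange.1 (Ne.symm hr0)
        have hrtn : (f ^ ((r.toNat : ℕ) : ℤ)) u = u := by
          rwa [Int.toNat_of_nonneg hrange.1]
        have : r.toNat < m := by omega
        exact Nat.find_min hper this ⟨by omega, hrtn⟩
    · rintro ⟨q, rfl⟩
      rw [zpow_mul]
      exact hfix_all _ hmfix q
  -- finish
  obtain ⟨a, ha⟩ := horb x hrx
  obtain ⟨b, hb⟩ := horb y hry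
  have hxa : (f ^ (1 - a)) u = (f ^ a) u := by
    rw [← hB a, ha, nxt_fix hx]
  have hyb : (f ^ (1 - b)) u = (f ^ b) u := by
    rw [← hB b, hb, nxt_fix hy]
  have hma : (m:ℤ) ∣ 1 - 2*a := by
    rw [← hdvd]
    have : (f ^ (1 - 2*a)) u = (f ^ (-a : ℤ)) ((f ^ (1-a : ℤ)) u) := by
      rw [← Equiv.Perm.mul_apply, ← zpow_add]
      congr 1
      ring
    rw [this, hxa, ← Equiv.Perm.mul_apply, ← zpow_add]
    simp
  have hmb : (m:ℤ) ∣ 1 - 2*b := by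
    rw [← hdvd]
    have : (f ^ (1 - 2*b)) u = (f ^ (-b : ℤ)) ((f ^ (1-b : ℤ)) u) := by
      rw [← Equiv.Perm.mul_apply, ← zpow_add]
      congr 1
      ring
    rw [this, hyb, ← Equiv.Perm.mul_apply, ← zpow_add]
    simp
  -- m is odd
  have hmodd : Odd (m:ℤ) := by
    rcases Int.even_or_odd (m:ℤ) with he | ho
    · exfalso
      obtain ⟨s, hs⟩ := he
      obtain ⟨t, ht⟩ := hma
      have hk : (1:ℤ) - 2*a = 2*(s*t) := by
        rw [ht, hs]; ring
      omega
    · exact ho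
  obtain ⟨s, hs⟩ := hmodd
  have hm2 : (m:ℤ) ∣ 2*(b - a) := by
    have := dvd_sub hma hmb
    have heq : (1 - 2*a) - (1 - 2*b) = 2*(b-a) := by ring
    rwa [heq] at this
  have hmba : (m:ℤ) ∣ b - a := by
    have h1 : (m:ℤ) ∣ (s+1) * (2*(b-a)) := Dvd.dvd.mul_left hm2 (s+1)
    have h2 : (s+1) * (2*(b-a)) = (m:ℤ)*(b-a) + (b-a) := by
      rw [hs]; ring
    rw [h2] at h1
    have h3 : (m:ℤ) ∣ (m:ℤ)*(b-a) := Dvd.intro _ rfl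
    have := dvd_sub h1 h3
    simpa using this
  -- conclude x = y
  have hba : (f ^ b) u = (f ^ a) u := by
    have hfix : (f ^ (b - a)) u = u := (hdvd _).mpr hmba
    calc (f ^ b) u = (f ^ (a + (b - a))) u := by
          have he : a + (b - a) = b := by ring
          rw [he]
    _ = (f ^ a) ((f ^ (b-a)) u) := by rw [zpow_add, Equiv.Perm.mul_apply]
    _ = (f ^ a) u := by rw [hfix]
  rw [← ha, ← hb, hba]
open Classical in
/-- Swap colors `α` and `β` on all edges inside `S`. -/
noncomputable def kflip (φ : Sym2 V → Option (Fin K)) (S : Set V) (α β : Fin K)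
    (f : Sym2 V) : Option (Fin K) :=
  if (∀ z ∈ f, z ∈ S) ∧ φ f = some α then some β
  else if (∀ z ∈ f, z ∈ S) ∧ φ f = some β then some α
  else φ f

variable {φ : Sym2 V → Option (Fin K)} {S : Set V} {α β : Fin K}

/-- closure of S under the α/β relation. -/
def SClosed (φ : Sym2 V → Option (Fin K)) (S : Set V) (α β : Fin K) : Prop :=
  ∀ z t, z ∈ S → Rch φ α β z t → t ∈ S

lemma bothIn_of_mem (hcl : SClosed φ S α β) {z : V} {e : Sym2 V}
    (hz : z ∈ S) (hze : z ∈ e) (he : φ e = some α ∨ φ e = some β) :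
    ∀ t ∈ e, t ∈ S := by
  obtain ⟨t, rfl⟩ := Sym2.mem_iff_exists.mp hze
  intro t' ht'
  rcases Sym2.mem_iff.mp ht' with rfl | rfl
  · exact hz
  · exact hcl z t' hz he

lemma flip_isSome (f : Sym2 V) : ((kflip φ S α β f).isSome) = (φ f).isSome := by
  unfold kflip
  split_ifs with h1 h2
  · rw [h1.2]; rfl
  · rw [h2.2]; rfl
  · rfl

lemma flip_none {f : Sym2 V} (h : φ f = none) : kflip φ S α β f = none := by
  unfold kflip
  split_ifs with h1 h2
  · rw [h1.2] at h; cases h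
  · rw [h2.2] at h; cases h
  · exact h

lemma flip_eval_of_not_mem {z t : V} (hz : z ∉ S) :
    kflip φ S α β s(z,t) = φ s(z,t) := by
  unfold kflip
  have hni : ¬ (∀ w ∈ s(z,t), w ∈ S) := fun h => hz (h z (Sym2.mem_mk_left _ _))
  rw [if_neg (fun h => hni h.1), if_neg (fun h => hni h.1)]

lemma flip_cases {f : Sym2 V} {d : Fin K} (h : kflip φ S α β f = some d) :
    (φ f = some d ∧ kflip φ S α β f = φ f) ∨
    ((∀ z ∈ f, z ∈ S) ∧ ((φ f = some α ∧ d = β) ∨ (φ f = some β ∧ d = α))) := by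
  unfold kflip at h ⊢
  split_ifs at h ⊢ with h1 h2
  · exact Or.inr ⟨h1.1, Or.inl ⟨h1.2, (Option.some_injective _ h).symm⟩⟩
  · exact Or.inr ⟨h2.1, Or.inr ⟨h2.2, (Option.some_injective _ h).symm⟩⟩
  · exact Or.inl ⟨h, rfl⟩

lemma flip_eval_α (hαβ : α ≠ β) {f : Sym2 V} (hb : ∀ z ∈ f, z ∈ S) (h : φ f = some α) :
    kflip φ S α β f = some β := by
  unfold kflip
  rw [if_pos ⟨hb, h⟩]

lemma flip_eval_β (hαβ : α ≠ β) {f : Sym2 V} (hb : ∀ z ∈ f, z ∈ S) (h : φ f = some β) :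
    kflip φ S α β f = some α := by
  unfold kflip
  rw [if_neg, if_pos ⟨hb, h⟩]
  rintro ⟨-, h2⟩
  rw [h] at h2
  exact hαβ (Option.some_injective _ h2).symm

lemma flip_proper (hφ : PP φ) (hαβ : α ≠ β) (hcl : SClosed φ S α β) :
    PP (kflip φ S α β) := by
  constructor
  · intro e he
    rw [flip_isSome] at he
    exact hφ.1 e he
  · intro e₁ e₂ hne ⟨z, hz1, hz2⟩ d h1 h2
    rcases flip_cases h1 with ⟨ho1, -⟩ | ⟨hb1, hc1⟩ <;>
      rcases flip_cases h2 with ⟨ho2, he2⟩ | ⟨hb2, hc2⟩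
    · -- both unchanged
      exact hφ.2 e₁ e₂ hne ⟨z, hz1, hz2⟩ d ho1 ho2
    · -- e₁ old, e₂ flipped
      rcases hc2 with ⟨hφ2, hd⟩ | ⟨hφ2, hd⟩
      · -- e₂ was α, d = β, so φ e₁ = some β; z ∈ S via e₂
        have ho1' : φ e₁ = some β := by rw [← hd]; exact ho1
        have hzS : z ∈ S := hb2 z hz2
        have hb1' : ∀ t ∈ e₁, t ∈ S := bothIn_of_mem hcl hzS hz1 (Or.inr ho1')
        have heval := flip_eval_β hαβ hb1' ho1'
        rw [heval] at h1
        exact hαβ ((Option.some_injective _ h1).trans hd)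
      · have ho1' : φ e₁ = some α := by rw [← hd]; exact ho1
        have hzS : z ∈ S := hb2 z hz2
        have hb1' : ∀ t ∈ e₁, t ∈ S := bothIn_of_mem hcl hzS hz1 (Or.inl ho1')
        have heval := flip_eval_α hαβ hb1' ho1'
        rw [heval] at h1
        exact hαβ (hd.symm.trans (Option.some_injective _ h1).symm)
    · -- e₁ flipped, e₂ old
      rcases hc1 with ⟨hφ1, hd⟩ | ⟨hφ1, hd⟩
      · have ho2' : φ e₂ = some β := by rw [← hd]; exact ho2
        have hzS : z ∈ S := hb1 z hz1
        have hb2' : ∀ t ∈ e₂, t ∈ S := bothIn_of_mem hcl hzS hz2 (Or.inr ho2')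
        have heval := flip_eval_β hαβ hb2' ho2'
        rw [heval] at h2
        exact hαβ ((Option.some_injective _ h2).trans hd)
      · have ho2' : φ e₂ = some α := by rw [← hd]; exact ho2
        have hzS : z ∈ S := hb1 z hz1
        have hb2' : ∀ t ∈ e₂, t ∈ S := bothIn_of_mem hcl hzS hz2 (Or.inl ho2')
        have heval := flip_eval_α hαβ hb2' ho2'
        rw [heval] at h2
        exact hαβ (hd.symm.trans (Option.some_injective _ h2).symm)
    · -- both flipped
      rcases hc1 with ⟨hφ1, hd⟩ | ⟨hφ1, hd⟩ <;>
        rcases hc2 with ⟨hφ2, hd2⟩ | ⟨hφ2, hd2⟩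
      · exact hφ.2 e₁ e₂ hne ⟨z, hz1, hz2⟩ α hφ1 hφ2
      · exact hαβ (hd2.symm.trans hd)
      · exact hαβ (hd.symm.trans hd2)
      · exact hφ.2 e₁ e₂ hne ⟨z, hz1, hz2⟩ β hφ1 hφ2

/-- other colors keep their freeness under kflip. -/
lemma flip_free_other {d : Fin K} {z : V} (hdα : d ≠ α) (hdβ : d ≠ β)
    (h : Free φ d z) : Free (kflip φ S α β) d z := by
  intro t ht
  rcases flip_cases ht with ⟨ho, -⟩ | ⟨-, ⟨-, rfl⟩ | ⟨-, rfl⟩⟩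
  · exact h t ho
  · exact hdβ rfl
  · exact hdα rfl

/-- for vertices outside S, edges are unchanged, so freeness transfers. -/
lemma flip_free_of_not_mem {d : Fin K} {z : V} (hz : z ∉ S)
    (h : Free φ d z) : Free (kflip φ S α β) d z := by
  intro t ht
  rw [flip_eval_of_not_mem hz] at ht
  exact h t ht

/-- a vertex of S missing β gets α free after the kflip. -/
lemma flip_free_α_of_mem (hαβ : α ≠ β) (hcl : SClosed φ S α β) {z : V}
    (hz : z ∈ S) (h : Free φ β z) : Free (kflip φ S α β) α z := by
  intro t ht
  rcases flip_cases ht with ⟨ho, heq⟩ | ⟨-, ⟨-, hd⟩ | ⟨hβ, -⟩⟩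
  · -- φ s(z,t) = some α but unflipped: yet both endpoints are in S
    have hb : ∀ w ∈ s(z,t), w ∈ S :=
      bothIn_of_mem hcl hz (Sym2.mem_mk_left _ _) (Or.inl ho)
    rw [flip_eval_α hαβ hb ho] at ht
    exact hαβ (Option.some_injective _ ht).symm
  · exact hαβ hd
  · exact h t hβ

lemma getLast_eq_of_eq {α : Type*} {l₁ l₂ : List α} (h : l₁ = l₂) (h1 : l₁ ≠ [])
    (h2 : l₂ ≠ []) : l₁.getLast h1 = l₂.getLast h2 := by
  subst h; rfl

/-- transfer a fan chain through a flip when `u ∉ S` and `β` does not occur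
on the relevant fan edges. -/
lemma chain_flip_transfer {φ : Sym2 V → Option (Fin K)} {S : Set V} {α β : Fin K} {u : V}
    (hαu : Free φ α u) (huS : u ∉ S) {m : List V}
    (hchain : List.Chain' (fun p q => ∃ d, φ s(u, q) = some d ∧ Free φ d p) m)
    (hβm : ∀ b ∈ m.tail, φ s(u,b) ≠ some β) :
    List.Chain' (fun p q => ∃ d, kflip φ S α β s(u, q) = some d ∧
      Free (kflip φ S α β) d p) m := by
  refine chain'_mem m hchain ?_
  rintro a ha b hb ⟨d, h1, h2⟩
  refine ⟨d, ?_, ?_⟩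
  · rw [flip_eval_of_not_mem huS]; exact h1
  · exact flip_free_other (fun h => hαu b (h ▸ h1)) (fun h => hβm b hb (h ▸ h1)) h2



end VizingSt9

open VizingSt9 in
/-- Edge-coloring update: if `G` has maximum degree `Δ`, `φ` is a
partial proper edge-coloring of `G` with colors `{1, …, Δ+1}` and `e` is an uncolored
edge of `G`, then there is a partial proper edge-coloring `φ'` with the same palette
whose domain is exactly `dom φ ∪ {e}`. -/
theorem stmt_9 {V : Type*} [Fintype V] [DecidableEq V] (G : SimpleGraph V)
    [DecidableRel G.Adj] (Δ : ℕ) (hΔ : G.maxDegree = Δ)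
    (φ : Sym2 V → Option (Fin (Δ + 1))) (hφ : IsPartialProperEdgeColoring G φ)
    (e : Sym2 V) (he : e ∈ G.edgeSet) (hunc : φ e = none) :
    ∃ φ' : Sym2 V → Option (Fin (Δ + 1)), IsPartialProperEdgeColoring G φ' ∧
      ∀ f : Sym2 V, (φ' f).isSome ↔ ((φ f).isSome ∨ f = e) := by
  classical
  revert he hunc
  refine Sym2.inductionOn e ?_
  intro u v he hunc
  have hdeg : ∀ z : V, G.degree z < Δ + 1 := by
    intro z
    have := G.degree_le_maxDegree z
    omega
  have hadjuv : G.Adj u v := G.mem_edgeSet.mp he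
  -- build a maximal fan starting at v
  obtain ⟨r, hadjl, hndl, hchainl, hmax⟩ := maxfan_aux φ u v
    ((G.neighborFinset u \ ([v] : List V).toFinset).card) []
    (by intro z hz; simp at hz; subst hz; exact hadjuv)
    (List.nodup_singleton v) (List.isChain_singleton v) le_rfl
  obtain ⟨α, hα⟩ := freeExists hφ u (hdeg u)
  obtain ⟨β, hβ⟩ := freeExists hφ ((v :: r).getLast (List.cons_ne_nil v r)) (hdeg _)
  by_cases hβu : Free φ β u
  · -- β is free at u as well: rotate the whole fan and color with β
    obtain ⟨φ', h1, h2⟩ := rotcolor u r φ v β hφ hadjl hndl hunc hchainl hβu hβ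
    exact ⟨φ', h1, h2⟩
  · -- β appears at u, say on edge u-w
    rw [Free] at hβu
    push_neg at hβu
    obtain ⟨w, hw⟩ := hβu
    have hadjuw : G.Adj u w := adj_of_some hφ hw
    have hαβ : α ≠ β := fun h => hα w (h ▸ hw)
    have hwl : w ∈ v :: r := by
      by_contra hwl
      exact hmax w β hadjuw hwl hw hβ
    have hwv : w ≠ v := by
      rintro rfl
      rw [hunc] at hw
      cases hw
    obtain ⟨p, q, hlpq⟩ := List.append_of_mem hwl
    have hpne : p ≠ [] := by
      rintro rfl
      simp only [List.nil_append] at hlpq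
      injection hlpq with h1 h2
      exact hwv h1.symm
    have hndpq : (p ++ w :: q).Nodup := hlpq ▸ hndl
    have hdisj := (List.nodup_append'.mp hndpq).2.2
    have hwp : w ∉ p := fun h => hdisj h (List.mem_cons_self (a := w) (l := q))
    have hwq : w ∉ q := (List.nodup_cons.mp (List.nodup_append'.mp hndpq).2.1).1
    -- the predecessor y of w in the fan
    have hymem : p.getLast hpne ∈ p := List.getLast_mem hpne
    have hchsplit := List.isChain_append.mp (by rw [← hlpq]; exact hchainl)
    have hlink : ∃ d, φ s(u, w) = some d ∧ Free φ d (p.getLast hpne) := by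
      refine hchsplit.2.2 (p.getLast hpne) ?_ w ?_
      · rw [List.getLast?_eq_getLast hpne]; rfl
      · rfl
    obtain ⟨d, hd, hdy⟩ := hlink
    have hdβ : d = β := Option.some_injective _ (hd.symm.trans hw)
    rw [hdβ] at hdy
    -- x is the last fan vertex
    have hpqne : p ++ w :: q ≠ [] := by simp
    have hxwq : (v :: r).getLast (List.cons_ne_nil v r) = (w :: q).getLast (List.cons_ne_nil w q) :=
      (getLast_eq_of_eq hlpq (List.cons_ne_nil v r) hpqne).trans
        (List.getLast_append_of_ne_nil (h₁ := hpqne) (List.cons_ne_nil w q))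
    have hxmem : (v :: r).getLast (List.cons_ne_nil v r) ∈ w :: q := by
      rw [hxwq]; exact List.getLast_mem _
    have hxy : (v :: r).getLast (List.cons_ne_nil v r) ≠ p.getLast hpne := by
      intro h
      exact hdisj (h ▸ hymem) hxmem
    have hphead : p.head hpne = v := by
      have h2 := List.head_append_of_ne_nil (l' := w :: q) (l := p) (w₁ := hpqne) hpne
      have h3 : (p ++ w :: q).head hpqne = v := by
        have := getLast_eq_of_eq hlpq (List.cons_ne_nil v r) hpqne  -- dummy to keep context
        clear this
        have h4 : (v :: r).head (List.cons_ne_nil v r) = (p ++ w :: q).head hpqne := by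
          congr 1
        rw [← h4]
        rfl
      rw [h3] at h2
      exact h2.symm
    have hpcons : p = v :: p.tail := by
      rw [← hphead]
      exact (List.cons_head_tail hpne).symm
    -- uniqueness of the β-edge at u
    have hβunique : ∀ b : V, φ s(u, b) = some β → b = w := fun b hb => uniqAt hφ hb hw
    by_cases hyu : ReflTransGen (Rch φ α β) (p.getLast hpne) u
    · -- y is connected to u: flip the component of x and rotate the whole fan
      have hxu : ¬ ReflTransGen (Rch φ α β) ((v :: r).getLast (List.cons_ne_nil v r)) u := by
        intro hxu
        exact hxy (orbit_unique hφ α β hα hβ hdy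
          (haveI : Std.Symm (Rch φ α β) := ⟨Rch_symm⟩; Std.Symm.symm _ _ hxu) (haveI : Std.Symm (Rch φ α β) := ⟨Rch_symm⟩; Std.Symm.symm _ _ hyu))
      set S : Set V := {z | ReflTransGen (Rch φ α β) ((v :: r).getLast (List.cons_ne_nil v r)) z}
        with hS
      have hScl : SClosed φ S α β := fun z t hz hr => ReflTransGen.tail hz hr
      have huS : u ∉ S := hxu
      have hyS : p.getLast hpne ∉ S := fun h => hxu (h.trans hyu)
      have hxS : (v :: r).getLast (List.cons_ne_nil v r) ∈ S := ReflTransGen.refl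
      have hψp : IsPartialProperEdgeColoring G (kflip φ S α β) := flip_proper hφ hαβ hScl
      have hchainψ : List.Chain' (fun a b => ∃ d, kflip φ S α β s(u, b) = some d ∧
          Free (kflip φ S α β) d a) (v :: r) := by
        rw [hlpq]
        refine List.isChain_append.mpr ⟨?_, ?_, ?_⟩
        · refine chain_flip_transfer hα huS hchsplit.1 ?_
          intro b hb hbβ
          exact hwp ((hβunique b hbβ) ▸ (List.mem_of_mem_tail hb))
        · refine chain_flip_transfer hα huS hchsplit.2.1 ?_
          intro b hb hbβ
          exact hwq ((hβunique b hbβ) ▸ hb)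
        · intro a ha b hb
          rw [List.getLast?_eq_getLast hpne, Option.mem_def] at ha
          have haa : a = p.getLast hpne := by injection ha with h; exact h.symm
          simp only [List.head?_cons, Option.mem_def, Option.some.injEq] at hb
          subst hb
          subst haa
          refine ⟨β, ?_, ?_⟩
          · rw [flip_eval_of_not_mem huS]
            exact hw
          · exact flip_free_of_not_mem hyS hdy
      have hψnone : kflip φ S α β s(u,v) = none := by
        rw [flip_eval_of_not_mem huS]; exact hunc
      have hψαu : Free (kflip φ S α β) α u := flip_free_of_not_mem huS hα
      have hψαx : Free (kflip φ S α β) α ((v :: r).getLast (List.cons_ne_nil v r)) :=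
        flip_free_α_of_mem hαβ hScl hxS hβ
      obtain ⟨φ', h1, h2⟩ := rotcolor u r (kflip φ S α β) v α hψp hadjl hndl hψnone
        hchainψ hψαu hψαx
      refine ⟨φ', h1, fun f => ?_⟩
      rw [h2 f, flip_isSome]
    · -- y is not connected to u: flip the component of y and rotate the prefix fan p
      set S : Set V := {z | ReflTransGen (Rch φ α β) (p.getLast hpne) z} with hS
      have hScl : SClosed φ S α β := fun z t hz hr => ReflTransGen.tail hz hr
      have huS : u ∉ S := hyu
      have hyS : p.getLast hpne ∈ S := ReflTransGen.refl
      have hψp : IsPartialProperEdgeColoring G (kflip φ S α β) := flip_proper hφ hαβ hScl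
      have hadjp : ∀ z ∈ v :: p.tail, G.Adj u z := by
        intro z hz
        rw [← hpcons] at hz
        exact hadjl z (hlpq ▸ List.mem_append_left _ hz)
      have hndp : (v :: p.tail).Nodup := by
        rw [← hpcons]
        exact (List.nodup_append'.mp hndpq).1
      have hψnone : kflip φ S α β s(u,v) = none := by
        rw [flip_eval_of_not_mem huS]; exact hunc
      have hchainp : List.Chain' (fun a b => ∃ d, kflip φ S α β s(u, b) = some d ∧
          Free (kflip φ S α β) d a) (v :: p.tail) := by
        rw [← hpcons]
        refine chain_flip_transfer hα huS hchsplit.1 ?_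
        intro b hb hbβ
        exact hwp ((hβunique b hbβ) ▸ (List.mem_of_mem_tail hb))
      have hψαu : Free (kflip φ S α β) α u := flip_free_of_not_mem huS hα
      have hψαy : Free (kflip φ S α β) α ((v :: p.tail).getLast (List.cons_ne_nil _ _)) := by
        rw [getLast_eq_of_eq hpcons.symm _ hpne]
        exact flip_free_α_of_mem hαβ hScl hyS hdy
      obtain ⟨φ', h1, h2⟩ := rotcolor u p.tail (kflip φ S α β) v α hψp hadjp hndp hψnone
        hchainp hψαu hψαy
      refine ⟨φ', h1, fun f => ?_⟩
      rw [h2 f, flip_isSome]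
end

section
/- Every finite simple graph with maximum degree Δ admits a proper (Δ+1)-edge-coloring, i.e., a map φ : E → {1, …, Δ+1} such that any two distinct edges sharing an endpoint receive different colors (Vizing's theorem). -/
set_option linter.unusedSectionVars false

open SimpleGraph

section Vizing

variable {V : Type*} [Fintype V] [DecidableEq V] (G : SimpleGraph V)
  [DecidableRel G.Adj] {Δ : ℕ}

/-- a partial edge coloring is proper -/
def VzProper (c : Sym2 V → Option (Fin (Δ+1))) : Prop :=
  ∀ ⦃u v w : V⦄ ⦃γ : Fin (Δ+1)⦄, G.Adj u v → G.Adj u w →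
    c s(u,v) = some γ → c s(u,w) = some γ → v = w

/-- color γ does not appear on any edge at v -/
def VzMissing (c : Sym2 V → Option (Fin (Δ+1))) (γ : Fin (Δ+1)) (v : V) : Prop :=
  ∀ ⦃w : V⦄, G.Adj v w → c s(v,w) ≠ some γ

variable {G}

lemma vz_exists_missing (hdeg : ∀ v, G.degree v ≤ Δ)
    {c : Sym2 V → Option (Fin (Δ+1))} (v : V) :
    ∃ γ : Fin (Δ+1), VzMissing G c γ v := by
  classical
  by_contra h
  push_neg at h
  -- every color is used at v
  have hused : ∀ γ : Fin (Δ+1), ∃ w, G.Adj v w ∧ c s(v,w) = some γ := by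
    intro γ
    obtain ⟨w, hw⟩ := not_forall.mp (h γ)
    push_neg at hw
    exact ⟨w, hw.1, hw.2⟩
  choose f hf1 hf2 using hused
  have hinj : Function.Injective f := by
    intro γ γ' hγ
    have := hf2 γ
    rw [hγ, hf2 γ'] at this
    exact (Option.some_injective _ this).symm
  have h1 : Fintype.card (Fin (Δ+1)) ≤ G.degree v := by
    rw [← SimpleGraph.card_neighborFinset_eq_degree, ← Fintype.card_coe]
    refine Fintype.card_le_of_injective
      (fun γ => (⟨f γ, by rw [SimpleGraph.mem_neighborFinset]; exact hf1 γ⟩ :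
        (G.neighborFinset v : Finset V))) ?_
    intro a b hab
    exact hinj (by simpa using hab)
  simp only [Fintype.card_fin] at h1
  exact absurd (h1.trans (hdeg v)) (by omega)

section Paths
variable {K : SimpleGraph V}

lemma vz_det (htwo : ∀ ⦃v a b d : V⦄, K.Adj v a → K.Adj v b → K.Adj v d →
      a = b ∨ a = d ∨ b = d) :
    ∀ {x t : V} (p : K.Walk x t), p.IsPath → ∀ {u z : V} (q : K.Walk x u),
      q.IsPath → K.Adj x z → z ∉ p.support → z ∉ q.support →
      t ∈ q.support ∨ u ∈ p.support := by
  intro x t p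
  induction p with
  | nil =>
    intro _ u z q _ _ _ _
    exact Or.inl q.start_mem_support
  | @cons x a t h p ih =>
    intro hp u z q hq hxz hzp hzq
    cases q with
    | nil => exact Or.inr (Walk.start_mem_support _)
    | @cons _ b _ h' q' =>
      have hab : a = b := by
        rcases htwo hxz h h' with h1 | h1 | h1
        · exfalso; rw [h1] at hzp
          exact hzp (by rw [Walk.support_cons]
                        exact List.mem_cons_of_mem _ p.start_mem_support)
        · exfalso; rw [h1] at hzq
          exact hzq (by rw [Walk.support_cons]
                        exact List.mem_cons_of_mem _ q'.start_mem_support)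
        · exact h1
      subst hab
      rw [Walk.cons_isPath_iff] at hp hq
      rcases ih hp.1 q' hq.1 h.symm hp.2 hq.2 with h1 | h1
      · exact Or.inl (by simp [Walk.support_cons, h1])
      · exact Or.inr (by simp [Walk.support_cons, h1])

lemma vz_internal {t : V} :
    ∀ {x u : V} (q : K.Walk x u), q.IsPath → t ∈ q.support → t ≠ x → t ≠ u →
      ∃ a b, a ≠ b ∧ K.Adj t a ∧ K.Adj t b := by
  intro x u q
  induction q with
  | nil => intro _ ht hx _; simp at ht; exact absurd ht hx
  | @cons x v u h q ih =>
    intro hq ht htx htu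
    rw [Walk.support_cons, List.mem_cons] at ht
    rcases ht with ht | ht
    · exact absurd ht htx
    by_cases htv : t = v
    · subst htv
      cases q with
      | nil => exact absurd rfl htu
      | @cons _ w _ h'' q'' =>
        refine ⟨x, w, ?_, h.symm, h''⟩
        intro hxw
        rw [Walk.cons_isPath_iff] at hq
        apply hq.2
        rw [hxw, Walk.support_cons]
        exact List.mem_cons_of_mem _ q''.start_mem_support
    · exact ih ((Walk.cons_isPath_iff _ _).mp hq).1 ht htv htu

lemma vz_threeEnds (htwo : ∀ ⦃v a b d : V⦄, K.Adj v a → K.Adj v b → K.Adj v d →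
      a = b ∨ a = d ∨ b = d)
    {x t u : V}
    (hone_x : ∀ ⦃a b : V⦄, K.Adj x a → K.Adj x b → a = b)
    (hone_t : ∀ ⦃a b : V⦄, K.Adj t a → K.Adj t b → a = b)
    (hone_u : ∀ ⦃a b : V⦄, K.Adj u a → K.Adj u b → a = b)
    (hxt : x ≠ t) (hxu : x ≠ u) (htu : t ≠ u)
    (h1 : K.Reachable x t) (h2 : K.Reachable x u) : False := by
  obtain ⟨w1⟩ := h1
  obtain ⟨w2⟩ := h2
  obtain ⟨p, hp⟩ := w1.toPath
  obtain ⟨q, hq⟩ := w2.toPath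
  cases p with
  | nil => exact hxt rfl
  | @cons _ a _ h p' =>
    cases q with
    | nil => exact hxu rfl
    | @cons _ b _ h' q' =>
      have hab : a = b := hone_x h h'
      subst hab
      rw [Walk.cons_isPath_iff] at hp hq
      rcases vz_det htwo p' hp.1 q' hq.1 h.symm hp.2 hq.2 with hm | hm
      · -- t is internal in cons h' q'
        have ht : t ∈ (Walk.cons h' q').support := by simp [Walk.support_cons, hm]
        obtain ⟨a', b', hne2, ha', hb'⟩ := vz_internal (Walk.cons h' q')
          ((Walk.cons_isPath_iff _ _).mpr hq) ht (Ne.symm hxt) htu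
        exact hne2 (hone_t ha' hb')
      · have ht : u ∈ (Walk.cons h p').support := by simp [Walk.support_cons, hm]
        obtain ⟨a', b', hne, ha', hb'⟩ := vz_internal (Walk.cons h p')
          ((Walk.cons_isPath_iff _ _).mpr hp) ht (Ne.symm hxu) (Ne.symm htu)
        exact hne (hone_u ha' hb')

end Paths

section Ops
variable (G)

/-- assign a color to an edge -/
def vzAssign (c : Sym2 V → Option (Fin (Δ+1))) (e : Sym2 V) (γ : Fin (Δ+1)) :
    Sym2 V → Option (Fin (Δ+1)) :=
  fun e' => if e' = e then some γ else c e'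

/-- the Kempe chain graph for colors α, β -/
def vzChain (c : Sym2 V → Option (Fin (Δ+1))) (α β : Fin (Δ+1)) : SimpleGraph V where
  Adj u v := G.Adj u v ∧ (c s(u,v) = some α ∨ c s(u,v) = some β)
  symm := by
    constructor
    intro u v ⟨h1, h2⟩
    exact ⟨h1.symm, by rewrite [Sym2.eq_swap]; exact h2⟩
  loopless := ⟨fun v h => G.loopless.irrefl v h.1⟩

/-- swap the colors α and β on the Kempe component of x -/
noncomputable def vzSwap (c : Sym2 V → Option (Fin (Δ+1))) (α β : Fin (Δ+1)) (x : V) :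
    Sym2 V → Option (Fin (Δ+1)) := by
  classical
  exact fun e =>
    if ∃ v ∈ e, (vzChain G c α β).Reachable x v then
      (if c e = some α then some β else if c e = some β then some α else c e)
    else c e

variable {G}

lemma vzAssign_proper {c : Sym2 V → Option (Fin (Δ+1))} (hc : VzProper G c)
    {a b : V} {γ : Fin (Δ+1)}
    (hma : VzMissing G c γ a) (hmb : VzMissing G c γ b) :
    VzProper G (vzAssign c s(a,b) γ) := by
  intro u v w δ huv huw h1 h2
  unfold vzAssign at h1 h2
  split_ifs at h1 h2 with e1 e2 e2
  · -- both edges equal s(a,b)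
    rw [← e2] at e1
    rcases Sym2.eq_iff.mp e1 with ⟨-, h3⟩ | ⟨h3, h4⟩
    · exact h3
    · rw [h4, h3]
  · -- s(u,v) = s(a,b), other not
    exfalso
    obtain rfl : γ = δ := by injection h1
    rcases Sym2.eq_iff.mp e1 with ⟨h3, -⟩ | ⟨h3, -⟩
    · subst h3; exact hma huw h2
    · subst h3; exact hmb huw h2
  · exfalso
    obtain rfl : γ = δ := by injection h2
    rcases Sym2.eq_iff.mp e2 with ⟨h3, -⟩ | ⟨h3, -⟩
    · subst h3; exact hma huv h1
    · subst h3; exact hmb huv h1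
  · exact hc huv huw h1 h2

lemma vzAssign_eq {c : Sym2 V → Option (Fin (Δ+1))} {e e' : Sym2 V} {γ : Fin (Δ+1)}
    (h : e' ≠ e) : vzAssign c e γ e' = c e' := by
  unfold vzAssign; rw [if_neg h]

lemma vzAssign_self {c : Sym2 V → Option (Fin (Δ+1))} {e : Sym2 V} {γ : Fin (Δ+1)} :
    vzAssign c e γ e = some γ := by
  unfold vzAssign; rw [if_pos rfl]

section Swap
variable {c : Sym2 V → Option (Fin (Δ+1))} {α β : Fin (Δ+1)} {x : V}

lemma vzSwap_in (hc : VzProper G c) {u v : V} (hu : (vzChain G c α β).Reachable x u)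
    (huv : G.Adj u v) :
    vzSwap G c α β x s(u,v) =
      (if c s(u,v) = some α then some β else if c s(u,v) = some β then some α
        else c s(u,v)) := by
  unfold vzSwap
  rw [if_pos ⟨u, Sym2.mem_mk_left u v, hu⟩]

lemma vzSwap_out (hc : VzProper G c) {u v : V} (hu : ¬ (vzChain G c α β).Reachable x u)
    (huv : G.Adj u v) :
    vzSwap G c α β x s(u,v) = c s(u,v) := by
  unfold vzSwap
  split_ifs with h1 h2 h3
  · exfalso
    obtain ⟨w, hw1, hw2⟩ := h1
    rcases Sym2.mem_iff.mp hw1 with rfl | rfl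
    · exact hu hw2
    · exact hu (hw2.trans (Reachable.symm ⟨Walk.cons ⟨huv, Or.inl h2⟩ Walk.nil⟩))
  · exfalso
    obtain ⟨w, hw1, hw2⟩ := h1
    rcases Sym2.mem_iff.mp hw1 with rfl | rfl
    · exact hu hw2
    · exact hu (hw2.trans (Reachable.symm ⟨Walk.cons ⟨huv, Or.inr h3⟩ Walk.nil⟩))
  · rfl
  · rfl

lemma vzSwap_none {e : Sym2 V} : vzSwap G c α β x e = none ↔ c e = none := by
  unfold vzSwap
  split_ifs with h1 h2 h3 <;> simp_all

lemma vzSwap_proper (hc : VzProper G c) : VzProper G (vzSwap G c α β x) := by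
  intro u v w δ huv huw h1 h2
  by_cases hu : (vzChain G c α β).Reachable x u
  · rw [vzSwap_in hc hu huv] at h1
    rw [vzSwap_in hc hu huw] at h2
    rcases h3 : c s(u,v) with _ | γ1 <;> rcases h4 : c s(u,w) with _ | γ2 <;>
      rw [h3] at h1 <;> rw [h4] at h2 <;> split_ifs at h1 h2 <;>
      simp_all <;> exact hc huv huw (by rw [h3]) (by rw [h4])
  · rw [vzSwap_out hc hu huv] at h1
    rw [vzSwap_out hc hu huw] at h2
    exact hc huv huw h1 h2

lemma vzSwap_missing_out (hc : VzProper G c) {v : V} {γ : Fin (Δ+1)}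
    (hv : ¬ (vzChain G c α β).Reachable x v) (hm : VzMissing G c γ v) :
    VzMissing G (vzSwap G c α β x) γ v := by
  intro w hw
  rw [vzSwap_out hc hv hw]
  exact hm hw

lemma vzSwap_missing_in (hc : VzProper G c) {v : V}
    (hv : (vzChain G c α β).Reachable x v) (hm : VzMissing G c α v) :
    VzMissing G (vzSwap G c α β x) β v := by
  intro w hw
  rw [vzSwap_in hc hv hw]
  split_ifs with h1 h2
  · exact absurd h1 (hm hw)
  · intro h
    have hab : α = β := by injection h
    exact h1 (hab ▸ h2)
  · exact h2

/-- the key finishing step: if x and w miss α resp. β and are not Kempe-connected,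
swap the chain at x and color the edge xw with β. -/
lemma vzFinish (hc : VzProper G c) {w : V} (hxw : G.Adj x w)
    (hnone : c s(x,w) = none) (hα : VzMissing G c α x) (hβ : VzMissing G c β w)
    (hnr : ¬ (vzChain G c α β).Reachable x w) :
    ∃ c' : Sym2 V → Option (Fin (Δ+1)), VzProper G c' ∧
      (∀ e, c' e = none → c e = none ∧ e ≠ s(x,w)) := by
  refine ⟨vzAssign (vzSwap G c α β x) s(x,w) β, ?_, ?_⟩
  · exact vzAssign_proper (vzSwap_proper hc)
      (vzSwap_missing_in hc (Reachable.refl x) hα)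
      (vzSwap_missing_out hc hnr hβ)
  · intro e he
    by_cases h : e = s(x,w)
    · rw [h, vzAssign_self] at he; exact absurd he (by simp)
    · rw [vzAssign_eq h] at he
      exact ⟨vzSwap_none.mp he, h⟩

end Swap
end Ops

section Rot
variable {c : Sym2 V → Option (Fin (Δ+1))} {x : V} {ys : ℕ → V} {n r : ℕ}

/-- rotate the fan `ys 0, …, ys r` at `x`: edge `x-(ys i)` receives the color of
`x-(ys (i+1))`, and `x-(ys r)` becomes uncolored. -/
noncomputable def vzRot (c : Sym2 V → Option (Fin (Δ+1))) (x : V) (ys : ℕ → V) (r : ℕ) :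
    Sym2 V → Option (Fin (Δ+1)) := by
  classical
  exact fun e =>
    if he : ∃ i, i ≤ r ∧ e = s(x, ys i) then
      (if Nat.find he = r then none else c s(x, ys (Nat.find he + 1)))
    else c e

variable (hr : r ≤ n)
  (hinj : ∀ i j, i ≤ n → j ≤ n → ys i = ys j → i = j)
  (hadj : ∀ i, i ≤ n → G.Adj x (ys i))

include hr hinj hadj

lemma vzRot_fan {i : ℕ} (hi : i ≤ r) :
    vzRot c x ys r s(x, ys i) = if i = r then none else c s(x, ys (i+1)) := by
  classical
  have hex : ∃ j, j ≤ r ∧ s(x, ys i) = s(x, ys j) := ⟨i, hi, rfl⟩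
  unfold vzRot
  rw [dif_pos hex]
  have hfind : Nat.find hex = i := by
    have h1 := Nat.find_spec hex
    have h2 : ys i = ys (Nat.find hex) := by
      rcases Sym2.eq_iff.mp h1.2 with ⟨-, h⟩ | ⟨hx, -⟩
      · exact h
      · exact absurd hx (hadj _ (le_trans h1.1 hr)).ne
    exact hinj _ _ (le_trans h1.1 hr) (le_trans hi hr) h2.symm
  rw [hfind]

omit hr hinj hadj in
lemma vzRot_nonfan {e : Sym2 V} (he : ∀ i, i ≤ r → e ≠ s(x, ys i)) :
    vzRot c x ys r e = c e := by
  classical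
  unfold vzRot
  rw [dif_neg]
  rintro ⟨i, hi, hei⟩
  exact he i hi hei

omit hr hinj hadj in
lemma vzRot_notx {e : Sym2 V} (he : x ∉ e) : vzRot c x ys r e = c e := by
  apply vzRot_nonfan
  intro i _ hei
  exact he (hei ▸ Sym2.mem_mk_left x (ys i))

variable (hc : VzProper G c) (h0 : c s(x, ys 0) = none)
  (hfan : ∀ i, i < n → ∃ γ, c s(x, ys (i+1)) = some γ ∧ VzMissing G c γ (ys i))

include hc hfan in
lemma vzRot_x_val {v : V} {δ : Fin (Δ+1)} (hva : G.Adj x v)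
    (hv : vzRot c x ys r s(x,v) = some δ) :
    ∃ v', G.Adj x v' ∧ c s(x,v') = some δ ∧
      ((∃ i, i < r ∧ v = ys i ∧ v' = ys (i+1)) ∨
        ((∀ i, i ≤ r → v ≠ ys i) ∧ v' = v)) := by
  by_cases hfanv : ∃ i, i ≤ r ∧ v = ys i
  · obtain ⟨i, hi, rfl⟩ := hfanv
    rw [vzRot_fan hr hinj hadj hi] at hv
    split_ifs at hv with hir
    have hilt : i < r := lt_of_le_of_ne hi hir
    exact ⟨ys (i+1), hadj _ (by omega), hv, Or.inl ⟨i, hilt, rfl, rfl⟩⟩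
  · push_neg at hfanv
    rw [vzRot_nonfan (fun i hi hei => hfanv i hi (Sym2.congr_right.mp hei))] at hv
    exact ⟨v, hva, hv, Or.inr ⟨hfanv, rfl⟩⟩

include hc h0 hfan in
lemma vzRot_proper : VzProper G (vzRot c x ys r) := by
  classical
  have hnotx : ∀ {a b : V}, a ≠ x → b ≠ x → vzRot c x ys r s(a,b) = c s(a,b) := by
    intro a b ha hb
    apply vzRot_notx
    rw [Sym2.mem_iff]
    push_neg
    exact ⟨fun h => ha h.symm, fun h => hb h.symm⟩
  intro u v w δ huv huw h1 h2
  by_cases hux : u = x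
  · subst hux
    obtain ⟨v', hv'a, hv'c, hv'⟩ := vzRot_x_val hr hinj hadj hc hfan huv h1
    obtain ⟨w', hw'a, hw'c, hw'⟩ := vzRot_x_val hr hinj hadj hc hfan huw h2
    have hvw : v' = w' := hc hv'a hw'a hv'c hw'c
    rcases hv' with ⟨i, hi, rfl, rfl⟩ | ⟨hnf, rfl⟩ <;>
      rcases hw' with ⟨j, hj, rfl, rfl⟩ | ⟨hnf', rfl⟩
    · have hij : i + 1 = j + 1 := hinj _ _ (by omega) (by omega) hvw
      have hij' : i = j := by omega
      rw [hij']
    · exact absurd hvw.symm (hnf' (i+1) (by omega))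
    · exact absurd hvw (hnf (j+1) (by omega))
    · exact hvw
  · have main : ∀ {a b : V}, G.Adj u a → G.Adj u b → a = x → b ≠ x →
        vzRot c x ys r s(u,a) = some δ → vzRot c x ys r s(u,b) = some δ → False := by
      intro a b hua hub hax hbx ha hb
      rw [hax] at ha hua
      have hb' : c s(u, b) = some δ := by
        rwa [hnotx hux hbx] at hb
      by_cases hu : ∃ i, i ≤ r ∧ u = ys i
      · obtain ⟨i, hi, rfl⟩ := hu
        rw [show s(ys i, x) = s(x, ys i) from Sym2.eq_swap,
          vzRot_fan hr hinj hadj hi] at ha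
        split_ifs at ha with hir
        obtain ⟨γ, hγ1, hγ2⟩ := hfan i (by omega)
        rw [hγ1] at ha
        obtain rfl : γ = δ := by injection ha
        exact hγ2 hub hb'
      · push_neg at hu
        rw [show s(u, x) = s(x, u) from Sym2.eq_swap,
          vzRot_nonfan (fun i hi hei => hu i hi (Sym2.congr_right.mp hei)),
          show s(x, u) = s(u, x) from Sym2.eq_swap] at ha
        exact hbx (hc hua hub ha hb').symm
    by_cases hvx : v = x <;> by_cases hwx : w = x
    · rw [hvx, hwx]
    · exact absurd (main huv huw hvx hwx h1 h2) not_false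
    · exact absurd (main huw huv hwx hvx h2 h1) not_false
    · have h1' : c s(u, v) = some δ := by rwa [hnotx hux hvx] at h1
      have h2' : c s(u, w) = some δ := by rwa [hnotx hux hwx] at h2
      exact hc huv huw h1' h2'

include hfan in
lemma vzRot_none_char {e : Sym2 V} (he : vzRot c x ys r e = none) :
    e = s(x, ys r) ∨ (c e = none ∧ e ≠ s(x, ys 0)) := by
  by_cases hf : ∃ i, i ≤ r ∧ e = s(x, ys i)
  · obtain ⟨i, hi, rfl⟩ := hf
    rw [vzRot_fan hr hinj hadj hi] at he
    split_ifs at he with hir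
    · rw [hir]; exact Or.inl rfl
    · exfalso
      obtain ⟨γ, hγ1, -⟩ := hfan i (by omega)
      rw [hγ1] at he
      cases he
  · push_neg at hf
    rw [vzRot_nonfan (fun i hi => hf i hi)] at he
    exact Or.inr ⟨he, hf 0 (Nat.zero_le _)⟩

lemma vzRot_uncolored_r : vzRot c x ys r s(x, ys r) = none := by
  rw [vzRot_fan hr hinj hadj le_rfl, if_pos rfl]

include hc hfan in
lemma vzRot_missing_x {γ : Fin (Δ+1)} (hm : VzMissing G c γ x) :
    VzMissing G (vzRot c x ys r) γ x := by
  intro w hw hcon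
  obtain ⟨w', hw'a, hw'c, -⟩ := vzRot_x_val hr hinj hadj hc hfan hw hcon
  exact hm hw'a hw'c

lemma vzRot_missing_r {γ : Fin (Δ+1)} (hm : VzMissing G c γ (ys r)) :
    VzMissing G (vzRot c x ys r) γ (ys r) := by
  intro w hw
  by_cases hwx : w = x
  · rw [hwx, show s(ys r, x) = s(x, ys r) from Sym2.eq_swap,
      vzRot_uncolored_r hr hinj hadj]
    simp
  · rw [vzRot_notx (by
      rw [Sym2.mem_iff]
      push_neg
      exact ⟨(hadj r hr).ne, fun h => hwx h.symm⟩)]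
    exact hm hw

include hfan in
lemma vzRot_chain_eq {α β : Fin (Δ+1)}
    (hno : ∀ i, i ≤ r → c s(x, ys i) ≠ some α ∧ c s(x, ys i) ≠ some β) :
    vzChain G (vzRot c x ys r) α β = vzChain G c α β := by
  ext u v
  show G.Adj u v ∧ _ ↔ G.Adj u v ∧ _
  refine and_congr_right fun huv => ?_
  by_cases hf : ∃ i, i ≤ r ∧ s(u,v) = s(x, ys i)
  · obtain ⟨i, hi, hei⟩ := hf
    rw [hei, vzRot_fan hr hinj hadj hi]
    constructor
    · rintro (h | h) <;> split_ifs at h with hir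
      · exact absurd h (hno (i+1) (by omega)).1
      · exact absurd h (hno (i+1) (by omega)).2
    · rintro (h | h)
      · exact absurd h (hno i hi).1
      · exact absurd h (hno i hi).2
  · push_neg at hf
    rw [vzRot_nonfan (fun i hi => hf i hi)]

end Rot

section Chain
variable {c : Sym2 V → Option (Fin (Δ+1))} {α β : Fin (Δ+1)}

lemma vzChain_comm : vzChain G c α β = vzChain G c β α := by
  ext u v
  exact and_congr_right fun _ => or_comm

lemma vzChain_two (hc : VzProper G c) :
    ∀ ⦃v a b d : V⦄, (vzChain G c α β).Adj v a → (vzChain G c α β).Adj v b →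
      (vzChain G c α β).Adj v d → a = b ∨ a = d ∨ b = d := by
  rintro v a b d ⟨ha, h1 | h1⟩ ⟨hb, h2 | h2⟩ ⟨hd, h3 | h3⟩
  · exact Or.inl (hc ha hb h1 h2)
  · exact Or.inl (hc ha hb h1 h2)
  · exact Or.inr (Or.inl (hc ha hd h1 h3))
  · exact Or.inr (Or.inr (hc hb hd h2 h3))
  · exact Or.inr (Or.inr (hc hb hd h2 h3))
  · exact Or.inr (Or.inl (hc ha hd h1 h3))
  · exact Or.inl (hc ha hb h1 h2)
  · exact Or.inl (hc ha hb h1 h2)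

lemma vzChain_one (hc : VzProper G c) {v : V} (hm : VzMissing G c α v) :
    ∀ ⦃a b : V⦄, (vzChain G c α β).Adj v a → (vzChain G c α β).Adj v b → a = b := by
  rintro a b ⟨ha, h1 | h1⟩ ⟨hb, h2 | h2⟩
  · exact absurd h1 (hm ha)
  · exact absurd h1 (hm ha)
  · exact absurd h2 (hm hb)
  · exact hc ha hb h1 h2

lemma vzChain_one' (hc : VzProper G c) {v : V} (hm : VzMissing G c β v) :
    ∀ ⦃a b : V⦄, (vzChain G c α β).Adj v a → (vzChain G c α β).Adj v b → a = b := by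
  rw [vzChain_comm]
  exact vzChain_one hc hm

end Chain

section Fan
variable {c : Sym2 V → Option (Fin (Δ+1))}

lemma vzFanStep (hdeg : ∀ v, G.degree v ≤ Δ)
    (hc : VzProper G c) {x y0 : V} {α : Fin (Δ+1)} (hα : VzMissing G c α x)
    (h0 : c s(x, y0) = none) (fuel : ℕ) :
    ∀ (n : ℕ) (ys : ℕ → V), ys 0 = y0 → Δ ≤ n + fuel →
      (∀ i j, i ≤ n → j ≤ n → ys i = ys j → i = j) →
      (∀ i, i ≤ n → G.Adj x (ys i)) →
      (∀ i, i < n → ∃ γ, c s(x, ys (i+1)) = some γ ∧ VzMissing G c γ (ys i)) →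
      ∃ c' : Sym2 V → Option (Fin (Δ+1)),
        VzProper G c' ∧ ∀ e, c' e = none → c e = none ∧ e ≠ s(x, y0) := by
  induction fuel with
  | zero =>
    intro n ys hys0 hfuel hinj hadj hfan
    exfalso
    have hcard : n + 1 ≤ G.degree x := by
      rw [← SimpleGraph.card_neighborFinset_eq_degree]
      calc n + 1 = (Finset.range (n+1)).card := by simp
        _ ≤ (G.neighborFinset x).card := Finset.card_le_card_of_injOn ys
            (fun i hi => by
              rw [Finset.mem_coe, SimpleGraph.mem_neighborFinset]
              exact hadj i (by simpa [Nat.lt_succ_iff] using hi))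
            (fun i hi j hj hij => hinj i j
              (by simpa [Nat.lt_succ_iff] using hi)
              (by simpa [Nat.lt_succ_iff] using hj) hij)
    have := hdeg x
    omega
  | succ f ih =>
    intro n ys hys0 hfuel hinj hadj hfan
    have h0' : c s(x, ys 0) = none := by rw [hys0]; exact h0
    obtain ⟨β, hβ⟩ := vz_exists_missing hdeg (ys n)
    by_cases hβx : VzMissing G c β x
    · -- success: rotate the whole fan and color the last edge β
      have hprop : VzProper G (vzRot c x ys n) :=
        vzRot_proper le_rfl hinj hadj hc h0' hfan
      have hmx : VzMissing G (vzRot c x ys n) β x :=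
        vzRot_missing_x le_rfl hinj hadj hc hfan hβx
      have hmr : VzMissing G (vzRot c x ys n) β (ys n) :=
        vzRot_missing_r le_rfl hinj hadj hβ
      refine ⟨vzAssign (vzRot c x ys n) s(x, ys n) β,
        vzAssign_proper hprop hmx hmr, ?_⟩
      intro e he
      by_cases hes : e = s(x, ys n)
      · rw [hes, vzAssign_self] at he; cases he
      · rw [vzAssign_eq hes] at he
        rcases vzRot_none_char le_rfl hinj hadj hfan he with h | h
        · exact absurd h hes
        · rw [← hys0]; exact h
    · -- β is used at x, on the edge x-z
      have hzex : ∃ z, G.Adj x z ∧ c s(x,z) = some β := by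
        unfold VzMissing at hβx
        push_neg at hβx
        obtain ⟨w, hw1, hw2⟩ := hβx
        exact ⟨w, hw1, hw2⟩
      obtain ⟨z, hzadj, hzc⟩ := hzex
      by_cases hz : ∃ j, j ≤ n ∧ ys j = z
      · -- z is in the fan : Kempe chain argument
        obtain ⟨j, hj, hjz⟩ := hz
        cases j with
        | zero =>
          rw [← hjz, h0'] at hzc
          cases hzc
        | succ p =>
          have hpn : p < n := by omega
          have hzc' : c s(x, ys (p+1)) = some β := by rw [hjz]; exact hzc
          have hp1n : p + 1 ≠ n := by
            intro h
            apply hβ (hadj n le_rfl).symm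
            rw [Sym2.eq_swap, ← h]
            exact hzc'
          obtain ⟨γ, hγ1, hγ2⟩ := hfan p hpn
          have hγβ : γ = β := by
            have h := hγ1.symm.trans hzc'
            injection h
          rw [hγβ] at hγ2
          have hαβ : α ≠ β := fun h => hβx (h ▸ hα)
          by_cases hreach : (vzChain G c α β).Reachable x (ys p)
          · -- case B: rotate the whole fan, swap the chain at x, color x-(ys n)
            have hprop : VzProper G (vzRot c x ys n) :=
              vzRot_proper le_rfl hinj hadj hc h0' hfan
            have hmx : VzMissing G (vzRot c x ys n) α x :=
              vzRot_missing_x le_rfl hinj hadj hc hfan hα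
            have hmr : VzMissing G (vzRot c x ys n) β (ys n) :=
              vzRot_missing_r le_rfl hinj hadj hβ
            have hun : vzRot c x ys n s(x, ys n) = none :=
              vzRot_uncolored_r le_rfl hinj hadj
            have hmp1 : VzMissing G (vzRot c x ys n) β (ys (p+1)) := by
              intro w hw hcon
              by_cases hwx : w = x
              · rw [hwx, Sym2.eq_swap,
                  vzRot_fan le_rfl hinj hadj (by omega : p+1 ≤ n), if_neg hp1n] at hcon
                have h1 := hc (hadj (p+2) (by omega)) (hadj (p+1) (by omega)) hcon hzc'
                have h2 := hinj (p+2) (p+1) (by omega) (by omega) h1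
                omega
              · rw [vzRot_notx (by
                  rw [Sym2.mem_iff]
                  push_neg
                  exact ⟨(hadj (p+1) (by omega)).ne, fun h => hwx h.symm⟩)] at hcon
                have hx2 : c s(ys (p+1), x) = some β := by
                  rw [Sym2.eq_swap]; exact hzc'
                exact hwx (hc hw (hadj (p+1) (by omega)).symm hcon hx2)
            have hnr : ¬ (vzChain G (vzRot c x ys n) α β).Reachable x (ys n) := by
              intro hr2
              have hstep : (vzChain G (vzRot c x ys n) α β).Adj x (ys p) := by
                refine ⟨hadj p (by omega), Or.inr ?_⟩
                rw [vzRot_fan le_rfl hinj hadj (by omega : p ≤ n),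
                  if_neg (by omega : p ≠ n)]
                exact hzc'
              have hru : (vzChain G (vzRot c x ys n) α β).Reachable x (ys (p+1)) := by
                obtain ⟨wk⟩ := hreach
                obtain ⟨pp, hpath⟩ := wk.toPath
                obtain ⟨v1, hadj1, q, rfl⟩ :=
                  Walk.exists_eq_cons_of_ne (hadj p (by omega)).ne pp
                have hv1 : v1 = ys (p+1) := by
                  rcases hadj1.2 with h | h
                  · exact absurd h (hα hadj1.1)
                  · exact hc hadj1.1 (hadj (p+1) (by omega)) h hzc'
                subst hv1
                have hxq : x ∉ q.support := ((Walk.cons_isPath_iff _ _).mp hpath).2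
                have htrans : ∀ e ∈ q.edges, e ∈ (vzChain G (vzRot c x ys n) α β).edgeSet := by
                  intro e
                  refine Sym2.ind (fun a b hab => ?_) e
                  have ha : a ∈ q.support := q.fst_mem_support_of_mem_edges hab
                  have hin : (vzChain G c α β).Adj a b := q.adj_of_mem_edges hab
                  refine (vzChain G (vzRot c x ys n) α β).mem_edgeSet.mpr ⟨hin.1, ?_⟩
                  rw [vzRot_notx (by
                    rw [Sym2.mem_iff]
                    push_neg
                    exact ⟨fun h => hxq (h ▸ ha),
                      fun h => hxq (h ▸ q.snd_mem_support_of_mem_edges hab)⟩)]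
                  exact hin.2
                have hq2 : (vzChain G (vzRot c x ys n) α β).Reachable (ys (p+1)) (ys p) :=
                  ⟨q.transfer _ htrans⟩
                exact hstep.reachable.trans hq2.symm
              exact vz_threeEnds (vzChain_two hprop) (vzChain_one hprop hmx)
                (vzChain_one' hprop hmr) (vzChain_one' hprop hmp1)
                (hadj n le_rfl).ne (hadj (p+1) (by omega)).ne
                (fun h => hp1n (hinj n (p+1) le_rfl (by omega) h).symm)
                hr2 hru
            obtain ⟨c3, hc3p, hc3⟩ := vzFinish hprop (hadj n le_rfl) hun hmx hmr hnr
            refine ⟨c3, hc3p, fun e he => ?_⟩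
            obtain ⟨he2, hne⟩ := hc3 e he
            rcases vzRot_none_char le_rfl hinj hadj hfan he2 with h | h
            · exact absurd h hne
            · rw [← hys0]; exact h
          · -- case A: rotate the fan only up to p, swap the chain at x, color x-(ys p)
            have hpn' : p ≤ n := by omega
            have hprop : VzProper G (vzRot c x ys p) :=
              vzRot_proper hpn' hinj hadj hc h0' hfan
            have hmx : VzMissing G (vzRot c x ys p) α x :=
              vzRot_missing_x hpn' hinj hadj hc hfan hα
            have hmr : VzMissing G (vzRot c x ys p) β (ys p) :=
              vzRot_missing_r hpn' hinj hadj hγ2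
            have hun : vzRot c x ys p s(x, ys p) = none :=
              vzRot_uncolored_r hpn' hinj hadj
            have hnr : ¬ (vzChain G (vzRot c x ys p) α β).Reachable x (ys p) := by
              rw [vzRot_chain_eq hpn' hinj hadj hfan (fun i hi => ?_)]
              · exact hreach
              · refine ⟨hα (hadj i (by omega)), fun hcon => ?_⟩
                have h1 := hc (hadj i (by omega)) (hadj (p+1) (by omega)) hcon hzc'
                have h2 := hinj i (p+1) (by omega) (by omega) h1
                omega
            obtain ⟨c3, hc3p, hc3⟩ := vzFinish hprop (hadj p hpn') hun hmx hmr hnr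
            refine ⟨c3, hc3p, fun e he => ?_⟩
            obtain ⟨he2, hne⟩ := hc3 e he
            rcases vzRot_none_char hpn' hinj hadj hfan he2 with h | h
            · exact absurd h hne
            · rw [← hys0]; exact h
      · -- z is new: extend the fan
        push_neg at hz
        refine ih (n+1) (fun i => if i = n+1 then z else ys i) ?_ (by omega) ?_ ?_ ?_
        · show (if 0 = n+1 then z else ys 0) = y0
          rw [if_neg (by omega : ¬ 0 = n+1)]
          exact hys0
        · intro i j hi hj hij
          have hij' : (if i = n + 1 then z else ys i) = (if j = n + 1 then z else ys j) := hij
          by_cases hi1 : i = n+1 <;> by_cases hj1 : j = n+1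
          · rw [hi1, hj1]
          · rw [if_pos hi1, if_neg hj1] at hij'
            exact absurd hij'.symm (hz j (by omega))
          · rw [if_neg hi1, if_pos hj1] at hij'
            exact absurd hij' (hz i (by omega))
          · rw [if_neg hi1, if_neg hj1] at hij'
            exact hinj i j (by omega) (by omega) hij'
        · intro i hi
          show G.Adj x (if i = n + 1 then z else ys i)
          by_cases hi1 : i = n+1
          · rw [if_pos hi1]; exact hzadj
          · rw [if_neg hi1]; exact hadj i (by omega)
        · intro i hi
          show ∃ γ, c s(x, if i + 1 = n + 1 then z else ys (i+1)) = some γ ∧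
            VzMissing G c γ (if i = n + 1 then z else ys i)
          by_cases hi1 : i = n
          · rw [if_pos (by omega : i + 1 = n + 1), if_neg (by omega : ¬ i = n + 1), hi1]
            exact ⟨β, hzc, hβ⟩
          · have hilt : i < n := by omega
            obtain ⟨γ, hγa, hγb⟩ := hfan i hilt
            rw [if_neg (by omega : ¬ i+1 = n+1), if_neg (by omega : ¬ i = n+1)]
            exact ⟨γ, hγa, hγb⟩

lemma vzExtend (hc : VzProper G c) (hdeg : ∀ v, G.degree v ≤ Δ) {x y0 : V}
    (hxy : G.Adj x y0) (h0 : c s(x, y0) = none) :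
    ∃ c' : Sym2 V → Option (Fin (Δ+1)),
      VzProper G c' ∧ ∀ e, c' e = none → c e = none ∧ e ≠ s(x, y0) := by
  obtain ⟨α, hα⟩ := vz_exists_missing hdeg x
  refine vzFanStep hdeg hc hα h0 Δ 0 (fun _ => y0) rfl (by omega) ?_ ?_ ?_
  · intro i j hi hj _
    omega
  · intro i _
    exact hxy
  · intro i hi
    omega

end Fan

section Main

lemma vzAll (hdeg : ∀ v, G.degree v ≤ Δ) :
    ∀ (N : ℕ) (c : Sym2 V → Option (Fin (Δ+1))), VzProper G c →
      (G.edgeFinset.filter (fun e => c e = none)).card ≤ N →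
      ∃ c' : Sym2 V → Option (Fin (Δ+1)),
        VzProper G c' ∧ ∀ e ∈ G.edgeSet, c' e ≠ none := by
  intro N
  induction N with
  | zero =>
    intro c hc hcard
    refine ⟨c, hc, fun e he hn => ?_⟩
    have hmem : e ∈ G.edgeFinset.filter (fun e => c e = none) := by
      rw [Finset.mem_filter, SimpleGraph.mem_edgeFinset]
      exact ⟨he, hn⟩
    rw [Finset.card_eq_zero.mp (Nat.le_zero.mp hcard)] at hmem
    exact absurd hmem (Finset.notMem_empty e)
  | succ N ihN =>
    intro c hc hcard
    by_cases hall : ∀ e ∈ G.edgeSet, c e ≠ none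
    · exact ⟨c, hc, hall⟩
    · push_neg at hall
      obtain ⟨e0, he0, hnone⟩ := hall
      revert he0 hnone
      refine Sym2.ind (fun x y0 he0 hnone => ?_) e0
      have hxy : G.Adj x y0 := G.mem_edgeSet.mp he0
      obtain ⟨c', hc', hsub⟩ := vzExtend hc hdeg hxy hnone
      refine ihN c' hc' ?_
      have hmem : s(x,y0) ∈ G.edgeFinset.filter (fun e => c e = none) := by
        rw [Finset.mem_filter, SimpleGraph.mem_edgeFinset]
        exact ⟨he0, hnone⟩
      have hsubset : (G.edgeFinset.filter fun e => c' e = none) ⊆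
          (G.edgeFinset.filter fun e => c e = none).erase s(x,y0) := by
        intro e he
        rw [Finset.mem_filter] at he
        obtain ⟨h1, h2⟩ := hsub e he.2
        rw [Finset.mem_erase, Finset.mem_filter]
        exact ⟨h2, he.1, h1⟩
      have := Finset.card_le_card hsubset
      rw [Finset.card_erase_of_mem hmem] at this
      omega

end Main
end Vizing

/-- **Vizing's theorem.** Every finite simple graph with maximum degree
`Δ` admits a proper `(Δ+1)`-edge-coloring: a map from edges to `Δ+1` colors such that
distinct edges sharing an endpoint receive different colors. -/
theorem stmt_10 {V : Type*} [Fintype V] [DecidableEq V] (G : SimpleGraph V)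
    [DecidableRel G.Adj] (Δ : ℕ) (hΔ : G.maxDegree = Δ) :
    ∃ φ : Sym2 V → Fin (Δ + 1),
      ∀ e₁ ∈ G.edgeSet, ∀ e₂ ∈ G.edgeSet,
        e₁ ≠ e₂ → (∃ x, x ∈ e₁ ∧ x ∈ e₂) → φ e₁ ≠ φ e₂ := by
  classical
  have hdeg : ∀ v, G.degree v ≤ Δ := fun v => hΔ ▸ G.degree_le_maxDegree v
  have hproper0 : VzProper G (fun _ : Sym2 V => (none : Option (Fin (Δ+1)))) := by
    intro u v w γ _ _ h1 _
    cases h1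
  obtain ⟨c, hc, hall⟩ := vzAll hdeg
    ((G.edgeFinset.filter (fun e => (fun _ : Sym2 V => (none : Option (Fin (Δ+1)))) e = none)).card)
    (fun _ => none) hproper0 le_rfl
  refine ⟨fun e => (c e).getD ⟨0, Nat.succ_pos Δ⟩, ?_⟩
  intro e1 he1 e2 he2 hne hex
  obtain ⟨v, hv1, hv2⟩ := hex
  obtain ⟨a, rfl⟩ := Sym2.mem_iff_exists.mp hv1
  obtain ⟨b, rfl⟩ := Sym2.mem_iff_exists.mp hv2
  have ha : G.Adj v a := G.mem_edgeSet.mp he1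
  have hb : G.Adj v b := G.mem_edgeSet.mp he2
  obtain ⟨γ1, h1⟩ := Option.ne_none_iff_exists'.mp (hall _ he1)
  obtain ⟨γ2, h2⟩ := Option.ne_none_iff_exists'.mp (hall _ he2)
  simp only [h1, h2, Option.getD_some]
  intro heq
  subst heq
  exact hne (congrArg (fun w => s(v, w)) (hc ha hb h1 h2))
end

section
/- Let G be a finite simple graph with maximum degree Δ ≥ 1 and set p = ⌈Δ/2⌉. Then the edge set of G can be partitioned into p sets E_1, …, E_p such that each subgraph G_i = (V, E_i) has maximum degree at most 2, and the sum of the maximum degrees satisfies Δ ≤ Σ_{i=1}^{p} Δ(G_i) ≤ Δ + 1. -/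
set_option linter.unusedSectionVars false
set_option maxHeartbeats 1000000
open Finset

namespace Stmt12

variable {V : Type*} [Fintype V] [DecidableEq V]

namespace Sym2

abbrev mk {α : Type*} (q : α × α) : _root_.Sym2 α := Quot.mk (_root_.Sym2.Rel α) q

theorem mk_prod_swap_eq {α : Type*} {q : α × α} : mk q.swap = mk q := by
  unfold mk; exact Quot.sound (_root_.Sym2.Rel.swap _ _)

theorem mk_eq_mk_iff {α : Type*} {p q : α × α} : mk p = mk q ↔ p = q ∨ p = q.swap := by
  unfold mk; exact _root_.Sym2.mk_eq_mk_iff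

end Sym2

def outd (A : Finset (V × V)) (v : V) : ℕ := #(univ.filter fun w => (v, w) ∈ A)
def ind (A : Finset (V × V)) (v : V) : ℕ := #(univ.filter fun w => (w, v) ∈ A)
def imb (A : Finset (V × V)) (v : V) : ℤ := (outd A v : ℤ) - ind A v
def pot (A : Finset (V × V)) : ℤ := ∑ v, (imb A v) ^ 2
def IsOrient (S : Finset (Sym2 V)) (A : Finset (V × V)) : Prop :=
  A.image Sym2.mk = S ∧ ∀ q ∈ A, Prod.swap q ∉ A ∧ q.1 ≠ q.2

theorem pot_nonneg (A : Finset (V × V)) : 0 ≤ pot A :=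
  Finset.sum_nonneg fun v _ => sq_nonneg _

theorem outd_eq_card_filter (A : Finset (V × V)) (y : V) :
    outd A y = #(A.filter fun q => q.1 = y) := by
  rw [outd]
  apply Finset.card_bij (fun w _ => (y, w))
  · intro w hw
    simp only [mem_filter, mem_univ, true_and] at hw ⊢
    exact ⟨hw, by simp⟩
  · intro a ha b hb hab
    simpa using congrArg Prod.snd hab
  · intro q hq
    simp only [mem_filter, mem_univ, true_and] at hq
    exact ⟨q.2, by simp only [mem_filter, mem_univ, true_and]; rw [← hq.2]; exact hq.1, by
      rw [← hq.2]⟩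

theorem ind_eq_card_filter (A : Finset (V × V)) (y : V) :
    ind A y = #(A.filter fun q => q.2 = y) := by
  rw [ind]
  apply Finset.card_bij (fun w _ => (w, y))
  · intro w hw
    simp only [mem_filter, mem_univ, true_and] at hw ⊢
    exact ⟨hw, by simp⟩
  · intro a ha b hb hab
    simpa using congrArg Prod.fst hab
  · intro q hq
    simp only [mem_filter, mem_univ, true_and] at hq
    exact ⟨q.1, by simp only [mem_filter, mem_univ, true_and]; rw [← hq.2]; exact hq.1, by
      rw [← hq.2]⟩

/-- reverse all arcs -/
theorem mem_rev {A : Finset (V × V)} {q : V × V} :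
    q ∈ A.image Prod.swap ↔ Prod.swap q ∈ A := by
  simp only [mem_image]
  constructor
  · rintro ⟨r, hr, rfl⟩; simpa using hr
  · intro h; exact ⟨Prod.swap q, h, by simp⟩

theorem isOrient_rev {S : Finset (Sym2 V)} {A : Finset (V × V)} (hA : IsOrient S A) :
    IsOrient S (A.image Prod.swap) := by
  obtain ⟨him, hp⟩ := hA
  constructor
  · rw [Finset.image_image, ← him]
    apply Finset.image_congr
    intro q _
    exact Sym2.mk_prod_swap_eq
  · intro q hq
    rw [mem_rev] at hq
    obtain ⟨h1, h2⟩ := hp _ hq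
    constructor
    · rw [mem_rev]; simpa using h1
    · simp only [Prod.fst_swap, Prod.snd_swap] at h2 ⊢
      exact fun h => h2 h.symm

theorem outd_rev (A : Finset (V × V)) (y : V) : outd (A.image Prod.swap) y = ind A y := by
  unfold outd ind
  congr 1
  apply Finset.filter_congr
  intro w _
  simp only [mem_rev, Prod.swap_prod_mk]

theorem ind_rev (A : Finset (V × V)) (y : V) : ind (A.image Prod.swap) y = outd A y := by
  unfold outd ind
  congr 1
  apply Finset.filter_congr
  intro w _
  simp only [mem_rev, Prod.swap_prod_mk]

theorem imb_rev (A : Finset (V × V)) (y : V) : imb (A.image Prod.swap) y = - imb A y := by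
  unfold imb; rw [outd_rev, ind_rev]; ring

theorem pot_rev (A : Finset (V × V)) : pot (A.image Prod.swap) = pot A := by
  unfold pot
  apply Finset.sum_congr rfl
  intro y _
  rw [imb_rev]; ring


variable {V : Type*} [Fintype V] [DecidableEq V]

/-- a directed trail in `A` from `a` to `b`, recorded as the list of its arcs. -/
inductive DTrail (A : Finset (V × V)) : V → V → List (V × V) → Prop
  | nil (a : V) : DTrail A a a []
  | cons {a b c : V} {l : List (V × V)} (hab : (a, b) ∈ A) (h : DTrail A b c l) :
      DTrail A a c ((a, b) :: l)

theorem DTrail.mem_arcs {A : Finset (V × V)} {a b : V} {l : List (V × V)}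
    (h : DTrail A a b l) : ∀ q ∈ l, q ∈ A := by
  induction h with
  | nil => simp
  | cons hab h ih =>
      intro q hq
      rcases List.mem_cons.mp hq with rfl | hq
      · exact hab
      · exact ih q hq

theorem DTrail.count (h : DTrail (V := V) A a b l) (y : V) :
    ((l.filter fun q => q.1 = y).length : ℤ) - ((l.filter fun q => q.2 = y).length : ℤ)
      = (if a = y then 1 else 0) - (if b = y then 1 else 0) := by
  induction h with
  | nil => simp
  | @cons a b c l hab h ih =>
      by_cases h1 : a = y <;> by_cases h2 : b = y <;>
        simp only [List.filter_cons, h1, h2, if_true, if_false, decide_eq_true_eq] <;>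
        simp_all <;> omega

theorem DTrail.append_split {A : Finset (V × V)} {a c : V} {l1 l2 : List (V × V)}
    (h : DTrail A a c (l1 ++ l2)) : ∃ b, DTrail A a b l1 ∧ DTrail A b c l2 := by
  induction l1 generalizing a with
  | nil => exact ⟨a, DTrail.nil a, by simpa using h⟩
  | cons q l1 ih =>
      rw [List.cons_append] at h
      cases h with
      | cons hab h' =>
          obtain ⟨b, hb1, hb2⟩ := ih h'
          exact ⟨b, DTrail.cons hab hb1, hb2⟩

theorem exists_split_last {α : Type*} [DecidableEq α] {x : α} :
    ∀ {l : List α}, x ∈ l → ∃ l1 l2, l = l1 ++ x :: l2 ∧ x ∉ l2 := by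
  intro l
  induction l with
  | nil => simp
  | cons y t ih =>
      intro hx
      by_cases hxt : x ∈ t
      · obtain ⟨l1, l2, rfl, hn⟩ := ih hxt
        exact ⟨y :: l1, l2, rfl, hn⟩
      · rcases List.mem_cons.mp hx with rfl | h
        · exact ⟨[], t, rfl, hxt⟩
        · exact absurd h hxt

theorem DTrail.to_nodup {A : Finset (V × V)} {a b : V} {l : List (V × V)}
    (h : DTrail A a b l) : ∃ l', DTrail A a b l' ∧ l'.Nodup := by
  induction h with
  | nil => exact ⟨[], DTrail.nil _, List.nodup_nil⟩
  | @cons a b c l hab h ih =>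
      obtain ⟨l', hl', hnd⟩ := ih
      by_cases hmem : (a, b) ∈ l'
      · -- split at the last occurrence
        obtain ⟨l1, l2, rfl, hne⟩ := exists_split_last hmem
        obtain ⟨m, _, hm2⟩ := hl'.append_split
        cases hm2 with
        | cons hab' h2 =>
            refine ⟨(a, b) :: l2, DTrail.cons hab' h2, ?_⟩
            have hsub : List.Sublist l2 (l1 ++ (a, b) :: l2) :=
              ((List.sublist_cons_self _ _).trans (List.sublist_append_right _ _))
            exact List.nodup_cons.mpr ⟨hne, hsub.nodup hnd⟩
      · exact ⟨(a, b) :: l', DTrail.cons hab hl', List.nodup_cons.mpr ⟨hmem, hnd⟩⟩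

theorem reach_dtrail {A : Finset (V × V)} {a b : V}
    (h : Relation.ReflTransGen (fun x y => (x, y) ∈ A) a b) : ∃ l, DTrail A a b l := by
  induction h using Relation.ReflTransGen.head_induction_on with
  | refl => exact ⟨[], DTrail.nil _⟩
  | head hstep _ ih => obtain ⟨l, hl⟩ := ih; exact ⟨_, DTrail.cons hstep hl⟩

theorem exists_orient (S : Finset (Sym2 V)) (hS : ∀ e ∈ S, ¬ e.IsDiag) :
    ∃ A, IsOrient S A := by
  refine ⟨S.image Quot.out, ?_, ?_⟩
  · ext e
    simp only [mem_image]
    constructor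
    · rintro ⟨q, ⟨e', he', rfl⟩, rfl⟩
      rwa [Sym2.mk, e'.out_eq]
    · intro he
      exact ⟨e.out, ⟨e, he, rfl⟩, by rw [Sym2.mk, e.out_eq]⟩
  · rintro q hq
    simp only [mem_image] at hq
    obtain ⟨e, he, rfl⟩ := hq
    have hd : ¬ (e.out.1 = e.out.2) := by
      intro h
      apply hS e he
      rw [← e.out_eq]
      exact h
    refine ⟨?_, hd⟩
    intro hswap
    simp only [mem_image] at hswap
    obtain ⟨e', he', h'⟩ := hswap
    have : Sym2.mk e'.out = Sym2.mk (Prod.swap e.out) := by rw [h']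
    rw [Sym2.mk_prod_swap_eq] at this
    rw [Sym2.mk, Sym2.mk, e'.out_eq, e.out_eq] at this
    subst this
    apply hd
    simpa using congrArg Prod.fst h'


/-! ### Flipping a trail -/

def flip (A : Finset (V × V)) (l : List (V × V)) : Finset (V × V) :=
  (A \ l.toFinset) ∪ (l.toFinset.image Prod.swap)

section Flip

variable {S : Finset (Sym2 V)} {A : Finset (V × V)} {v w : V} {l : List (V × V)}

theorem trail_subset (ht : DTrail A v w l) : l.toFinset ⊆ A := by
  intro q hq
  exact ht.mem_arcs q (List.mem_toFinset.mp hq)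

theorem flip_disj (hA : IsOrient S A) (ht : DTrail A v w l) :
    Disjoint (A \ l.toFinset) (l.toFinset.image Prod.swap) := by
  rw [Finset.disjoint_left]
  intro q hq hq'
  rw [mem_rev] at hq'
  have := (hA.2 _ (trail_subset ht hq')).1
  simp only [Prod.swap_swap] at this
  exact this (Finset.mem_sdiff.mp hq).1

theorem isOrient_flip (hA : IsOrient S A) (ht : DTrail A v w l) :
    IsOrient S (flip A l) := by
  obtain ⟨him, hp⟩ := hA
  have hsub := trail_subset ht
  constructor
  · rw [flip, Finset.image_union, Finset.image_image]
    have h1 : (l.toFinset.image (Sym2.mk ∘ Prod.swap)) = l.toFinset.image Sym2.mk := by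
      apply Finset.image_congr
      intro q _
      exact Sym2.mk_prod_swap_eq
    rw [h1, ← Finset.image_union, Finset.sdiff_union_of_subset hsub, him]
  · intro q hq
    rw [flip, Finset.mem_union] at hq
    rcases hq with hq | hq
    · rw [Finset.mem_sdiff] at hq
      refine ⟨?_, (hp q hq.1).2⟩
      intro hsw
      rw [flip, Finset.mem_union] at hsw
      rcases hsw with hsw | hsw
      · exact (hp q hq.1).1 (Finset.mem_sdiff.mp hsw).1
      · rw [mem_rev, Prod.swap_swap] at hsw
        exact hq.2 hsw
    · rw [mem_rev] at hq
      have hqA : Prod.swap q ∈ A := hsub hq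
      refine ⟨?_, ?_⟩
      · intro hsw
        rw [flip, Finset.mem_union] at hsw
        rcases hsw with hsw | hsw
        · exact (Finset.mem_sdiff.mp hsw).2 hq
        · rw [mem_rev, Prod.swap_swap] at hsw
          have h := (hp _ hqA).1
          rw [Prod.swap_swap] at h
          exact h (hsub hsw)
      · have := (hp _ hqA).2
        simp only [Prod.fst_swap, Prod.snd_swap] at this
        exact fun h => this h.symm

theorem filter_sdiff' (A L : Finset (V × V)) (P : V × V → Prop) [DecidablePred P] :
    (A \ L).filter P = A.filter P \ L.filter P := by
  ext q
  simp only [Finset.mem_filter, Finset.mem_sdiff]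
  tauto

theorem card_filter_toFinset (hnd : l.Nodup) (P : V × V → Prop) [DecidablePred P] :
    #(l.toFinset.filter P) = (l.filter (fun q => P q)).length := by
  have hset : (l.filter (fun q => P q)).toFinset = l.toFinset.filter P := by
    ext x
    simp [List.mem_filter]
  rw [← hset, List.toFinset_card_of_nodup (hnd.filter _)]

theorem outd_flip (hA : IsOrient S A) (ht : DTrail A v w l) (hnd : l.Nodup) (y : V) :
    (outd (flip A l) y : ℤ)
      = outd A y - ((l.filter (fun q => q.1 = y)).length : ℤ)
        + ((l.filter (fun q => q.2 = y)).length : ℤ) := by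
  have hsub := trail_subset ht
  rw [outd_eq_card_filter, flip, Finset.filter_union,
    Finset.card_union_of_disjoint (Finset.disjoint_filter_filter (flip_disj hA ht))]
  have h1 : #((A \ l.toFinset).filter fun q => q.1 = y)
      = #(A.filter fun q => q.1 = y) - #(l.toFinset.filter fun q => q.1 = y) := by
    rw [filter_sdiff', Finset.card_sdiff_of_subset (Finset.filter_subset_filter _ hsub)]
  have hle : #(l.toFinset.filter fun q => q.1 = y) ≤ #(A.filter fun q => q.1 = y) :=
    Finset.card_le_card (Finset.filter_subset_filter _ hsub)
  have h2 : #((l.toFinset.image Prod.swap).filter fun q => q.1 = y)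
      = #(l.toFinset.filter fun q => q.2 = y) := by
    rw [Finset.filter_image, Finset.card_image_of_injective _ Prod.swap_injective]
    congr 1
  rw [h1, h2, outd_eq_card_filter A y]
  have e1 := card_filter_toFinset hnd (fun q => q.1 = y)
  have e2 := card_filter_toFinset hnd (fun q => q.2 = y)
  omega

theorem ind_flip (hA : IsOrient S A) (ht : DTrail A v w l) (hnd : l.Nodup) (y : V) :
    (ind (flip A l) y : ℤ)
      = ind A y - ((l.filter (fun q => q.2 = y)).length : ℤ)
        + ((l.filter (fun q => q.1 = y)).length : ℤ) := by
  have hsub := trail_subset ht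
  rw [ind_eq_card_filter, flip, Finset.filter_union,
    Finset.card_union_of_disjoint (Finset.disjoint_filter_filter (flip_disj hA ht))]
  have h1 : #((A \ l.toFinset).filter fun q => q.2 = y)
      = #(A.filter fun q => q.2 = y) - #(l.toFinset.filter fun q => q.2 = y) := by
    rw [filter_sdiff', Finset.card_sdiff_of_subset (Finset.filter_subset_filter _ hsub)]
  have hle : #(l.toFinset.filter fun q => q.2 = y) ≤ #(A.filter fun q => q.2 = y) :=
    Finset.card_le_card (Finset.filter_subset_filter _ hsub)
  have h2 : #((l.toFinset.image Prod.swap).filter fun q => q.2 = y)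
      = #(l.toFinset.filter fun q => q.1 = y) := by
    rw [Finset.filter_image, Finset.card_image_of_injective _ Prod.swap_injective]
    congr 1
  rw [h1, h2, ind_eq_card_filter A y]
  have e1 := card_filter_toFinset hnd (fun q => q.1 = y)
  have e2 := card_filter_toFinset hnd (fun q => q.2 = y)
  omega

theorem imb_flip (hA : IsOrient S A) (ht : DTrail A v w l) (hnd : l.Nodup) (y : V) :
    imb (flip A l) y
      = imb A y - 2 * (if v = y then 1 else 0) + 2 * (if w = y then 1 else 0) := by
  have hc := ht.count y
  unfold imb
  rw [outd_flip hA ht hnd, ind_flip hA ht hnd]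
  omega

theorem pot_flip_lt (hA : IsOrient S A) (ht : DTrail A v w l) (hnd : l.Nodup)
    (hv : 2 ≤ imb A v) (hw : imb A w ≤ -1) : pot (flip A l) < pot A := by
  have hvw : v ≠ w := by
    intro h
    rw [h] at hv
    omega
  have hwu : w ∈ (univ : Finset V).erase v := Finset.mem_erase.mpr ⟨Ne.symm hvw, Finset.mem_univ w⟩
  have key : ∀ (f : V → ℤ), ∑ y, f y = f v + (f w + ∑ y ∈ (univ.erase v).erase w, f y) := by
    intro f
    rw [← Finset.add_sum_erase _ f (Finset.mem_univ v), ← Finset.add_sum_erase _ f hwu]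
  have hrest : ∑ y ∈ ((univ : Finset V).erase v).erase w, imb (flip A l) y ^ 2
      = ∑ y ∈ ((univ : Finset V).erase v).erase w, imb A y ^ 2 := by
    apply Finset.sum_congr rfl
    intro y hy
    have h1 : v ≠ y := Ne.symm (Finset.mem_erase.mp (Finset.mem_erase.mp hy).2).1
    have h2 : w ≠ y := Ne.symm (Finset.mem_erase.mp hy).1
    rw [imb_flip hA ht hnd, if_neg h1, if_neg h2]
    ring
  have hv' : imb (flip A l) v = imb A v - 2 := by
    rw [imb_flip hA ht hnd, if_pos rfl, if_neg (Ne.symm hvw)]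
    ring
  have hw' : imb (flip A l) w = imb A w + 2 := by
    rw [imb_flip hA ht hnd, if_neg hvw, if_pos rfl]
    ring
  rw [pot, pot, key (fun y => imb (flip A l) y ^ 2), key (fun y => imb A y ^ 2), hrest, hv', hw']
  nlinarith [hv, hw]

end Flip

/-! ### Existence of a balanced orientation -/

section Balance

variable {S : Finset (Sym2 V)} {A : Finset (V × V)}

theorem exists_sink (hv : 2 ≤ imb A v) :
    ∃ w, Relation.ReflTransGen (fun x y => (x, y) ∈ A) v w ∧ imb A w ≤ -1 := by
  classical
  set Reach : V → Prop := fun y => Relation.ReflTransGen (fun x y => (x, y) ∈ A) v y with hR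
  set R : Finset V := univ.filter Reach with hRdef
  have hvR : v ∈ R := by
    simp only [hRdef, Finset.mem_filter, Finset.mem_univ, true_and]
    exact Relation.ReflTransGen.refl
  have hout : ∑ y ∈ R, outd A y = #(A.filter fun q => q.1 ∈ R) := by
    rw [Finset.card_eq_sum_card_fiberwise (f := Prod.fst) (s := A.filter fun q => q.1 ∈ R) (t := R)
      (fun q hq => (Finset.mem_filter.mp hq).2)]
    apply Finset.sum_congr rfl
    intro y hy
    rw [outd_eq_card_filter, Finset.filter_filter]
    congr 1
    apply Finset.filter_congr
    intro q hq
    constructor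
    · intro h
      exact ⟨by rw [h]; exact hy, h⟩
    · exact And.right
  have hin : ∑ y ∈ R, ind A y = #(A.filter fun q => q.2 ∈ R) := by
    rw [Finset.card_eq_sum_card_fiberwise (f := Prod.snd) (s := A.filter fun q => q.2 ∈ R) (t := R)
      (fun q hq => (Finset.mem_filter.mp hq).2)]
    apply Finset.sum_congr rfl
    intro y hy
    rw [ind_eq_card_filter, Finset.filter_filter]
    congr 1
    apply Finset.filter_congr
    intro q hq
    constructor
    · intro h
      exact ⟨by rw [h]; exact hy, h⟩
    · exact And.right
  have hsub : A.filter (fun q => q.1 ∈ R) ⊆ A.filter (fun q => q.2 ∈ R) := by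
    intro q hq
    rw [Finset.mem_filter] at hq ⊢
    refine ⟨hq.1, ?_⟩
    have h1 : Reach q.1 := (Finset.mem_filter.mp hq.2).2
    have h2 : Reach q.2 := h1.tail (by simpa using hq.1)
    simp only [hRdef, Finset.mem_filter, Finset.mem_univ, true_and]
    exact h2
  have hsum : ∑ y ∈ R, imb A y ≤ 0 := by
    unfold imb
    rw [Finset.sum_sub_distrib]
    have h1 : ∑ y ∈ R, ((outd A y : ℤ)) = (#(A.filter fun q => q.1 ∈ R) : ℤ) := by
      rw [← Nat.cast_sum, hout]
    have h2 : ∑ y ∈ R, ((ind A y : ℤ)) = (#(A.filter fun q => q.2 ∈ R) : ℤ) := by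
      rw [← Nat.cast_sum, hin]
    have h3 := Finset.card_le_card hsub
    omega
  by_contra hcon
  push_neg at hcon
  have hpos : ∀ y ∈ R.erase v, 0 ≤ imb A y := by
    intro y hy
    have hyR := (Finset.mem_erase.mp hy).2
    have := hcon y ((Finset.mem_filter.mp hyR).2)
    omega
  have : ∑ y ∈ R, imb A y = imb A v + ∑ y ∈ R.erase v, imb A y :=
    (Finset.add_sum_erase _ _ hvR).symm
  have h2 : 0 ≤ ∑ y ∈ R.erase v, imb A y := Finset.sum_nonneg hpos
  omega

theorem exists_better (hA : IsOrient S A) {v : V} (hv : 2 ≤ imb A v) :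
    ∃ A', IsOrient S A' ∧ pot A' < pot A := by
  obtain ⟨w, hreach, hw⟩ := exists_sink hv
  obtain ⟨l, hl⟩ := reach_dtrail hreach
  obtain ⟨l', hl', hnd⟩ := hl.to_nodup
  exact ⟨flip A l', isOrient_flip hA hl', pot_flip_lt hA hl' hnd hv hw⟩

theorem exists_balanced_orient (S : Finset (Sym2 V)) (hS : ∀ e ∈ S, ¬ e.IsDiag) :
    ∃ A, IsOrient S A ∧ ∀ y, (outd A y : ℤ) - ind A y ≤ 1 ∧ (ind A y : ℤ) - outd A y ≤ 1 := by
  classical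
  have hex : ∃ n : ℕ, ∃ A, IsOrient S A ∧ (pot A).toNat = n := by
    obtain ⟨A, hA⟩ := exists_orient S hS
    exact ⟨(pot A).toNat, A, hA, rfl⟩
  obtain ⟨A, hA, hn⟩ := Nat.find_spec hex
  refine ⟨A, hA, ?_⟩
  intro y
  by_contra hcon
  push_neg at hcon
  have hbad : 2 ≤ imb A y ∨ imb A y ≤ -2 := by
    unfold imb
    rcases lt_or_ge 1 ((outd A y : ℤ) - ind A y) with h | h
    · left; omega
    · right
      have := hcon h
      omega
  have hstep : ∃ A', IsOrient S A' ∧ pot A' < pot A := by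
    rcases hbad with h | h
    · exact exists_better hA h
    · have h' : 2 ≤ imb (A.image Prod.swap) y := by rw [imb_rev]; omega
      obtain ⟨A', hA', hpot⟩ := exists_better (isOrient_rev hA) h'
      rw [pot_rev] at hpot
      exact ⟨A', hA', hpot⟩
  obtain ⟨A', hA', hpot⟩ := hstep
  have hlt : (pot A').toNat < (pot A).toNat := by
    have h0 := pot_nonneg A'
    omega
  rw [hn] at hlt
  exact Nat.find_min hex hlt ⟨A', hA', rfl⟩

end Balance

/-! ### Decomposing a matrix with constant line sums into permutations -/

theorem exists_matrix_of_sums :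
    ∀ (n : ℕ) (r c : V → ℕ), (∑ u, r u = n) → (∑ u, c u = n) →
      ∃ N : V → V → ℕ, (∀ u, ∑ x, N u x = r u) ∧ (∀ x, ∑ u, N u x = c x) := by
  intro n
  induction n with
  | zero =>
      intro r c hr hc
      refine ⟨fun _ _ => 0, fun u => ?_, fun x => ?_⟩
      · simp only [Finset.sum_const_zero]
        exact ((Finset.sum_eq_zero_iff.mp hr) u (Finset.mem_univ u)).symm
      · simp only [Finset.sum_const_zero]
        exact ((Finset.sum_eq_zero_iff.mp hc) x (Finset.mem_univ x)).symm
  | succ n ih =>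
      intro r c hr hc
      have hru : ∃ u, 0 < r u := by
        by_contra h
        push_neg at h
        simp only [Nat.le_zero] at h
        rw [Finset.sum_eq_zero (fun u _ => h u)] at hr
        omega
      have hcv : ∃ x, 0 < c x := by
        by_contra h
        push_neg at h
        simp only [Nat.le_zero] at h
        rw [Finset.sum_eq_zero (fun u _ => h u)] at hc
        omega
      obtain ⟨u0, hu0⟩ := hru
      obtain ⟨x0, hx0⟩ := hcv
      obtain ⟨N, hN1, hN2⟩ := ih (Function.update r u0 (r u0 - 1))
        (Function.update c x0 (c x0 - 1))
        (by rw [Finset.sum_update_of_mem (Finset.mem_univ u0), ← Finset.erase_eq]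
            rw [← Finset.add_sum_erase _ r (Finset.mem_univ u0)] at hr
            omega)
        (by rw [Finset.sum_update_of_mem (Finset.mem_univ x0), ← Finset.erase_eq]
            rw [← Finset.add_sum_erase _ c (Finset.mem_univ x0)] at hc
            omega)
      refine ⟨fun u x => N u x + (if u = u0 ∧ x = x0 then 1 else 0), ?_, ?_⟩
      · intro u
        rw [Finset.sum_add_distrib, hN1]
        by_cases h : u = u0
        · subst h
          simp only [true_and, Function.update_self, Finset.sum_ite_eq']
          simp only [Finset.mem_univ, if_true]
          omega
        · simp only [h, false_and, if_false, Finset.sum_const_zero, add_zero,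
            Function.update_of_ne h]
      · intro x
        rw [Finset.sum_add_distrib, hN2]
        by_cases h : x = x0
        · subst h
          simp only [and_true, Function.update_self, Finset.sum_ite_eq']
          simp only [Finset.mem_univ, if_true]
          omega
        · simp only [h, and_false, if_false, Finset.sum_const_zero, add_zero,
            Function.update_of_ne h]

theorem exists_perm_of_const_sums {p : ℕ} (hp : 0 < p) (P : V → V → ℕ)
    (hr : ∀ u, ∑ x, P u x = p) (hc : ∀ x, ∑ u, P u x = p) :
    ∃ τ : Equiv.Perm V, ∀ u, 0 < P u (τ u) := by
  classical
  have hall : ∀ s : Finset V, s.card ≤ (s.biUnion fun u => univ.filter fun x => 0 < P u x).card := by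
    intro s
    have key : p * s.card ≤ p * (s.biUnion fun u => univ.filter fun x => 0 < P u x).card := by
      calc p * s.card = ∑ u ∈ s, p := by rw [Finset.sum_const, mul_comm, smul_eq_mul]
        _ = ∑ u ∈ s, ∑ x, P u x := by
              apply Finset.sum_congr rfl
              intro u _
              exact (hr u).symm
        _ = ∑ u ∈ s, ∑ x ∈ s.biUnion fun u => univ.filter fun x => 0 < P u x, P u x := by
              apply Finset.sum_congr rfl
              intro u hu
              refine (Finset.sum_subset (Finset.subset_univ _) ?_).symm
              intro x _ hx
              by_contra h
              apply hx
              exact Finset.mem_biUnion.mpr ⟨u, hu, Finset.mem_filter.mpr ⟨Finset.mem_univ x,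
                Nat.pos_of_ne_zero h⟩⟩
        _ = ∑ x ∈ s.biUnion fun u => univ.filter fun x => 0 < P u x, ∑ u ∈ s, P u x :=
              Finset.sum_comm
        _ ≤ ∑ x ∈ s.biUnion fun u => univ.filter fun x => 0 < P u x, p := by
              apply Finset.sum_le_sum
              intro x _
              rw [← hc x]
              exact Finset.sum_le_sum_of_subset (Finset.subset_univ s)
        _ = _ := by rw [Finset.sum_const, mul_comm, smul_eq_mul]
    exact Nat.le_of_mul_le_mul_left key hp
  obtain ⟨f, hfinj, hf⟩ := (Finset.all_card_le_biUnion_card_iff_exists_injective _).mp hall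
  have hbij : Function.Bijective f := (Fintype.bijective_iff_injective_and_card f).mpr
    ⟨hfinj, rfl⟩
  refine ⟨Equiv.ofBijective f hbij, ?_⟩
  intro u
  have := hf u
  simp only [Finset.mem_filter] at this
  exact this.2

theorem perm_decomp :
    ∀ (p : ℕ) (P : V → V → ℕ), (∀ u, ∑ x, P u x = p) → (∀ x, ∑ u, P u x = p) →
      ∃ σ : Fin p → Equiv.Perm V,
        ∀ u x, P u x = #((univ : Finset (Fin p)).filter fun i => σ i u = x) := by
  intro p
  induction p with
  | zero =>
      intro P hr hc
      refine ⟨fun i => i.elim0, ?_⟩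
      intro u x
      have h0 : P u x = 0 := by
        have := hr u
        rw [Finset.sum_eq_zero_iff] at this
        · exact this x (Finset.mem_univ x)
      rw [h0, Finset.univ_eq_empty, Finset.filter_empty, Finset.card_empty]
  | succ p ih =>
      intro P hr hc
      obtain ⟨τ, hτ⟩ := exists_perm_of_const_sums (Nat.succ_pos p) P hr hc
      set P' : V → V → ℕ := fun u x => P u x - (if τ u = x then 1 else 0) with hP'
      have hsub : ∀ u x, (if τ u = x then 1 else 0) ≤ P u x := by
        intro u x
        by_cases h : τ u = x
        · rw [if_pos h]
          rw [← h]
          exact hτ u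
        · rw [if_neg h]
          omega
      have hr' : ∀ u, ∑ x, P' u x = p := by
        intro u
        have h1 : ∑ x, P' u x = (∑ x, P u x) - (∑ x, (if τ u = x then 1 else 0)) := by
          rw [hP']
          exact Finset.sum_tsub_distrib univ (fun x _ => hsub u x)
        have hs : ∑ x, (if τ u = x then (1:ℕ) else 0) = 1 := by
          rw [Finset.sum_ite_eq univ (τ u) (fun _ => 1)]
          simp
        rw [h1, hr, hs]
        omega
      have hc' : ∀ x, ∑ u, P' u x = p := by
        intro x
        have h1 : ∑ u, P' u x = (∑ u, P u x) - (∑ u, (if τ u = x then 1 else 0)) := by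
          rw [hP']
          exact Finset.sum_tsub_distrib univ (fun u _ => hsub u x)
        have h2 : ∑ u, (if τ u = x then 1 else 0) = 1 := by
          have : ∀ u, (if τ u = x then (1:ℕ) else 0) = (if u = τ.symm x then 1 else 0) := by
            intro u
            congr 1
            · simp [Equiv.apply_eq_iff_eq_symm_apply]
          rw [Finset.sum_congr rfl (fun u _ => this u), Finset.sum_ite_eq' univ (τ.symm x) (fun _ => 1)]
          simp
        rw [h1, hc, h2]
        omega
      obtain ⟨σ', hσ'⟩ := ih P' hr' hc'
      refine ⟨Fin.cases τ σ', ?_⟩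
      intro u x
      rw [Finset.card_filter, Fin.sum_univ_succ]
      simp only [Fin.cases_zero, Fin.cases_succ]
      change P u x = (if τ u = x then 1 else 0) + ∑ i : Fin p, if σ' i u = x then 1 else 0
      rw [← Finset.card_filter]
      rw [← hσ' u x]
      have := hsub u x
      simp only [hP']
      beta_reduce
      omega

/-! ### Degree bookkeeping for orientations -/

section Deg

variable {S : Finset (Sym2 V)} {A : Finset (V × V)}

theorem mk_injOn (hA : IsOrient S A) : Set.InjOn Sym2.mk (A : Set (V × V)) := by
  intro q hq r hr h
  rcases Sym2.mk_eq_mk_iff.mp h with h | h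
  · exact h
  · exfalso
    subst h
    exact (hA.2 r hr).1 hq

theorem orient_degree (hA : IsOrient S A) (v : V) :
    outd A v + ind A v = #(S.filter fun e => v ∈ e) := by
  classical
  have hdisj : Disjoint (A.filter fun q => q.1 = v) (A.filter fun q => q.2 = v) := by
    rw [Finset.disjoint_left]
    intro q hq1 hq2
    exact (hA.2 q (Finset.mem_filter.mp hq1).1).2
      (((Finset.mem_filter.mp hq1).2).trans ((Finset.mem_filter.mp hq2).2).symm)
  have hunion : (A.filter fun q => q.1 = v) ∪ (A.filter fun q => q.2 = v)
      = A.filter fun q => q.1 = v ∨ q.2 = v := (Finset.filter_or _ _ _).symm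
  have himg : (A.filter fun q => q.1 = v ∨ q.2 = v).image Sym2.mk = S.filter fun e => v ∈ e := by
    ext e
    simp only [Finset.mem_image, Finset.mem_filter]
    constructor
    · rintro ⟨q, ⟨hqA, hqv⟩, rfl⟩
      refine ⟨?_, ?_⟩
      · rw [← hA.1]
        exact Finset.mem_image_of_mem _ hqA
      · rcases hqv with h | h
        · rw [← h]
          exact Sym2.mem_mk_left _ _
        · rw [← h]
          exact Sym2.mem_mk_right _ _
    · rintro ⟨heS, hev⟩
      rw [← hA.1] at heS
      obtain ⟨q, hqA, rfl⟩ := Finset.mem_image.mp heS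
      refine ⟨q, ⟨hqA, ?_⟩, rfl⟩
      rcases Sym2.mem_iff.mp hev with h | h
      · exact Or.inl h.symm
      · exact Or.inr h.symm
  rw [outd_eq_card_filter, ind_eq_card_filter, ← Finset.card_union_of_disjoint hdisj, hunion,
    ← himg]
  rw [Finset.card_image_of_injOn ((mk_injOn hA).mono (by
    intro q hq
    exact (Finset.mem_filter.mp hq).1))]

theorem sum_outd (A : Finset (V × V)) : ∑ v, outd A v = #A := by
  rw [Finset.card_eq_sum_card_fiberwise (f := Prod.fst) (t := univ) (fun q _ => Finset.mem_univ _)]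
  apply Finset.sum_congr rfl
  intro v _
  rw [outd_eq_card_filter]

theorem sum_ind (A : Finset (V × V)) : ∑ v, ind A v = #A := by
  rw [Finset.card_eq_sum_card_fiberwise (f := Prod.snd) (t := univ) (fun q _ => Finset.mem_univ _)]
  apply Finset.sum_congr rfl
  intro v _
  rw [ind_eq_card_filter]

end Deg

end Stmt12


/-- Let `G` have maximum degree `Δ ≥ 1` and put `p = ⌈Δ/2⌉`. Then the
edge set of `G` can be partitioned into `p` sets `E_1, …, E_p` such that every subgraph
`(V, E_i)` has maximum degree at most `2`, and the sum of the maximum degrees of the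
subgraphs is between `Δ` and `Δ + 1`. -/
theorem stmt_12 {V : Type*} [Fintype V] [DecidableEq V] (G : SimpleGraph V)
    [DecidableRel G.Adj] (Δ : ℕ) (hΔ : G.maxDegree = Δ) (hΔ1 : 1 ≤ Δ) :
    ∃ E : Fin ((Δ + 1) / 2) → Finset (Sym2 V),
      (∀ i j, i ≠ j → Disjoint (E i) (E j)) ∧
      (Finset.univ.biUnion E = G.edgeFinset) ∧
      (∀ i, ∀ v : V, ((E i).filter (fun e => v ∈ e)).card ≤ 2) ∧
      Δ ≤ (∑ i, Finset.univ.sup (fun v : V => ((E i).filter (fun e => v ∈ e)).card)) ∧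
      (∑ i, Finset.univ.sup (fun v : V => ((E i).filter (fun e => v ∈ e)).card)) ≤ Δ + 1 := by
  classical
  open Finset Stmt12 in
  refine ?_
  set p : ℕ := (Δ + 1) / 2 with hpdef
  have hp : 0 < p := by rw [hpdef]; omega
  set S : Finset (Sym2 V) := G.edgeFinset with hSdef
  have hSnd : ∀ e ∈ S, ¬ e.IsDiag := fun e he =>
    G.not_isDiag_of_mem_edgeSet (SimpleGraph.mem_edgeFinset.mp he)
  -- degree of `v` as incidences in `S`
  have hdegS : ∀ v, G.degree v = #(S.filter fun e => v ∈ e) := by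
    intro v
    rw [← SimpleGraph.card_incidenceFinset_eq_degree]
    congr 1
    exact SimpleGraph.incidenceFinset_eq_filter G v
  -- balanced orientation
  obtain ⟨A, hA, hbal⟩ := exists_balanced_orient S hSnd
  have hdeg : ∀ v, outd A v + ind A v ≤ Δ := by
    intro v
    rw [orient_degree hA v, ← hdegS v, ← hΔ]
    exact G.degree_le_maxDegree v
  have houtle : ∀ v, outd A v ≤ p := by
    intro v
    have h1 := (hbal v).1
    have h2 := hdeg v
    rw [hpdef]
    omega
  have hinle : ∀ v, ind A v ≤ p := by
    intro v
    have h1 := (hbal v).2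
    have h2 := hdeg v
    rw [hpdef]
    omega
  -- pad to a matrix with constant line sums `p`
  have hsums : ∑ u, (p - outd A u) = ∑ x, (p - ind A x) := by
    rw [Finset.sum_tsub_distrib univ (fun u _ => houtle u),
      Finset.sum_tsub_distrib univ (fun x _ => hinle x), sum_outd, sum_ind]
  obtain ⟨N, hN1, hN2⟩ := exists_matrix_of_sums (∑ u, (p - outd A u))
    (fun u => p - outd A u) (fun x => p - ind A x) rfl hsums.symm
  set P : V → V → ℕ := fun u x => (if (u, x) ∈ A then 1 else 0) + N u x with hPdef
  have hProw : ∀ u, ∑ x, P u x = p := by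
    intro u
    rw [hPdef]
    simp only
    rw [Finset.sum_add_distrib, hN1, ← Finset.card_filter]
    have h : #(univ.filter fun x => (u, x) ∈ A) = outd A u := rfl
    rw [h]
    exact Nat.add_sub_cancel' (houtle u)
  have hPcol : ∀ x, ∑ u, P u x = p := by
    intro x
    rw [hPdef]
    simp only
    rw [Finset.sum_add_distrib, hN2, ← Finset.card_filter]
    have h : #(univ.filter fun u => (u, x) ∈ A) = ind A x := rfl
    rw [h]
    exact Nat.add_sub_cancel' (hinle x)
  obtain ⟨σ, hσ⟩ := perm_decomp p P hProw hPcol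
  -- every arc of `A` is matched by some permutation
  have hex : ∀ q ∈ A, ∃ i : Fin p, σ i q.1 = q.2 := by
    intro q hq
    have h1 : 1 ≤ P q.1 q.2 := by
      rw [hPdef]
      simp only
      rw [if_pos (by simpa using hq)]
      omega
    rw [hσ] at h1
    obtain ⟨i, hi⟩ := Finset.card_pos.mp h1
    exact ⟨i, (Finset.mem_filter.mp hi).2⟩
  set col : V × V → Fin p := fun q =>
    if h : ∃ i : Fin p, σ i q.1 = q.2 then h.choose else ⟨0, hp⟩ with hcoldef
  have hcol : ∀ q ∈ A, σ (col q) q.1 = q.2 := by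
    intro q hq
    rw [hcoldef]
    simp only
    rw [dif_pos (hex q hq)]
    exact (hex q hq).choose_spec
  set Efun : Fin p → Finset (Sym2 V) :=
    fun i => (A.filter fun q => col q = i).image Stmt12.Sym2.mk with hEdef
  have hdisjE : ∀ i j, i ≠ j → Disjoint (Efun i) (Efun j) := by
    intro i j hij
    rw [Finset.disjoint_left]
    intro e hei hej
    rw [hEdef] at hei hej
    obtain ⟨q, hq, rfl⟩ := Finset.mem_image.mp hei
    obtain ⟨r, hr, hqr⟩ := Finset.mem_image.mp hej
    rw [Finset.mem_filter] at hq hr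
    have hrq : r = q := mk_injOn hA hr.1 hq.1 hqr
    subst hrq
    rw [hq.2] at hr
    exact hij hr.2
  have hunionE : univ.biUnion Efun = S := by
    ext e
    simp only [Finset.mem_biUnion, Finset.mem_univ, true_and]
    constructor
    · rintro ⟨i, hi⟩
      rw [hEdef] at hi
      obtain ⟨q, hq, rfl⟩ := Finset.mem_image.mp hi
      rw [← hA.1]
      exact Finset.mem_image_of_mem _ (Finset.mem_filter.mp hq).1
    · intro he
      rw [← hA.1] at he
      obtain ⟨q, hq, rfl⟩ := Finset.mem_image.mp he
      exact ⟨col q, Finset.mem_image_of_mem _ (Finset.mem_filter.mpr ⟨hq, rfl⟩)⟩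
  have hdeg2 : ∀ i v, #((Efun i).filter fun e => v ∈ e) ≤ 2 := by
    intro i v
    have hsubset : (Efun i).filter (fun e => v ∈ e)
        ⊆ {Stmt12.Sym2.mk (v, σ i v), Stmt12.Sym2.mk ((σ i).symm v, v)} := by
      intro e he
      rw [Finset.mem_filter] at he
      have hei := he.1
      rw [hEdef] at hei
      obtain ⟨q, hq, rfl⟩ := Finset.mem_image.mp hei
      rw [Finset.mem_filter] at hq
      have hqs : σ i q.1 = q.2 := by
        rw [← hq.2]
        exact hcol q hq.1
      rcases Sym2.mem_iff.mp he.2 with h | h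
      · rw [Finset.mem_insert]
        left
        rw [h, hqs, Prod.mk.eta]
      · rw [Finset.mem_insert]
        right
        rw [Finset.mem_singleton]
        have hq1 : (σ i).symm q.2 = q.1 := by
          rw [← hqs]
          exact Equiv.symm_apply_apply _ _
        rw [h, hq1, Prod.mk.eta]
    calc #((Efun i).filter fun e => v ∈ e) ≤ _ := Finset.card_le_card hsubset
      _ ≤ 2 := by
        refine (Finset.card_insert_le _ _).trans ?_
        simp
  have hlow : Δ ≤ ∑ i, univ.sup (fun v : V => #((Efun i).filter fun e => v ∈ e)) := by
    have hne : Nonempty V := by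
      by_contra h
      have : IsEmpty V := not_nonempty_iff.mp h
      have h0 : G.maxDegree = 0 := by
        simp only [SimpleGraph.maxDegree, Finset.univ_eq_empty, Finset.image_empty,
          Finset.max_empty]
        rfl
      omega
    obtain ⟨v0, hv0⟩ := G.exists_maximal_degree_vertex
    have hΔ0 : Δ = G.degree v0 := by rw [← hΔ, hv0]
    have hcard : G.degree v0 = ∑ i, #((Efun i).filter fun e => v0 ∈ e) := by
      rw [hdegS v0, ← hunionE, Finset.filter_biUnion]
      rw [Finset.card_biUnion]
      intro i _ j _ hij
      exact Finset.disjoint_filter_filter (hdisjE i j hij)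
    rw [hΔ0, hcard]
    apply Finset.sum_le_sum
    intro i _
    exact Finset.le_sup (f := fun v : V => #((Efun i).filter fun e => v ∈ e))
      (Finset.mem_univ v0)
  have hhigh : ∑ i, univ.sup (fun v : V => #((Efun i).filter fun e => v ∈ e)) ≤ Δ + 1 := by
    calc ∑ i, univ.sup (fun v : V => #((Efun i).filter fun e => v ∈ e))
        ≤ ∑ _i : Fin p, 2 := by
          apply Finset.sum_le_sum
          intro i _
          exact Finset.sup_le fun v _ => hdeg2 i v
      _ = p * 2 := by
          rw [Finset.sum_const, Finset.card_univ, Fintype.card_fin, smul_eq_mul]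
      _ ≤ Δ + 1 := by
          rw [hpdef]
          exact Nat.div_mul_le_self (Δ + 1) 2
  exact ⟨Efun, hdisjE, hunionE, hdeg2, hlow, hhigh⟩
end

section
/- Let G be a finite simple graph with maximum degree Δ and let h ≥ 0 be an integer. Then the edge set of G can be partitioned into 2^h sets E_1, …, E_{2^h} such that each subgraph (V, E_j) has maximum degree at most ⌊Δ/2^h⌋ + 2. -/
open Finset

namespace Stmt14
set_option linter.unusedSectionVars false
set_option linter.unreachableTactic false
set_option linter.unusedTactic false
set_option linter.unnecessarySeqFocus false

variable {V : Type*} [DecidableEq V]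

/-- degree of a vertex in an edge set -/
def sdeg (X : Finset (Sym2 V)) (v : V) : ℕ := (X.filter (fun e => v ∈ e)).card

lemma sdeg_mono {X Y : Finset (Sym2 V)} (h : X ⊆ Y) (v : V) : sdeg X v ≤ sdeg Y v :=
  card_le_card (filter_subset_filter _ h)

lemma filter_sdiff' (X A : Finset (Sym2 V)) (v : V) :
    ((X \ A).filter (fun e => v ∈ e)) = X.filter (fun e => v ∈ e) \ A.filter (fun e => v ∈ e) := by
  ext e; simp [mem_filter, mem_sdiff]; tauto

lemma sdeg_sdiff_add {A X : Finset (Sym2 V)} (h : A ⊆ X) (v : V) :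
    sdeg (X \ A) v + sdeg A v = sdeg X v := by
  unfold sdeg
  rw [filter_sdiff']
  exact card_sdiff_add_card_eq_card (filter_subset_filter _ h)

lemma sdeg_insert {X : Finset (Sym2 V)} {e : Sym2 V} (h : e ∉ X) (v : V) :
    sdeg (insert e X) v = sdeg X v + (if v ∈ e then 1 else 0) := by
  unfold sdeg
  rw [filter_insert]
  split
  · rw [card_insert_of_notMem (fun hc => h (mem_filter.1 hc).1)]
  · simp

lemma sdeg_union_of_disjoint {X Y : Finset (Sym2 V)} (h : Disjoint X Y) (v : V) :
    sdeg (X ∪ Y) v = sdeg X v + sdeg Y v := by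
  unfold sdeg
  rw [filter_union, card_union_of_disjoint (disjoint_filter_filter h)]



def Alt (E A : Finset (Sym2 V)) : Bool → V → List V → Prop
  | _, _, [] => True
  | c, u, x :: l => s(u, x) ∈ E ∧ (s(u, x) ∈ A ↔ c = true) ∧ Alt E A (!c) x l

def tedges : V → List V → List (Sym2 V)
  | _, [] => []
  | u, x :: l => s(u, x) :: tedges x l

def tlast (u : V) (l : List V) : V := l.getLastD u

def cAfter : Bool → List V → Bool
  | c, [] => c
  | c, _ :: l => cAfter (!c) l

def tcnt (A : Finset (Sym2 V)) (w : V) : Bool → V → List V → ℤ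
  | _, _, [] => 0
  | c, u, x :: l =>
      (if w ∈ s(u, x) then (if c then 1 else -1) else 0) + tcnt A w (!c) x l

lemma alt_nil (E A : Finset (Sym2 V)) (c : Bool) (u : V) : Alt E A c u [] ↔ True := Iff.rfl

lemma alt_cons (E A : Finset (Sym2 V)) (c : Bool) (u x : V) (l : List V) :
    Alt E A c u (x :: l) ↔
      s(u, x) ∈ E ∧ (s(u, x) ∈ A ↔ c = true) ∧ Alt E A (!c) x l := Iff.rfl

lemma tedges_length (u : V) (l : List V) : (tedges u l).length = l.length := by
  induction l generalizing u with
  | nil => rfl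
  | cons x l ih => simp [tedges, ih]

lemma tlast_cons (u x : V) (l : List V) : tlast u (x :: l) = tlast x l := by
  cases l <;> simp [tlast, List.getLastD]

lemma cAfter_eq (c : Bool) (l : List V) : cAfter c l = if Even l.length then c else !c := by
  induction l generalizing c with
  | nil => simp [cAfter]
  | cons x l ih =>
      simp only [cAfter, ih, List.length_cons, Nat.even_add_one]
      by_cases h : Even l.length <;> simp [h]

lemma tedges_append (u y : V) (l : List V) :
    tedges u (l ++ [y]) = tedges u l ++ [s(tlast u l, y)] := by
  induction l generalizing u with
  | nil => simp [tedges, tlast]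
  | cons x l ih => simp [tedges, ih, tlast_cons]

lemma alt_append (E A : Finset (Sym2 V)) (c : Bool) (u y : V) (l : List V) :
    Alt E A c u (l ++ [y]) ↔
      Alt E A c u l ∧ s(tlast u l, y) ∈ E ∧ (s(tlast u l, y) ∈ A ↔ (cAfter c l) = true) := by
  induction l generalizing c u with
  | nil =>
      simp only [List.nil_append, alt_cons, alt_nil, tlast, cAfter, List.getLastD]
      tauto
  | cons x l ih =>
      simp only [List.cons_append, alt_cons, ih, tlast_cons, cAfter]
      tauto

lemma tedges_subset {E A : Finset (Sym2 V)} {c : Bool} {u : V} {l : List V}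
    (h : Alt E A c u l) : ∀ e ∈ tedges u l, e ∈ E := by
  induction l generalizing c u with
  | nil => simp [tedges]
  | cons x l ih =>
      intro e he
      simp only [tedges, List.mem_cons] at he
      rcases he with rfl | he
      · exact h.1
      · exact ih h.2.2 e he
def sgn (c : Bool) : ℤ := if c then 1 else -1
lemma sgn_not (c : Bool) : sgn (!c) = -sgn c := by cases c <;> simp [sgn]

/-- telescoping formula for the signed incidence count along an alternating trail -/
lemma tcnt_eq {E A : Finset (Sym2 V)} (hE : ∀ e ∈ E, ¬ e.IsDiag) {c : Bool} {u : V}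
    {l : List V} (h : Alt E A c u l) (hl : l ≠ []) (w : V) :
    tcnt A w c u l =
      sgn c * ((if w = u then 1 else 0)
        + (-1 : ℤ) ^ (l.length - 1) * (if w = tlast u l then 1 else 0)) := by
  induction l generalizing c u with
  | nil => exact absurd rfl hl
  | cons x l ih =>
      obtain ⟨hmemE, -, halt⟩ := h
      have hux : u ≠ x := by
        intro hc; exact hE _ hmemE (by simp [hc, Sym2.mk_isDiag_iff])
      have hind : (if w ∈ s(u, x) then (if c then (1:ℤ) else -1) else 0)
          = sgn c * ((if w = u then 1 else 0) + (if w = x then 1 else 0)) := by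
        by_cases h1 : w = u <;> by_cases h2 : w = x
        · exact absurd (h1 ▸ h2) hux
        all_goals simp [Sym2.mem_iff, h1, h2, sgn, hux, Ne.symm hux] <;> cases c <;> simp
      cases l with
      | nil =>
          rw [show tcnt A w c u [x]
              = (if w ∈ s(u, x) then (if c then (1:ℤ) else -1) else 0) + 0 from rfl,
            hind, add_zero]
          have h1 : tlast u [x] = x := (tlast_cons u x []).trans rfl
          have h2 : ([x] : List V).length - 1 = 0 := rfl
          rw [h1, h2, pow_zero, one_mul]
      | cons x' l' =>
          have hne : (x' :: l') ≠ ([] : List V) := by simp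
          rw [show tcnt A w c u (x :: x' :: l') =
              (if w ∈ s(u, x) then (if c then (1:ℤ) else -1) else 0)
                + tcnt A w (!c) x (x' :: l') from rfl,
            ih halt hne, hind, tlast_cons, sgn_not]
          have hlen : (x :: x' :: l').length - 1 = ((x' :: l').length - 1) + 1 := by
            simp
          rw [hlen, pow_succ]
          simp only [tlast_cons]
          ring
/-- the signed count equals #(A-edges of the trail at w) − #(non-A-edges at w) -/
lemma tcnt_eq_sdeg {E A : Finset (Sym2 V)} {c : Bool} {u : V} {l : List V}
    (h : Alt E A c u l) (hnd : (tedges u l).Nodup) (w : V) :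
    ((sdeg ((tedges u l).toFinset ∩ A) w : ℤ) - sdeg ((tedges u l).toFinset \ A) w)
      = tcnt A w c u l := by
  induction l generalizing c u with
  | nil => simp [tedges, tcnt, sdeg]
  | cons x l ih =>
      obtain ⟨hmemE, hcol, halt⟩ := h
      rw [show tedges u (x :: l) = s(u, x) :: tedges x l from rfl] at hnd ⊢
      rw [List.nodup_cons] at hnd
      obtain ⟨hnotin, hnd'⟩ := hnd
      rw [List.toFinset_cons]
      set e := s(u, x) with he
      set S' := (tedges x l).toFinset with hS'
      have hnotin' : e ∉ S' := by simpa [hS'] using hnotin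
      rw [show tcnt A w c u (x :: l)
          = (if w ∈ e then (if c then (1:ℤ) else -1) else 0) + tcnt A w (!c) x l from rfl,
        ← ih halt hnd']
      by_cases hA : e ∈ A
      · have hc : c = true := hcol.1 hA
        have h1 : insert e S' ∩ A = insert e (S' ∩ A) := by
          ext f
          by_cases hf : f = e <;> simp [mem_inter, mem_insert, hf, hA] <;> tauto
        have h2 : insert e S' \ A = S' \ A := by
          ext f
          by_cases hf : f = e <;> simp [mem_sdiff, mem_insert, hf, hA] <;> tauto
        rw [h1, h2, sdeg_insert (fun hc2 => hnotin' (mem_inter.1 hc2).1), hc]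
        push_cast
        ring_nf
        by_cases hw : w ∈ e <;> simp [hw] <;> ring
      · have hc : c = false := by
          cases c
          · rfl
          · exact absurd (hcol.2 rfl) hA
        have h1 : insert e S' ∩ A = S' ∩ A := by
          ext f
          by_cases hf : f = e <;> simp [mem_inter, mem_insert, hf, hA] <;> tauto
        have h2 : insert e S' \ A = insert e (S' \ A) := by
          ext f
          by_cases hf : f = e <;> simp [mem_sdiff, mem_insert, hf, hA] <;> tauto
        rw [h1, h2, sdeg_insert (fun hc2 => hnotin' (mem_sdiff.1 hc2).1), hc]
        push_cast
        by_cases hw : w ∈ e <;> simp [hw] <;> ring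

lemma sdeg_flip (A S : Finset (Sym2 V)) (w : V) :
    (sdeg ((A \ S) ∪ (S \ A)) w : ℤ) = sdeg A w - sdeg (S ∩ A) w + sdeg (S \ A) w := by
  have hd : Disjoint (A \ S) (S \ A) := by
    rw [Finset.disjoint_left]
    intro f h1 h2
    exact (mem_sdiff.1 h1).2 (mem_sdiff.1 h2).1
  rw [sdeg_union_of_disjoint hd]
  have h2 : sdeg (A \ (S ∩ A)) w + sdeg (S ∩ A) w = sdeg A w :=
    sdeg_sdiff_add inter_subset_right w
  have h3 : A \ (S ∩ A) = A \ S := by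
    ext f
    simp only [mem_sdiff, mem_inter]
    tauto
  rw [h3] at h2
  push_cast
  omega

variable [Fintype V]

def Phi (E A : Finset (Sym2 V)) : ℤ := ∑ w : V, (2 * (sdeg A w : ℤ) - (sdeg E w : ℤ))^2

lemma improve {E A : Finset (Sym2 V)} (hE : ∀ e ∈ E, ¬e.IsDiag) (hA : A ⊆ E) (v : V)
    (hv : 3 ≤ 2 * (sdeg A v : ℤ) - (sdeg E v : ℤ)) :
    ∃ A' ⊆ E, Phi E A' < Phi E A := by
  classical
  have hAE : ∀ w, sdeg A w ≤ sdeg E w := fun w => sdeg_mono hA w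
  have hav : 1 ≤ sdeg A v := by
    rcases Nat.eq_zero_or_pos (sdeg A v) with h0 | h0
    · exfalso
      have hd : (0:ℤ) ≤ (sdeg E v : ℤ) := Nat.cast_nonneg _
      rw [h0] at hv
      push_cast at hv
      linarith
    · exact h0
  -- get a starting edge in A at v
  have hne : (A.filter (fun e => v ∈ e)).Nonempty := by
    rw [← card_pos]; exact hav
  obtain ⟨e, hef⟩ := hne
  obtain ⟨heA, hve⟩ := mem_filter.1 hef
  have heE : e ∈ E := hA heA
  set x := Sym2.Mem.other hve with hxdef
  have hx : s(v, x) = e := Sym2.other_spec hve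
  -- the trail predicate
  set P : ℕ → Prop := fun n => ∃ l : List V, l.length = n ∧ Alt E A true v l ∧ (tedges v l).Nodup
    with hPdef
  have hP1 : P 1 := by
    refine ⟨[x], rfl, ⟨hx ▸ heE, iff_of_true (hx ▸ heA) rfl, trivial⟩, ?_⟩
    simp [tedges]
  have hbound : ∀ n, P n → n ≤ E.card := by
    rintro n ⟨l, hlen, halt, hnd⟩
    have h1 : (tedges v l).toFinset ⊆ E := fun f hf =>
      tedges_subset halt f (List.mem_toFinset.1 hf)
    have h2 := card_le_card h1
    rwa [List.toFinset_card_of_nodup hnd, tedges_length, hlen] at h2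
  have hE1 : 1 ≤ E.card := hbound 1 hP1
  set n₀ := Nat.findGreatest P E.card with hn₀def
  have hPn : P n₀ := Nat.findGreatest_spec hE1 hP1
  have hmax : ¬ P (n₀ + 1) := by
    intro hc
    rcases le_or_gt (n₀ + 1) E.card with hle | hlt
    · exact Nat.findGreatest_is_greatest (Nat.lt_succ_self _) hle hc
    · have := hbound _ hc; omega
  have hn1 : 1 ≤ n₀ := Nat.le_findGreatest hE1 hP1
  obtain ⟨l, hlen, halt, hnd⟩ := hPn
  have hlne : l ≠ [] := by
    intro h; rw [h] at hlen; simp at hlen; omega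
  set z := tlast v l with hzdef
  set c' := cAfter true l with hc'def
  -- maximality: every admissible continuation edge is already on the trail
  have hstuck : ∀ y : V, s(z, y) ∈ E → (s(z, y) ∈ A ↔ c' = true) → s(z, y) ∈ tedges v l := by
    intro y h1 h2
    by_contra h3
    apply hmax
    refine ⟨l ++ [y], by simp [hlen], ?_, ?_⟩
    · rw [alt_append]; exact ⟨halt, h1, h2⟩
    · rw [tedges_append]
      simp [List.nodup_append, hnd, h3]
      intro a ha hae; subst hae; exact h3 ha
  set S := (tedges v l).toFinset with hSdef
  have hSE : S ⊆ E := fun f hf => tedges_subset halt f (List.mem_toFinset.1 hf)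
  -- the signed counting function
  set κ : V → ℤ := fun w => tcnt A w true v l with hκdef
  set ε : ℤ := (-1 : ℤ) ^ (l.length - 1) with hεdef
  have hκ : ∀ w, κ w = (if w = v then 1 else 0) + ε * (if w = z then 1 else 0) := by
    intro w
    have := tcnt_eq hE halt hlne w
    simpa [sgn, hκdef, hεdef, hzdef] using this
  have hκS : ∀ w, ((sdeg (S ∩ A) w : ℤ) - sdeg (S \ A) w) = κ w := fun w =>
    tcnt_eq_sdeg halt hnd w
  -- parity of ε versus the next color c'
  have hnn : 1 ≤ l.length := by rw [hlen]; exact hn1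
  have hc'eq : c' = (if Even l.length then true else false) := by
    rw [hc'def, cAfter_eq]; simp
  have hε : ε = (if c' = true then -1 else 1) := by
    by_cases he : Even l.length
    · have hodd : Odd (l.length - 1) := Nat.Even.sub_odd hnn he odd_one
      rw [hεdef, hodd.neg_one_pow, hc'eq]
      simp [he]
    · have hodd : Odd l.length := Nat.not_even_iff_odd.1 he
      have heven : Even (l.length - 1) := Nat.Odd.sub_odd hodd odd_one
      rw [hεdef, heven.neg_one_pow, hc'eq]
      simp [he]
  -- the flipped set
  set A' := (A \ S) ∪ (S \ A) with hA'def
  have hA'E : A' ⊆ E := by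
    intro f hf
    rcases mem_union.1 hf with h | h
    · exact hA (mem_sdiff.1 h).1
    · exact hSE (mem_sdiff.1 h).1
  have hflip : ∀ w, (sdeg A' w : ℤ) = sdeg A w - κ w := by
    intro w
    rw [hA'def, sdeg_flip, ← hκS w]
    ring
  -- difference of potentials
  set g : V → ℤ := fun w =>
    (2 * ((sdeg A w : ℤ) - κ w) - sdeg E w)^2 - (2 * (sdeg A w : ℤ) - sdeg E w)^2 with hgdef
  have hsum : Phi E A' = Phi E A + ∑ w : V, g w := by
    rw [Phi, Phi, ← Finset.sum_add_distrib]
    refine Finset.sum_congr rfl (fun w _ => ?_)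
    rw [hflip w, hgdef]
    ring
  -- g vanishes away from v and z
  have hg0 : ∀ w, w ≠ v → w ≠ z → g w = 0 := by
    intro w h1 h2
    rw [hgdef]
    simp only [hκ w, if_neg h1, if_neg h2]
    ring
  have hsum2 : ∑ w : V, g w = ∑ w ∈ ({v, z} : Finset V), g w := by
    refine (Finset.sum_subset (Finset.subset_univ _) (fun w _ hw => ?_)).symm
    simp only [mem_insert, mem_singleton] at hw
    push_neg at hw
    exact hg0 w hw.1 hw.2
  -- degree bookkeeping at z
  have hab : (sdeg (E \ A) z : ℤ) + sdeg A z = sdeg E z := by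
    exact_mod_cast congrArg (Nat.cast : ℕ → ℤ) (sdeg_sdiff_add hA z)
  have hsAa : (sdeg (S ∩ A) z : ℤ) ≤ sdeg A z := by
    exact_mod_cast sdeg_mono inter_subset_right z
  have hsBb : (sdeg (S \ A) z : ℤ) ≤ sdeg (E \ A) z := by
    exact_mod_cast sdeg_mono (sdiff_subset_sdiff hSE (le_refl A)) z
  -- stuck inequalities
  have hstuckA : c' = true → (sdeg A z : ℤ) ≤ sdeg (S ∩ A) z := by
    intro hc
    have hsub : A.filter (fun f => z ∈ f) ⊆ (S ∩ A).filter (fun f => z ∈ f) := by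
      intro f hf
      obtain ⟨hfA, hzf⟩ := mem_filter.1 hf
      have hfeq : s(z, Sym2.Mem.other hzf) = f := Sym2.other_spec hzf
      have hfS : f ∈ S := by
        rw [hSdef, List.mem_toFinset, ← hfeq]
        have h1' : s(z, Sym2.Mem.other hzf) ∈ E := by rw [hfeq]; exact hA hfA
        have h2' : s(z, Sym2.Mem.other hzf) ∈ A ↔ c' = true := by
          rw [hfeq]; exact iff_of_true hfA hc
        exact hstuck _ h1' h2' 
      exact mem_filter.2 ⟨mem_inter.2 ⟨hfS, hfA⟩, hzf⟩
    exact_mod_cast card_le_card hsub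
  have hstuckB : c' = false → (sdeg (E \ A) z : ℤ) ≤ sdeg (S \ A) z := by
    intro hc
    have hsub : (E \ A).filter (fun f => z ∈ f) ⊆ (S \ A).filter (fun f => z ∈ f) := by
      intro f hf
      obtain ⟨hfEA, hzf⟩ := mem_filter.1 hf
      obtain ⟨hfE, hfA⟩ := mem_sdiff.1 hfEA
      have hfeq : s(z, Sym2.Mem.other hzf) = f := Sym2.other_spec hzf
      have hfS : f ∈ S := by
        rw [hSdef, List.mem_toFinset, ← hfeq]
        have h1' : s(z, Sym2.Mem.other hzf) ∈ E := by rw [hfeq]; exact hfE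
        have h2' : s(z, Sym2.Mem.other hzf) ∈ A ↔ c' = true := by
          rw [hfeq, hc]; simp [hfA]
        exact hstuck _ h1' h2' 
      exact mem_filter.2 ⟨mem_sdiff.2 ⟨hfS, hfA⟩, hzf⟩
    exact_mod_cast card_le_card hsub
  -- now the case analysis
  refine ⟨A', hA'E, ?_⟩
  rw [hsum, hsum2]
  have hκz := hκS z
  rcases eq_or_ne z v with hzv | hzv
  · -- trail returns to v
    rcases Bool.eq_false_or_eq_true c' with hc | hc
    · -- c' = true and z = v : contradiction with surplus at v
      exfalso
      have h1 := hstuckA hc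
      have hκz0 : κ z = 0 := by
        rw [hκ z, hε, hc]
        simp [hzv]
      rw [hκz0] at hκz
      rw [hzv] at h1 hsAa hsBb hab hκz
      linarith
    · -- c' = false : κ v = 2, big improvement
      have hκv : κ v = 2 := by
        rw [hκ v, hε, hc, hzv]
        simp
      have hgv : g v = -8 * (2 * (sdeg A v : ℤ) - sdeg E v) + 16 := by
        simp only [hgdef, hκv]
        ring
      have hsv : ∑ w ∈ ({v, z} : Finset V), g w = g v := by
        rw [hzv]
        simp
      rw [hsv, hgv]
      linarith
  · -- z ≠ v
    have hκv : κ v = 1 := by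
      rw [hκ v, if_pos rfl, if_neg (fun h : v = z => hzv h.symm)]
      ring
    have hgv : g v = -4 * (2 * (sdeg A v : ℤ) - sdeg E v) + 4 := by
      simp only [hgdef, hκv]
      ring
    have hgv8 : g v ≤ -8 := by rw [hgv]; linarith
    have hgz : g z ≤ 0 := by
      rcases Bool.eq_false_or_eq_true c' with hc | hc
      · -- c' = true : ε = -1, b ≥ a + 1
        have hκzv : κ z = -1 := by
          rw [hκ z, hε, hc, if_neg hzv, if_pos rfl]
          simp
        have h1 := hstuckA hc
        rw [hκzv] at hκz
        have hgz_eq : g z = 4 * (2 * (sdeg A z : ℤ) - sdeg E z) + 4 := by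
          simp only [hgdef, hκzv]
          ring
        rw [hgz_eq]
        linarith
      · -- c' = false : ε = 1, a ≥ b + 1
        have hκzv : κ z = 1 := by
          rw [hκ z, hε, hc, if_neg hzv, if_pos rfl]
          simp
        have h1 := hstuckB hc
        rw [hκzv] at hκz
        have hgz_eq : g z = -4 * (2 * (sdeg A z : ℤ) - sdeg E z) + 4 := by
          simp only [hgdef, hκzv]
          ring
        rw [hgz_eq]
        linarith
    rw [Finset.sum_pair (fun h : v = z => hzv h.symm)]
    linarith

lemma split {E : Finset (Sym2 V)} (hE : ∀ e ∈ E, ¬e.IsDiag) :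
    ∃ A ⊆ E, ∀ v, sdeg A v ≤ sdeg E v / 2 + 1 ∧ sdeg (E \ A) v ≤ sdeg E v / 2 + 1 := by
  classical
  obtain ⟨A, hAp, hmin⟩ := Finset.exists_min_image E.powerset (Phi E) ⟨E, mem_powerset_self E⟩
  have hA : A ⊆ E := mem_powerset.1 hAp
  refine ⟨A, hA, fun v => ?_⟩
  have hab : (sdeg (E \ A) v : ℤ) + sdeg A v = sdeg E v := by
    exact_mod_cast sdeg_sdiff_add hA v
  have hub : 2 * (sdeg A v : ℤ) - sdeg E v ≤ 2 := by
    by_contra hcon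
    push_neg at hcon
    obtain ⟨A', hA'E, hlt⟩ := improve hE hA v (by linarith)
    exact absurd (hmin A' (mem_powerset.2 hA'E)) (not_le.2 hlt)
  have hlb : -(2:ℤ) ≤ 2 * (sdeg A v : ℤ) - sdeg E v := by
    by_contra hcon
    push_neg at hcon
    have hBE : E \ A ⊆ E := sdiff_subset
    have hBv : 3 ≤ 2 * (sdeg (E \ A) v : ℤ) - sdeg E v := by linarith
    obtain ⟨A', hA'E, hlt⟩ := improve hE hBE v hBv
    have hPhiB : Phi E (E \ A) = Phi E A := by
      unfold Phi
      refine Finset.sum_congr rfl (fun w _ => ?_)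
      have h1 : (sdeg (E \ A) w : ℤ) + sdeg A w = sdeg E w := by
        exact_mod_cast sdeg_sdiff_add hA w
      have h2 : 2 * (sdeg (E \ A) w : ℤ) - sdeg E w = -(2 * (sdeg A w : ℤ) - sdeg E w) := by
        linarith
      rw [h2]
      ring
    rw [hPhiB] at hlt
    exact absurd (hmin A' (mem_powerset.2 hA'E)) (not_le.2 hlt)
  have h2 : 2 * sdeg A v ≤ sdeg E v + 2 := by
    exact_mod_cast (by linarith : (2 * sdeg A v : ℤ) ≤ (sdeg E v : ℤ) + 2)
  have h3 : 2 * sdeg (E \ A) v ≤ sdeg E v + 2 := by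
    exact_mod_cast (by linarith : (2 * sdeg (E \ A) v : ℤ) ≤ (sdeg E v : ℤ) + 2)
  omega

def fbound : ℕ → ℕ → ℕ
  | 0, D => D
  | h + 1, D => fbound h D / 2 + 1

lemma fbound_mono (h : ℕ) {D D' : ℕ} (hD : D ≤ D') : fbound h D ≤ fbound h D' := by
  induction h with
  | zero => exact hD
  | succ h ih =>
      show fbound h D / 2 + 1 ≤ fbound h D' / 2 + 1
      exact Nat.add_le_add_right (Nat.div_le_div_right ih) 1

lemma fbound_le (h D : ℕ) : fbound h D ≤ D / 2 ^ h + 2 := by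
  induction h with
  | zero => simp [fbound]
  | succ h ih =>
      show fbound h D / 2 + 1 ≤ D / 2 ^ (h + 1) + 2
      have h1 : fbound h D / 2 ≤ (D / 2 ^ h + 2) / 2 := Nat.div_le_div_right ih
      have h3 : D / 2 ^ h / 2 = D / 2 ^ (h + 1) := by
        rw [Nat.div_div_eq_div_mul, pow_succ]
      omega

lemma fin2cases : ∀ a : Fin 2, a = 0 ∨ a = 1 := by decide

lemma partition {E : Finset (Sym2 V)} (hE : ∀ e ∈ E, ¬e.IsDiag) (h : ℕ) :
    ∃ P : Fin (2 ^ h) → Finset (Sym2 V),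
      (∀ i, P i ⊆ E) ∧
      (∀ i j, i ≠ j → Disjoint (P i) (P j)) ∧
      (Finset.univ.biUnion P = E) ∧
      (∀ i v, sdeg (P i) v ≤ fbound h (sdeg E v)) := by
  classical
  induction h with
  | zero =>
      refine ⟨fun _ => E, fun _ => subset_rfl, ?_, ?_, ?_⟩
      · intro i j hij
        exfalso
        apply hij
        have hi := i.isLt
        have hj := j.isLt
        have h1 : (2:ℕ) ^ 0 = 1 := pow_zero 2
        exact Fin.ext (by omega)
      · apply Finset.ext
        intro x
        simp
      · intro i v
        simp [fbound]
  | succ h ih =>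
      obtain ⟨P, hPE, hPd, hPu, hPb⟩ := ih
      have hsub : ∀ i : Fin (2 ^ h), ∀ e ∈ P i, ¬e.IsDiag := fun i e he => hE e (hPE i he)
      choose A hAsub hAprop using fun i => split (hsub i)
      set em : Fin (2 ^ (h + 1)) ≃ Fin (2 ^ h) × Fin 2 :=
        (finCongr (pow_succ 2 h)).trans finProdFinEquiv.symm with hemdef
      set P' : Fin (2 ^ (h + 1)) → Finset (Sym2 V) :=
        fun j => if (em j).2 = 0 then A (em j).1 else P (em j).1 \ A (em j).1 with hP'def
      have hsubP : ∀ j, P' j ⊆ P (em j).1 := by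
        intro j
        rw [hP'def]
        dsimp only
        split
        · exact hAsub _
        · exact sdiff_subset
      refine ⟨P', ?_, ?_, ?_, ?_⟩
      · intro j
        exact (hsubP j).trans (hPE _)
      · intro i j hij
        have hemij : em i ≠ em j := fun hc => hij (em.injective hc)
        rcases eq_or_ne (em i).1 (em j).1 with h1 | h1
        · have h2 : (em i).2 ≠ (em j).2 := by
            intro hc
            exact hemij (Prod.ext h1 hc)
          have hdisj : Disjoint (A (em i).1) (P (em i).1 \ A (em i).1) :=
            Finset.disjoint_sdiff
          rw [hP'def]
          dsimp only
          rcases fin2cases (em i).2 with hi0 | hi0 <;> rcases fin2cases (em j).2 with hj0 | hj0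
          · exact absurd (hi0.trans hj0.symm) h2
          · rw [if_pos hi0, if_neg (by rw [hj0]; exact one_ne_zero), ← h1]
            exact hdisj
          · rw [if_neg (by rw [hi0]; exact one_ne_zero), if_pos hj0, ← h1]
            exact hdisj.symm
          · exact absurd (hi0.trans hj0.symm) h2
        · exact Finset.disjoint_of_subset_left (hsubP i)
            (Finset.disjoint_of_subset_right (hsubP j) (hPd _ _ h1))
      · apply Finset.ext
        intro x
        simp only [mem_biUnion, mem_univ, true_and]
        constructor
        · rintro ⟨j, hj⟩
          have : x ∈ P (em j).1 := hsubP j hj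
          rw [← hPu]
          exact mem_biUnion.2 ⟨(em j).1, mem_univ _, this⟩
        · intro hx
          rw [← hPu] at hx
          obtain ⟨i, -, hi⟩ := mem_biUnion.1 hx
          by_cases hxa : x ∈ A i
          · refine ⟨em.symm (i, 0), ?_⟩
            rw [hP'def]
            dsimp only
            rw [Equiv.apply_symm_apply]
            simpa using hxa
          · refine ⟨em.symm (i, 1), ?_⟩
            rw [hP'def]
            dsimp only
            rw [Equiv.apply_symm_apply]
            rw [if_neg (by exact one_ne_zero)]
            exact mem_sdiff.2 ⟨hi, hxa⟩
      · intro j v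
        have hfb : sdeg (P (em j).1) v / 2 + 1 ≤ fbound (h + 1) (sdeg E v) := by
          show _ ≤ fbound h (sdeg E v) / 2 + 1
          exact Nat.add_le_add_right (Nat.div_le_div_right (hPb _ v)) 1
        rw [hP'def]
        dsimp only
        split
        · exact le_trans ((hAprop _ v).1) hfb
        · exact le_trans ((hAprop _ v).2) hfb

end Stmt14

/-- For every finite simple graph `G` with maximum degree `Δ` and
every integer `h ≥ 0`, the edge set of `G` can be partitioned into `2^h` sets
`E_1, …, E_{2^h}` such that every subgraph `(V, E_j)` has maximum degree at most
`⌊Δ/2^h⌋ + 2`. -/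
theorem stmt_14 {V : Type*} [Fintype V] [DecidableEq V] (G : SimpleGraph V)
    [DecidableRel G.Adj] (Δ h : ℕ) (hΔ : G.maxDegree = Δ) :
    ∃ E : Fin (2 ^ h) → Finset (Sym2 V),
      (∀ i j, i ≠ j → Disjoint (E i) (E j)) ∧
      (Finset.univ.biUnion E = G.edgeFinset) ∧
      (∀ i, ∀ v : V, ((E i).filter (fun e => v ∈ e)).card ≤ Δ / 2 ^ h + 2) := by
  classical
  have hnd : ∀ e ∈ G.edgeFinset, ¬e.IsDiag := fun e he =>
    SimpleGraph.not_isDiag_of_mem_edgeSet G (SimpleGraph.mem_edgeFinset.1 he)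
  obtain ⟨P, hPE, hPd, hPu, hPb⟩ := Stmt14.partition hnd h
  refine ⟨P, hPd, hPu, fun i v => ?_⟩
  have h2 : Stmt14.sdeg G.edgeFinset v ≤ Δ := by
    have hdeg : Stmt14.sdeg G.edgeFinset v = G.degree v := by
      rw [Stmt14.sdeg, ← SimpleGraph.incidenceFinset_eq_filter,
        SimpleGraph.card_incidenceFinset_eq_degree]
    rw [hdeg, ← hΔ]
    exact G.degree_le_maxDegree v
  calc ((P i).filter (fun e => v ∈ e)).card
      = Stmt14.sdeg (P i) v := rfl
    _ ≤ Stmt14.fbound h (Stmt14.sdeg G.edgeFinset v) := hPb i v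
    _ ≤ Stmt14.fbound h Δ := Stmt14.fbound_mono h h2
    _ ≤ Δ / 2 ^ h + 2 := Stmt14.fbound_le h Δ
end
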